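/- arXiv:2404.11268 — 11 statements merged into one kernel-verified Lean document; each statement's English description precedes it below -/
import Mathlib

section
/- For positive integers n, s, δ, ℓ with n ≥ 2s+1 ≥ 5 and ℓ ≥ 2, the function g_ℓ(n,s,t) = C(2s−t, ℓ) + C(t, ℓ−1)·(n + t − 2s − 1) + C(δ, ℓ−1) is convex as a function of the positive integer t on the range δ ≤ t ≤ s; that is, g_ℓ(n,s,t+1) + g_ℓ(n,s,t−1) ≥ 2·g_ℓ(n,s,t). -/
/-- The number of copies of `K_ℓ` in the extremal graph `G(n,s,t)`:
`g_ℓ(n,s,t) = C(2s−t, ℓ) + C(t, ℓ−1)·(n + t − 2s − 1) + C(δ, ℓ−1)`. -/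
def gcl (n s δ ℓ t : ℕ) : ℕ :=
  Nat.choose (2 * s - t) ℓ + Nat.choose t (ℓ - 1) * (n + t - 2 * s - 1) +
    Nat.choose δ (ℓ - 1)

lemma choose_convex_aux (u k : ℕ) (hu : 1 ≤ u) :
    2 * Nat.choose u k ≤ Nat.choose (u + 1) k + Nat.choose (u - 1) k := by
  obtain ⟨v, rfl⟩ := Nat.exists_eq_add_of_le hu
  cases k with
  | zero => simp
  | succ j =>
    have h1 : Nat.choose (1 + v + 1) (j + 1)
        = Nat.choose (1 + v) j + Nat.choose (1 + v) (j + 1) := Nat.choose_succ_succ _ _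
    have h2 : Nat.choose (v + 1) (j + 1)
        = Nat.choose v j + Nat.choose v (j + 1) := Nat.choose_succ_succ _ _
    have h3 : (1 : ℕ) + v = v + 1 := by omega
    have h4 : Nat.choose v j ≤ Nat.choose (v + 1) j := Nat.choose_le_choose _ (by omega)
    have h5 : 1 + v - 1 = v := by omega
    rw [h3] at h1
    rw [h3, Nat.add_sub_cancel, h1, h2]
    omega

/-- for positive integers `n, s, δ, ℓ` with `n ≥ 2s+1 ≥ 5` and `ℓ ≥ 2`,
the function `t ↦ g_ℓ(n,s,t)` is convex on the range `δ ≤ t ≤ s`. -/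
theorem gcl_convex (n s δ ℓ t : ℕ) (hn : 0 < n) (hs : 0 < s) (hδ : 0 < δ) (hℓ2 : 2 ≤ ℓ)
    (hn2s : 2 * s + 1 ≤ n) (h5 : 5 ≤ 2 * s + 1) (hδt : δ ≤ t) (hts : t ≤ s) :
    2 * gcl n s δ ℓ t ≤ gcl n s δ ℓ (t + 1) + gcl n s δ ℓ (t - 1) := by
  obtain ⟨a, rfl⟩ := Nat.exists_eq_add_of_le hn2s
  obtain ⟨u, rfl⟩ : ∃ u, t = u + 1 := ⟨t - 1, by omega⟩
  unfold gcl
  -- simplify nat subtractions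
  have e1 : 2 * s + 1 + a + (u + 1) - 2 * s - 1 = a + u + 1 := by omega
  have e2 : 2 * s + 1 + a + (u + 1 + 1) - 2 * s - 1 = a + u + 2 := by omega
  have e3 : 2 * s + 1 + a + (u + 1 - 1) - 2 * s - 1 = a + u := by omega
  have e4 : u + 1 - 1 = u := by omega
  rw [e1, e2, e3, e4]
  have hA : 1 ≤ 2 * s - (u + 1) := by omega
  have e5 : 2 * s - (u + 1 + 1) = 2 * s - (u + 1) - 1 := by omega
  have e6 : 2 * s - u = 2 * s - (u + 1) + 1 := by omega
  rw [e5, e6]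
  have hc1 : 2 * Nat.choose (2 * s - (u + 1)) ℓ ≤
      Nat.choose (2 * s - (u + 1) + 1) ℓ + Nat.choose (2 * s - (u + 1) - 1) ℓ :=
    choose_convex_aux _ _ hA
  have hc2 : 2 * Nat.choose (u + 1) (ℓ - 1) ≤
      Nat.choose (u + 1 + 1) (ℓ - 1) + Nat.choose (u + 1 - 1) (ℓ - 1) :=
    choose_convex_aux _ _ (by omega)
  rw [e4] at hc2
  have hm : Nat.choose (u + 1) (ℓ - 1) ≤ Nat.choose (u + 1 + 1) (ℓ - 1) :=
    Nat.choose_le_choose _ (by omega)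
  -- product part : 2 * c * (a+u+1) ≤ cp * (a+u+2) + cm * (a+u)
  have hprod : 2 * (Nat.choose (u + 1) (ℓ - 1) * (a + u + 1)) ≤
      Nat.choose (u + 1 + 1) (ℓ - 1) * (a + u + 2) +
      Nat.choose u (ℓ - 1) * (a + u) := by
    have := Nat.mul_le_mul_right (a + u) hc2
    nlinarith [hm, hc2]
  omega
end

section
/- Let s, t, r, r₁, r₂ be positive integers with r = r₁ + r₂ and t ≤ s − 1 (so 2s − t − 1 ≥ t). Then C(2s−t−1, r−1)·C(r, r₁) ≥ C(t, r₁)·C(2s−t−r₁−1, r−r₁−1) + C(t, r₂)·C(2s−t−r₂−1, r−r₂−1). -/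
/-- Key identity/inequality step: `C(N, j)·C(N−j, k−j) = C(N, k)·C(k, j)` for `j ≤ k`,
including the degenerate case `k > N` where both sides vanish. -/
lemma choose_mul_choose_sub (N k j : ℕ) (hjk : j ≤ k) :
    Nat.choose N j * Nat.choose (N - j) (k - j) = Nat.choose N k * Nat.choose k j := by
  rcases le_or_gt k N with h | h
  · exact (Nat.choose_mul hjk).symm
  · rcases le_or_gt j N with hj | hj
    · have : N - j < k - j := by omega
      rw [Nat.choose_eq_zero_of_lt this, Nat.choose_eq_zero_of_lt h, Nat.mul_zero, Nat.zero_mul]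
    · rw [Nat.choose_eq_zero_of_lt hj, Nat.choose_eq_zero_of_lt h, Nat.zero_mul, Nat.zero_mul]

/-- for positive integers `s, t, r, r₁, r₂` with `r = r₁ + r₂` and
`t ≤ s − 1`, we have
`C(2s−t−1, r−1)·C(r, r₁) ≥ C(t, r₁)·C(2s−t−r₁−1, r−r₁−1) + C(t, r₂)·C(2s−t−r₂−1, r−r₂−1)`. -/
theorem biclique_count_key_ineq (s t r r₁ r₂ : ℕ) (hs : 0 < s) (ht : 0 < t) (hr₁ : 0 < r₁)
    (hr₂ : 0 < r₂) (hr : r = r₁ + r₂) (hts : t ≤ s - 1) :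
    Nat.choose t r₁ * Nat.choose (2 * s - t - r₁ - 1) (r - r₁ - 1) +
        Nat.choose t r₂ * Nat.choose (2 * s - t - r₂ - 1) (r - r₂ - 1) ≤
      Nat.choose (2 * s - t - 1) (r - 1) * Nat.choose r r₁ := by
  set N := 2 * s - t - 1 with hN
  have htN : t ≤ N := by omega
  have e1 : 2 * s - t - r₁ - 1 = N - r₁ := by omega
  have e2 : 2 * s - t - r₂ - 1 = N - r₂ := by omega
  have e3 : r - r₁ - 1 = (r - 1) - r₁ := by omega
  have e4 : r - r₂ - 1 = (r - 1) - r₂ := by omega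
  rw [e1, e2, e3, e4]
  have h1 : Nat.choose t r₁ * Nat.choose (N - r₁) ((r - 1) - r₁) ≤
      Nat.choose N (r - 1) * Nat.choose (r - 1) r₁ := by
    calc Nat.choose t r₁ * Nat.choose (N - r₁) ((r - 1) - r₁)
        ≤ Nat.choose N r₁ * Nat.choose (N - r₁) ((r - 1) - r₁) :=
          Nat.mul_le_mul_right _ (Nat.choose_le_choose _ htN)
      _ = Nat.choose N (r - 1) * Nat.choose (r - 1) r₁ :=
          choose_mul_choose_sub N (r - 1) r₁ (by omega)
  have h2 : Nat.choose t r₂ * Nat.choose (N - r₂) ((r - 1) - r₂) ≤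
      Nat.choose N (r - 1) * Nat.choose (r - 1) r₂ := by
    calc Nat.choose t r₂ * Nat.choose (N - r₂) ((r - 1) - r₂)
        ≤ Nat.choose N r₂ * Nat.choose (N - r₂) ((r - 1) - r₂) :=
          Nat.mul_le_mul_right _ (Nat.choose_le_choose _ htN)
      _ = Nat.choose N (r - 1) * Nat.choose (r - 1) r₂ :=
          choose_mul_choose_sub N (r - 1) r₂ (by omega)
  have hsymm : Nat.choose (r - 1) r₂ = Nat.choose (r - 1) (r₁ - 1) := by
    have : r₁ - 1 = (r - 1) - r₂ := by omega
    rw [this, Nat.choose_symm (by omega)]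
  have hpascal : Nat.choose (r - 1) r₁ + Nat.choose (r - 1) (r₁ - 1) = Nat.choose r r₁ := by
    obtain ⟨a, rfl⟩ : ∃ a, r₁ = a + 1 := ⟨r₁ - 1, by omega⟩
    obtain ⟨b, rfl⟩ : ∃ b, r = b + 1 := ⟨r - 1, by omega⟩
    simp [Nat.choose_succ_succ, Nat.add_comm]
  calc Nat.choose t r₁ * Nat.choose (N - r₁) ((r - 1) - r₁) +
        Nat.choose t r₂ * Nat.choose (N - r₂) ((r - 1) - r₂)
      ≤ Nat.choose N (r - 1) * Nat.choose (r - 1) r₁ +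
        Nat.choose N (r - 1) * Nat.choose (r - 1) r₂ := Nat.add_le_add h1 h2
    _ = Nat.choose N (r - 1) * Nat.choose r r₁ := by
        rw [hsymm, ← Nat.mul_add, hpascal]
end

section
/- Let s, t, r, r₁, r₂ be positive integers with r = r₁ + r₂ and 2s − t ≥ t (i.e., t ≤ s). Then C(2s−t−1, r−2)·C(r, r₁) ≥ C(t−1, r₁)·C(2s−t−r₁−1, r−r₁−2) + C(t−1, r₂)·C(2s−t−r₂−1, r−r₂−2). -/
/-- Binomial coefficient extended to integer arguments: `C(n, k) = 0` when `k < 0`,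
`n < 0` or `k > n`. -/
def zchoose (n k : ℤ) : ℤ :=
  if 0 ≤ k ∧ 0 ≤ n then (Nat.choose n.toNat k.toNat : ℤ) else 0

lemma zchoose_nonneg (n k : ℤ) : 0 ≤ zchoose n k := by
  unfold zchoose; split <;> positivity

lemma zchoose_coe (n k : ℕ) : zchoose n k = (n.choose k : ℤ) := by
  simp [zchoose]

lemma nat_key (A N i J : ℕ) (h : A ≤ N) :
    A.choose i * (N - i).choose J ≤ N.choose (i + J) * (i + J).choose i := by
  by_cases hij : i + J ≤ N
  · rw [Nat.choose_mul (Nat.le_add_right i J), Nat.add_sub_cancel_left]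
    exact Nat.mul_le_mul_right _ (Nat.choose_le_choose i h)
  · push_neg at hij
    rcases le_or_gt i N with hiN | hiN
    · rw [Nat.choose_eq_zero_of_lt (by omega : N - i < J), Nat.mul_zero]
      exact Nat.zero_le _
    · rw [Nat.choose_eq_zero_of_lt (lt_of_le_of_lt h hiN), Nat.zero_mul]
      exact Nat.zero_le _

/-- Key step: `C(a, i) * C(n - i, j) ≤ C(n, i+j) * C(i+j, i)` for `0 ≤ a ≤ n`. -/
lemma zchoose_key (a n : ℤ) (i : ℕ) (j : ℤ) (ha : 0 ≤ a) (han : a ≤ n) :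
    zchoose a i * zchoose (n - i) j ≤ zchoose n (i + j) * zchoose (i + j) i := by
  by_cases h : 0 ≤ j ∧ 0 ≤ n - i
  · obtain ⟨hj, hni⟩ := h
    have h1 : a = ((a.toNat : ℕ) : ℤ) := by omega
    have h2 : n = ((n.toNat : ℕ) : ℤ) := by omega
    have h3 : j = ((j.toNat : ℕ) : ℤ) := by omega
    have h4 : n - (i : ℤ) = ((n.toNat - i : ℕ) : ℤ) := by omega
    have h5 : (i : ℤ) + j = ((i + j.toNat : ℕ) : ℤ) := by omega
    have g1 : zchoose a i = (a.toNat.choose i : ℤ) := by rw [h1, zchoose_coe]; rfl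
    have g2 : zchoose (n - i) j = ((n.toNat - i).choose j.toNat : ℤ) := by
      rw [h4, h3, zchoose_coe]; rfl
    have g3 : zchoose n (i + j) = (n.toNat.choose (i + j.toNat) : ℤ) := by
      rw [h2, h5, zchoose_coe]; rfl
    have g4 : zchoose ((i : ℤ) + j) i = (((i + j.toNat).choose i : ℕ) : ℤ) := by
      rw [h5, zchoose_coe]
    rw [g1, g2, g3, g4]
    exact_mod_cast nat_key a.toNat n.toNat i j.toNat (by omega)
  · have : zchoose (n - i) j = 0 := by
      unfold zchoose
      rw [if_neg]
      tauto
    rw [this, mul_zero]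
    exact mul_nonneg (zchoose_nonneg _ _) (zchoose_nonneg _ _)

lemma nat_final' (k m : ℕ) :
    (k + m).choose (k + 1) + (k + m).choose (m + 1) ≤ (k + m + 2).choose (k + 1) := by
  have h1 : (k + m).choose (k + 1) ≤ (k + m + 1).choose (k + 1) :=
    Nat.choose_le_choose _ (Nat.le_succ _)
  have h2 : (k + m).choose (m + 1) ≤ (k + m + 1).choose (m + 1) :=
    Nat.choose_le_choose _ (Nat.le_succ _)
  have h2' : (k + m + 1).choose (m + 1) = (k + m + 1).choose k := by
    rw [← Nat.choose_symm (show m + 1 ≤ k + m + 1 by omega)]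
    congr 1
    omega
  have h3 : (k + m + 2).choose (k + 1) = (k + m + 1).choose k + (k + m + 1).choose (k + 1) :=
    Nat.choose_succ_succ _ _
  omega

/-- for positive integers `s, t, r, r₁, r₂` with `r = r₁ + r₂` and
`2s − t ≥ t`, we have
`C(2s−t−1, r−2)·C(r, r₁) ≥ C(t−1, r₁)·C(2s−t−r₁−1, r−r₁−2) + C(t−1, r₂)·C(2s−t−r₂−1, r−r₂−2)`. -/
theorem biclique_convexity_key_ineq (s t r r₁ r₂ : ℕ) (hs : 0 < s) (ht : 0 < t)
    (hr₁ : 0 < r₁) (hr₂ : 0 < r₂) (hr : r = r₁ + r₂) (hts : t ≤ s) :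
    zchoose ((t : ℤ) - 1) r₁ * zchoose (2 * (s : ℤ) - t - r₁ - 1) ((r : ℤ) - r₁ - 2) +
        zchoose ((t : ℤ) - 1) r₂ * zchoose (2 * (s : ℤ) - t - r₂ - 1) ((r : ℤ) - r₂ - 2) ≤
      zchoose (2 * (s : ℤ) - t - 1) ((r : ℤ) - 2) * zchoose r r₁ := by
  set a : ℤ := (t : ℤ) - 1 with ha
  set n : ℤ := 2 * (s : ℤ) - t - 1 with hn
  have ha0 : 0 ≤ a := by omega
  have han : a ≤ n := by omega
  have key1 := zchoose_key a n r₁ ((r₂ : ℤ) - 2) ha0 han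
  have key2 := zchoose_key a n r₂ ((r₁ : ℤ) - 2) ha0 han
  have e1 : n - (r₁ : ℤ) = 2 * (s : ℤ) - t - r₁ - 1 := by omega
  have e2 : n - (r₂ : ℤ) = 2 * (s : ℤ) - t - r₂ - 1 := by omega
  have e3 : (r : ℤ) - r₁ - 2 = (r₂ : ℤ) - 2 := by omega
  have e4 : (r : ℤ) - r₂ - 2 = (r₁ : ℤ) - 2 := by omega
  have e5 : (r₁ : ℤ) + ((r₂ : ℤ) - 2) = (r : ℤ) - 2 := by omega
  have e6 : (r₂ : ℤ) + ((r₁ : ℤ) - 2) = (r : ℤ) - 2 := by omega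
  rw [e1, e5] at key1
  rw [e2, e6] at key2
  rw [e3, e4]
  refine le_trans (add_le_add key1 key2) ?_
  rw [← mul_add]
  apply mul_le_mul_of_nonneg_left _ (zchoose_nonneg _ _)
  -- remains: zchoose (r-2) r₁ + zchoose (r-2) r₂ ≤ zchoose r r₁
  have er : (r : ℤ) - 2 = ((r - 2 : ℕ) : ℤ) := by omega
  rw [er, zchoose_coe, zchoose_coe, zchoose_coe]
  obtain ⟨k, rfl⟩ : ∃ k, r₁ = k + 1 := ⟨r₁ - 1, by omega⟩
  obtain ⟨m, rfl⟩ : ∃ m, r₂ = m + 1 := ⟨r₂ - 1, by omega⟩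
  subst hr
  have ee : k + 1 + (m + 1) - 2 = k + m := by omega
  have ee2 : k + 1 + (m + 1) = k + m + 2 := by omega
  rw [ee, ee2]
  exact_mod_cast nat_final' k m
end

section
/- Let n, s, r, r₁, r₂ be positive integers with r = r₁ + r₂ and n ≥ 2s + 1. The function h(t) = C(2s−t, r)·C(r, r₁) + Σ_{j=1,2} C(t, r_j)·(C(n−r_j−1, r−r_j) − C(2s−t−r_j, r−r_j)) is convex as a function of the positive integer t on 1 ≤ t ≤ s; that is, h(t+1) + h(t−1) ≥ 2·h(t) for 1 < t < s. -/
lemma lemB' (x k u : ℕ) : x.choose (k+1) + u * x.choose k ≤ (x+u).choose (k+1) := by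
  induction u with
  | zero => simp
  | succ u ih =>
    have h2 : x.choose k ≤ (x+u).choose k := Nat.choose_le_choose k (by omega)
    have h3 : x + (u+1) = (x+u) + 1 := by omega
    rw [h3, Nat.choose_succ_succ]
    have h4 : x.choose (k+1) + (u+1) * x.choose k
        = (x.choose (k+1) + u * x.choose k) + x.choose k := by ring
    simp only [Nat.succ_eq_add_one]
    omega

lemma lemA' (x k u : ℕ) :
    x.choose (k+2) + u * x.choose (k+1) + u.choose 2 * x.choose k ≤ (x+u).choose (k+2) := by
  induction u with
  | zero => simp
  | succ u ih =>
    have hb := lemB' x k u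
    have h3 : x + (u+1) = (x+u) + 1 := by omega
    rw [h3, show (x+u+1).choose (k+2) = (x+u).choose (k+1) + (x+u).choose (k+2) from
      Nat.choose_succ_succ _ _]
    have hc : (u+1).choose 2 = u.choose 2 + u := by
      rw [Nat.choose_succ_succ]
      simp [Nat.choose_one_right]
      omega
    have e1 : (u+1) * x.choose (k+1) = u * x.choose (k+1) + x.choose (k+1) := by ring
    have e3 : (u+1).choose 2 * x.choose k = u.choose 2 * x.choose k + u * x.choose k := by
      rw [hc]; ring
    omega

lemma aux1' (t m d : ℕ) (ht : t ≤ m + 1) : t * m.choose d ≤ (d+1) * (m+1).choose (d+1) := by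
  have h1 : (m+1) * m.choose d = (m+1).choose (d+1) * (d+1) := Nat.add_one_mul_choose_eq m d
  have h2 : t * m.choose d * (d+1) ≤ ((d+1) * (m+1).choose (d+1)) * (d+1) := by
    calc t * m.choose d * (d+1) ≤ (m+1) * m.choose d * (d+1) :=
          Nat.mul_le_mul_right _ (Nat.mul_le_mul_right _ ht)
      _ = ((d+1) * (m+1).choose (d+1)) * (d+1) := by rw [h1]; ring
  exact Nat.le_of_mul_le_mul_right h2 (by omega)

lemma aux3' (v e : ℕ) : (v+2).choose (e+2) ≤ (v+1).choose e * (v+3).choose 2 := by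
  have h1 : (v+2) * (v+1).choose (e+1) = (v+2).choose (e+2) * (e+2) :=
    Nat.add_one_mul_choose_eq (v+1) (e+1)
  have h2 : (v+1) * v.choose e = (v+1).choose (e+1) * (e+1) := Nat.add_one_mul_choose_eq v e
  have h3 : (v+3).choose 2 * 2 = (v+3) * (v+2) := by
    have := Nat.choose_succ_right_eq (v+3) 1
    simp [Nat.choose_one_right] at this
    omega
  have h5 : v.choose e ≤ (v+1).choose e := Nat.choose_le_choose e (by omega)
  have h60 : 2 ≤ (e+1) * (e+2) := by
    have := Nat.mul_le_mul (show 1 ≤ e+1 by omega) (show 2 ≤ e+2 by omega)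
    simpa using this
  have h6 : 2 * (v+1) ≤ (v+3) * ((e+1) * (e+2)) := by
    calc 2 * (v+1) ≤ 2 * (v+3) := by omega
      _ ≤ ((e+1) * (e+2)) * (v+3) := Nat.mul_le_mul_right _ h60
      _ = (v+3) * ((e+1) * (e+2)) := by ring
  have key : (v+2).choose (e+2) * (2 * (e+1) * (e+2)) ≤
      ((v+1).choose e * (v+3).choose 2) * (2 * (e+1) * (e+2)) := by
    calc (v+2).choose (e+2) * (2 * (e+1) * (e+2))
        = ((v+2).choose (e+2) * (e+2)) * (e+1) * 2 := by ring
      _ = ((v+2) * (v+1).choose (e+1)) * (e+1) * 2 := by rw [h1]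
      _ = ((v+1).choose (e+1) * (e+1)) * (v+2) * 2 := by ring
      _ = ((v+1) * v.choose e) * (v+2) * 2 := by rw [h2]
      _ = (2 * (v+1)) * ((v+2) * v.choose e) := by ring
      _ ≤ ((v+3) * ((e+1) * (e+2))) * ((v+2) * (v+1).choose e) :=
          Nat.mul_le_mul h6 (Nat.mul_le_mul_left _ h5)
      _ = ((v+3) * (v+2)) * (v+1).choose e * ((e+1) * (e+2)) := by ring
      _ = ((v+3).choose 2 * 2) * (v+1).choose e * ((e+1) * (e+2)) := by rw [h3]
      _ = ((v+1).choose e * (v+3).choose 2) * (2 * (e+1) * (e+2)) := by ring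
  exact Nat.le_of_mul_le_mul_right key (by positivity)

lemma keyB (K t m b c Δ : ℕ) (hb : 1 ≤ b) (hc : 1 ≤ c) (ht : 2 ≤ t) (hm : t + 2 ≤ m)
    (hK : (m + t - b).choose c ≤ K)
    (hΔ : b = 1 → 2 ≤ c → (c + 1) * ((m-1).choose (c-1)) ≤ Δ) :
    2 * (t.choose b * (K - ((m - b).choose c))) ≤
      (t+1).choose b * (K - ((m - 1 - b).choose c)) +
      (t-1).choose b * (K - ((m + 1 - b).choose c)) + Δ := by
  rcases lt_or_ge t b with hbt | hbt
  · rw [Nat.choose_eq_zero_of_lt hbt]; simp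
  obtain ⟨u, rfl⟩ : ∃ u, t = u + 2 := ⟨t - 2, by omega⟩
  obtain ⟨e, rfl⟩ : ∃ e, b = e + 1 := ⟨b - 1, by omega⟩
  obtain ⟨d, rfl⟩ : ∃ d, c = d + 1 := ⟨c - 1, by omega⟩
  obtain ⟨x, rfl⟩ : ∃ x, m = x + e + 2 := ⟨m - e - 2, by omega⟩
  have i1 : x + e + 2 - (e+1) = x + 1 := by omega
  have i2 : x + e + 2 - 1 - (e+1) = x := by omega
  have i3 : x + e + 2 + 1 - (e+1) = x + 2 := by omega
  have i4 : x + e + 2 + (u+2) - (e+1) = x + u + 3 := by omega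
  have i5 : u + 2 - 1 = u + 1 := by omega
  have i6 : u + 2 + 1 = u + 3 := by omega
  have i7 : x + e + 2 - 1 = x + e + 1 := by omega
  have i8 : d + 1 - 1 = d := by omega
  rw [i1, i2, i3, i5, i6]
  rw [i4] at hK
  rw [i7, i8] at hΔ
  have hA1 : x.choose (d+1) ≤ K := le_trans (Nat.choose_le_choose _ (by omega)) hK
  have hA2 : (x+1).choose (d+1) ≤ K := le_trans (Nat.choose_le_choose _ (by omega)) hK
  have hA3 : (x+2).choose (d+1) ≤ K := le_trans (Nat.choose_le_choose _ (by omega)) hK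
  zify [hA1, hA2, hA3]
  have eT : (((u+2).choose (e+1) : ℕ) : ℤ) = (u+1).choose e + (u+1).choose (e+1) := by
    exact_mod_cast Nat.choose_succ_succ (u+1) e
  have eTp : (((u+3).choose (e+1) : ℕ) : ℤ) = (u+2).choose e + (u+2).choose (e+1) := by
    exact_mod_cast Nat.choose_succ_succ (u+2) e
  have eA0 : (((x+1).choose (d+1) : ℕ) : ℤ) = x.choose d + x.choose (d+1) := by
    exact_mod_cast Nat.choose_succ_succ x d
  have eAp : (((x+2).choose (d+1) : ℕ) : ℤ) = (x+1).choose d + (x+1).choose (d+1) := by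
    exact_mod_cast Nat.choose_succ_succ (x+1) d
  rw [eTp, eT, eAp, eA0]
  rcases d with _ | d
  · -- c = 1 case
    simp only [Nat.choose_zero_right, Nat.cast_one]
    have mono : (((u+1).choose e : ℕ) : ℤ) ≤ (((u+2).choose e : ℕ) : ℤ) := by
      exact_mod_cast Nat.choose_le_choose e (by omega)
    have hKA : ((x.choose (0+1) : ℕ) : ℤ) ≤ (K : ℤ) := by exact_mod_cast hA1
    have prod := mul_le_mul_of_nonneg_right mono (sub_nonneg.2 hKA)
    have n1 : (0:ℤ) ≤ ((u+1).choose e : ℕ) := Int.natCast_nonneg _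
    have n2 : (0:ℤ) ≤ (Δ : ℕ) := Int.natCast_nonneg _
    linarith
  · have eD : (((x+1).choose (d+1) : ℕ) : ℤ) = x.choose d + x.choose (d+1) := by
      exact_mod_cast Nat.choose_succ_succ x d
    rw [eD]
    rcases e with _ | e
    · -- b = 1 case
      simp only [Nat.zero_add, Nat.choose_zero_right, Nat.choose_one_right, Nat.cast_one]
      have a1 : (u+2) * x.choose d ≤ (d+1) * ((x+1).choose (d+1)) := aux1' (u+2) x d (by omega)
      have a2 : (d+3) * ((x+1).choose (d+1)) ≤ Δ := by
        have := hΔ rfl (by omega)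
        simpa using this
      have hEΔ : (u+2) * x.choose d ≤ Δ :=
        le_trans a1 (le_trans (Nat.mul_le_mul_right _ (by omega)) a2)
      have hEΔ' : ((u:ℤ)+2) * (x.choose d : ℕ) ≤ (Δ : ℕ) := by exact_mod_cast hEΔ
      have n1 : (0:ℤ) ≤ (x.choose d : ℕ) := Int.natCast_nonneg _
      have n2 : (0:ℤ) ≤ (x.choose (d+1) : ℕ) := Int.natCast_nonneg _
      push_cast
      linarith
    · -- b ≥ 2 case
      have f0 := lemA' x d (u+3)
      rw [show x + (u+3) = x + u + 3 from by omega] at f0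
      have s1' : x.choose (d+2) + (u+3).choose 2 * x.choose d ≤ K := by
        have h := le_trans f0 hK
        omega
      have s1 : (u+3).choose 2 * x.choose d ≤ K - x.choose (d+2) :=
        Nat.le_sub_of_add_le (by omega)
      have s2 : (u+2).choose (e+2) ≤ (u+1).choose e * (u+3).choose 2 := aux3' u e
      have hprodN : (u+2).choose (e+2) * x.choose d ≤ (u+1).choose e * (K - x.choose (d+2)) := by
        calc (u+2).choose (e+2) * x.choose d
            ≤ ((u+1).choose e * (u+3).choose 2) * x.choose d := Nat.mul_le_mul_right _ s2
          _ = (u+1).choose e * ((u+3).choose 2 * x.choose d) := by ring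
          _ ≤ (u+1).choose e * (K - x.choose (d+2)) := Nat.mul_le_mul_left _ s1
      have hA1' : x.choose (d+2) ≤ K := hA1
      zify [hA1'] at hprodN
      have eT2 : (((u+2).choose (e+2) : ℕ) : ℤ) = (u+1).choose (e+1) + (u+1).choose (e+2) := by
        exact_mod_cast Nat.choose_succ_succ (u+1) (e+1)
      rw [eT2] at hprodN
      have n1 : (0:ℤ) ≤ ((u+1).choose (e+1) : ℕ) := Int.natCast_nonneg _
      have n2 : (0:ℤ) ≤ (x.choose (d+1) : ℕ) := Int.natCast_nonneg _
      have n3 : (0:ℤ) ≤ (x.choose d : ℕ) := Int.natCast_nonneg _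
      have n4 : (0:ℤ) ≤ (Δ : ℕ) := Int.natCast_nonneg _
      have n5 : (0:ℤ) ≤ (((u+1).choose (e+1) : ℕ) : ℤ) * ((x.choose d : ℕ) : ℤ) :=
        mul_nonneg n1 n3
      have n6 : (0:ℤ) ≤ (((u+1).choose (e+1) : ℕ) : ℤ) * ((x.choose (d+1) : ℕ) : ℤ) :=
        mul_nonneg n1 n2
      have eC : (((u+2).choose (e+1) : ℕ) : ℤ) = (u+1).choose e + (u+1).choose (e+1) := by
        exact_mod_cast Nat.choose_succ_succ (u+1) e
      simp only [show d+1+1 = d+2 from rfl, show e+1+1 = e+2 from rfl]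
      rw [eC]
      linarith

lemma choose_lb' (r r₁ : ℕ) (h1 : 1 ≤ r₁) (h2 : r₁ < r) : r ≤ r.choose r₁ := by
  obtain ⟨q, rfl⟩ : ∃ q, r₁ = q + 1 := ⟨r₁ - 1, by omega⟩
  obtain ⟨p, rfl⟩ : ∃ p, r = p + 1 := ⟨r - 1, by omega⟩
  have h3 : (p+1) * p.choose q = (p+1).choose (q+1) * (q+1) := Nat.add_one_mul_choose_eq p q
  have h4 : q + 1 ≤ p.choose q := by
    calc q + 1 = (q+1).choose q := (Nat.choose_succ_self_right q).symm
      _ ≤ p.choose q := Nat.choose_le_choose q (by omega)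
  have h5 : (p+1) * (q+1) ≤ (p+1).choose (q+1) * (q+1) := by
    calc (p+1) * (q+1) ≤ (p+1) * p.choose q := Nat.mul_le_mul_left _ h4
      _ = (p+1).choose (q+1) * (q+1) := h3
  exact Nat.le_of_mul_le_mul_right h5 (by omega)

lemma Aident (m r : ℕ) (hm : 1 ≤ m) (hr : 2 ≤ r) :
    (m+1).choose r + (m-1).choose r = 2 * m.choose r + (m-1).choose (r-2) := by
  obtain ⟨m', rfl⟩ : ∃ m', m = m' + 1 := ⟨m - 1, by omega⟩
  obtain ⟨r', rfl⟩ : ∃ r', r = r' + 2 := ⟨r - 2, by omega⟩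
  simp only [Nat.add_sub_cancel, show m'+1+1 = m'+2 from rfl, show r'+2-2 = r' from by omega]
  rw [show (m'+2).choose (r'+2) = (m'+1).choose (r'+1) + (m'+1).choose (r'+2) from
        Nat.choose_succ_succ _ _,
      show (m'+1).choose (r'+1) = m'.choose r' + m'.choose (r'+1) from Nat.choose_succ_succ _ _,
      show (m'+1).choose (r'+2) = m'.choose (r'+1) + m'.choose (r'+2) from
        Nat.choose_succ_succ _ _]
  ring


/-- The function `h(t) = C(2s−t, r)·C(r, r₁)
  + Σ_{j=1,2} C(t, r_j)·(C(n−r_j−1, r−r_j) − C(2s−t−r_j, r−r_j))`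
counting (up to the symmetry factor) copies of `K_{r₁,r₂}` in `G(n,s,t)`. -/
def hBip (n s r r₁ r₂ t : ℕ) : ℕ :=
  Nat.choose (2 * s - t) r * Nat.choose r r₁ +
    (Nat.choose t r₁ * (Nat.choose (n - r₁ - 1) (r - r₁) - Nat.choose (2 * s - t - r₁) (r - r₁)) +
      Nat.choose t r₂ * (Nat.choose (n - r₂ - 1) (r - r₂) - Nat.choose (2 * s - t - r₂) (r - r₂)))

/-- for positive integers `n, s, r, r₁, r₂` with `r = r₁ + r₂` and
`n ≥ 2s + 1`, the function `h` is convex on `1 ≤ t ≤ s`. -/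
theorem hBip_convex (n s r r₁ r₂ t : ℕ) (hn : 0 < n) (hs : 0 < s) (hr₁ : 0 < r₁)
    (hr₂ : 0 < r₂) (hr : r = r₁ + r₂) (hn2s : 2 * s + 1 ≤ n) (ht1 : 1 < t) (hts : t < s) :
    2 * hBip n s r r₁ r₂ t ≤ hBip n s r r₁ r₂ (t + 1) + hBip n s r r₁ r₂ (t - 1) := by
  have ht2 : 2 ≤ t := ht1
  simp only [hBip]
  rw [show r - r₁ = r₂ from by omega, show r - r₂ = r₁ from by omega]
  set m := 2 * s - t with hmdef
  rw [show 2*s - (t+1) = m - 1 from by omega, show 2*s - (t-1) = m + 1 from by omega]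
  have hmt : t + 2 ≤ m := by omega
  set K₁ := (n - r₁ - 1).choose r₂ with hK1def
  set K₂ := (n - r₂ - 1).choose r₁ with hK2def
  set Δ₁ := if r₁ = 1 ∧ 2 ≤ r₂ then r * ((m-1).choose (r-2)) else 0 with hD1
  set Δ₂ := if r₂ = 1 ∧ 2 ≤ r₁ then r * ((m-1).choose (r-2)) else 0 with hD2
  have k1 : 2 * (t.choose r₁ * (K₁ - ((m - r₁).choose r₂))) ≤
      (t+1).choose r₁ * (K₁ - ((m - 1 - r₁).choose r₂)) +
      (t-1).choose r₁ * (K₁ - ((m + 1 - r₁).choose r₂)) + Δ₁ := by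
    apply keyB K₁ t m r₁ r₂ Δ₁ hr₁ hr₂ ht2 hmt
    · exact Nat.choose_le_choose _ (by omega)
    · intro h1 h2
      rw [hD1, if_pos ⟨h1, h2⟩, show r₂ + 1 = r from by omega, show r₂ - 1 = r - 2 from by omega]
  have k2 : 2 * (t.choose r₂ * (K₂ - ((m - r₂).choose r₁))) ≤
      (t+1).choose r₂ * (K₂ - ((m - 1 - r₂).choose r₁)) +
      (t-1).choose r₂ * (K₂ - ((m + 1 - r₂).choose r₁)) + Δ₂ := by
    apply keyB K₂ t m r₂ r₁ Δ₂ hr₂ hr₁ ht2 hmt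
    · exact Nat.choose_le_choose _ (by omega)
    · intro h1 h2
      rw [hD2, if_pos ⟨h1, h2⟩, show r₁ + 1 = r from by omega, show r₁ - 1 = r - 2 from by omega]
  have hA : (m+1).choose r + (m-1).choose r = 2 * m.choose r + (m-1).choose (r-2) :=
    Aident m r (by omega) (by omega)
  have hAX : ((m+1).choose r + (m-1).choose r) * r.choose r₁
      = (2 * m.choose r + (m-1).choose (r-2)) * r.choose r₁ := by rw [hA]
  have hrle : r ≤ r.choose r₁ := choose_lb' r r₁ hr₁ (by omega)
  have hsum : Δ₁ + Δ₂ ≤ (m-1).choose (r-2) * r.choose r₁ := by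
    by_cases hc1 : r₁ = 1 ∧ 2 ≤ r₂
    · have hc2 : ¬(r₂ = 1 ∧ 2 ≤ r₁) := by omega
      rw [hD1, hD2, if_pos hc1, if_neg hc2]
      calc r * ((m-1).choose (r-2)) + 0 = (m-1).choose (r-2) * r := by ring
        _ ≤ (m-1).choose (r-2) * r.choose r₁ := Nat.mul_le_mul_left _ hrle
    · by_cases hc2 : r₂ = 1 ∧ 2 ≤ r₁
      · rw [hD1, hD2, if_neg hc1, if_pos hc2]
        calc 0 + r * ((m-1).choose (r-2)) = (m-1).choose (r-2) * r := by ring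
          _ ≤ (m-1).choose (r-2) * r.choose r₁ := Nat.mul_le_mul_left _ hrle
      · rw [hD1, hD2, if_neg hc1, if_neg hc2]
        simp
  linarith [k1, k2, hAX, hsum]
end

section
/- The fractional matching number of any graph G satisfies 2·ν*(G) is an integer, where ν*(G) is the maximum over all fractional matchings f of Σ_{e ∈ E(G)} f(e). -/
open Finset

/-- `f` is a fractional matching of `G`: edge weights in `[0,1]`, supported on the
edges of `G`, with total weight at most `1` at every vertex. -/
def IsFracMatching {V : Type*} [Fintype V] [DecidableEq V] (G : SimpleGraph V)
    [DecidableRel G.Adj] (f : Sym2 V → ℝ) : Prop :=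
  (∀ e, 0 ≤ f e ∧ f e ≤ 1) ∧ (∀ e, e ∉ G.edgeSet → f e = 0) ∧
    ∀ v : V, ∑ e ∈ G.incidenceFinset v, f e ≤ 1

/-- `s` is the fractional matching number of `G`: it is attained by some fractional
matching, and no fractional matching has larger total weight. -/
def IsFracMatchingNumber {V : Type*} [Fintype V] [DecidableEq V] (G : SimpleGraph V)
    [DecidableRel G.Adj] (s : ℝ) : Prop :=
  (∃ f, IsFracMatching G f ∧ ∑ e ∈ G.edgeFinset, f e = s) ∧
    ∀ f, IsFracMatching G f → ∑ e ∈ G.edgeFinset, f e ≤ s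

namespace FracMatchAux

variable {V : Type*} [Fintype V] [DecidableEq V] (G : SimpleGraph V) [DecidableRel G.Adj]

lemma sum_incidence_sum (f : Sym2 V → ℝ) (S : Finset V) :
    ∑ v ∈ S, ∑ e ∈ G.incidenceFinset v, f e
      = ∑ e ∈ G.edgeFinset, f e * ((S.filter (· ∈ e)).card : ℝ) := by
  have h1 : ∀ v : V, ∑ e ∈ G.incidenceFinset v, f e
      = ∑ e ∈ G.edgeFinset, if v ∈ e then f e else 0 := by
    intro v
    rw [G.incidenceFinset_eq_filter, sum_filter]
  simp_rw [h1]
  rw [Finset.sum_comm]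
  refine Finset.sum_congr rfl fun e _ => ?_
  rw [← Finset.sum_filter, Finset.sum_const, nsmul_eq_mul, mul_comm]

lemma card_filter_pair (a b : V) (hab : a ≠ b) (S : Finset V) :
    (S.filter (· ∈ s(a, b))).card
      = (if a ∈ S then 1 else 0) + (if b ∈ S then 1 else 0) := by
  have h : S.filter (· ∈ s(a, b)) = ({a, b} : Finset V).filter (· ∈ S) := by
    ext x
    simp only [mem_filter, Sym2.mem_iff, mem_insert, mem_singleton]
    tauto
  rw [h, Finset.card_filter, Finset.sum_insert (by simpa using hab), Finset.sum_singleton]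

lemma card_filter_mem_le_two (e : Sym2 V) :
    ((univ : Finset V).filter (· ∈ e)).card ≤ 2 := by
  induction e using Sym2.ind with
  | _ a b =>
    have h : (univ : Finset V).filter (· ∈ s(a, b)) ⊆ {a, b} := by
      intro x hx
      simp only [mem_filter, Sym2.mem_iff] at hx
      simp [hx.2]
    calc ((univ : Finset V).filter (· ∈ s(a, b))).card ≤ ({a, b} : Finset V).card :=
          Finset.card_le_card h
      _ ≤ 2 := (Finset.card_insert_le _ _).trans (by simp)

/-- Upper bound: for any fractional matching and any vertex set `W`,
`2 Σ f ≤ n - |W| + |N(W)|`. -/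
lemma upper (f : Sym2 V → ℝ) (hf : IsFracMatching G f) (W : Finset V) :
    2 * ∑ e ∈ G.edgeFinset, f e
      ≤ (Fintype.card V : ℝ) - (W.card : ℝ)
          + ((W.biUnion (fun v => G.neighborFinset v)).card : ℝ) := by
  obtain ⟨hf01, hf0, hfv⟩ := hf
  set NW := W.biUnion (fun v => G.neighborFinset v) with hNW
  have key : ∑ v ∈ W, ∑ e ∈ G.incidenceFinset v, f e
      ≤ ∑ v ∈ NW, ∑ e ∈ G.incidenceFinset v, f e := by
    rw [sum_incidence_sum, sum_incidence_sum]
    refine Finset.sum_le_sum fun e he => ?_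
    induction e using Sym2.ind with
    | _ a b =>
      have hadj : G.Adj a b := by
        rw [SimpleGraph.mem_edgeFinset] at he
        exact he
      have hab : a ≠ b := hadj.ne
      have haw : a ∈ W → b ∈ NW := fun h => by
        rw [hNW]; exact mem_biUnion.mpr ⟨a, h, (SimpleGraph.mem_neighborFinset _ _ _).mpr hadj⟩
      have hbw : b ∈ W → a ∈ NW := fun h => by
        rw [hNW]
        exact mem_biUnion.mpr ⟨b, h, (SimpleGraph.mem_neighborFinset _ _ _).mpr hadj.symm⟩
      refine mul_le_mul_of_nonneg_left ?_ (hf01 _).1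
      rw [card_filter_pair a b hab, card_filter_pair a b hab]
      have h : ((if a ∈ W then 1 else 0) + (if b ∈ W then 1 else 0) : ℕ)
          ≤ (if a ∈ NW then 1 else 0) + (if b ∈ NW then 1 else 0) := by
        by_cases h1 : a ∈ W <;> by_cases h2 : b ∈ W <;> simp_all
      exact_mod_cast h
  have hW : ∀ S : Finset V, ∑ v ∈ S, ∑ e ∈ G.incidenceFinset v, f e ≤ (S.card : ℝ) := by
    intro S
    calc ∑ v ∈ S, ∑ e ∈ G.incidenceFinset v, f e ≤ ∑ _v ∈ S, (1 : ℝ) :=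
        Finset.sum_le_sum fun v _ => hfv v
      _ = S.card := by simp
  have htwo : 2 * ∑ e ∈ G.edgeFinset, f e
      = ∑ v ∈ (univ : Finset V), ∑ e ∈ G.incidenceFinset v, f e := by
    rw [sum_incidence_sum, Finset.mul_sum]
    refine Finset.sum_congr rfl fun e he => ?_
    have h2 : ((univ : Finset V).filter (· ∈ e)).card = 2 := by
      induction e using Sym2.ind with
      | _ a b =>
        have hadj : G.Adj a b := by rw [SimpleGraph.mem_edgeFinset] at he; exact he
        rw [card_filter_pair a b hadj.ne]
        simp
    rw [h2]
    push_cast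
    ring
  have hsplit : ∑ v ∈ (univ : Finset V), ∑ e ∈ G.incidenceFinset v, f e
      = ∑ v ∈ W, ∑ e ∈ G.incidenceFinset v, f e
        + ∑ v ∈ Wᶜ, ∑ e ∈ G.incidenceFinset v, f e :=
    (Finset.sum_add_sum_compl W _).symm
  have hcompl : ((Wᶜ : Finset V).card : ℝ) = (Fintype.card V : ℝ) - W.card := by
    rw [Finset.card_compl, Nat.cast_sub (Finset.card_le_univ W)]
  have h1 := key.trans (hW NW)
  have h2 := hW Wᶜ
  rw [hcompl] at h2
  rw [htwo, hsplit]
  linarith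

/-- Lower bound construction via Hall's theorem with `D` dummy vertices. -/
lemma lower (D : ℕ)
    (hall : ∀ W : Finset V, W.card ≤ (W.biUnion (fun v => G.neighborFinset v)).card + D) :
    ∃ f, IsFracMatching G f ∧
      (Fintype.card V : ℝ) - (D : ℝ) ≤ 2 * ∑ e ∈ G.edgeFinset, f e := by
  classical
  set t : V → Finset (V ⊕ Fin D) := fun a => (G.neighborFinset a).disjSum Finset.univ with ht
  have hhall : ∀ s : Finset V, s.card ≤ (s.biUnion t).card := by
    intro s
    rcases s.eq_empty_or_nonempty with rfl | hne
    · simp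
    · have heq : s.biUnion t = (s.biUnion (fun v => G.neighborFinset v)).disjSum Finset.univ := by
        ext x
        cases x with
        | inl v => simp [ht, mem_biUnion]
        | inr j =>
          simp only [mem_biUnion, ht, Finset.inr_mem_disjSum, Finset.mem_univ, iff_true]
          exact ⟨hne.choose, hne.choose_spec, trivial⟩
      rw [heq, Finset.card_disjSum, Finset.card_univ, Fintype.card_fin]
      exact hall s
  obtain ⟨m, minj, hm⟩ := (Finset.all_card_le_biUnion_card_iff_exists_injective t).mp hhall
  have hnbr : ∀ a v, m a = Sum.inl v → G.Adj a v := by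
    intro a v h
    have h2 := hm a
    rw [h, ht] at h2
    simpa [Finset.inl_mem_disjSum] using h2
  set pred : V → Sym2 V → Prop := fun a e => ∃ v, m a = Sum.inl v ∧ e = s(a, v) with hpred
  refine ⟨fun e => (1 / 2) * (((univ : Finset V).filter (fun a => pred a e)).card : ℝ),
    ⟨?_, ?_, ?_⟩, ?_⟩
  · -- values in [0,1]
    intro e
    have hc : (((univ : Finset V).filter (fun a => pred a e)).card : ℝ) ≤ 2 := by
      have h := le_trans (Finset.card_le_card (show
          (univ : Finset V).filter (fun a => pred a e) ⊆ (univ : Finset V).filter (· ∈ e) by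
        intro a ha
        simp only [mem_filter, mem_univ, true_and] at ha ⊢
        obtain ⟨v, _, rfl⟩ := ha
        simp)) (card_filter_mem_le_two e)
      exact_mod_cast h
    constructor
    · positivity
    · linarith
  · -- supported on edges
    intro e he
    have h : (univ : Finset V).filter (fun a => pred a e) = ∅ := by
      rw [Finset.filter_eq_empty_iff]
      rintro a - ⟨v, hv, rfl⟩
      exact he (hnbr a v hv)
    simp [h]
  · -- vertex constraint
    intro x
    rw [← Finset.mul_sum]
    have hswap : ∑ e ∈ G.incidenceFinset x,
        (((univ : Finset V).filter (fun a => pred a e)).card : ℝ)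
        = ∑ a : V, (((G.incidenceFinset x).filter (fun e => pred a e)).card : ℝ) := by
      push_cast [Finset.card_filter]
      rw [Finset.sum_comm]
    rw [hswap]
    have hbound : ∀ a : V, (((G.incidenceFinset x).filter (fun e => pred a e)).card : ℝ)
        ≤ (if a = x then 1 else 0) + (if m a = Sum.inl x then 1 else 0) := by
      intro a
      have hle1 : ((G.incidenceFinset x).filter (fun e => pred a e)).card ≤ 1 := by
        rw [Finset.card_le_one]
        rintro e he e' he'
        obtain ⟨v, hv, rfl⟩ := (Finset.mem_filter.mp he).2
        obtain ⟨v', hv', rfl⟩ := (Finset.mem_filter.mp he').2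
        rw [hv] at hv'
        cases hv'
        rfl
      rcases Finset.eq_empty_or_nonempty
          ((G.incidenceFinset x).filter (fun e => pred a e)) with hemp | hne
      · rw [hemp]
        simp only [Finset.card_empty, Nat.cast_zero]
        positivity
      · obtain ⟨e, he⟩ := hne
        rw [Finset.mem_filter] at he
        obtain ⟨hei, v, hv, rfl⟩ := he
        rw [SimpleGraph.mem_incidenceFinset, SimpleGraph.mk'_mem_incidenceSet_iff] at hei
        have hax : a = x ∨ m a = Sum.inl x := by
          rcases hei.2 with h | h
          · exact Or.inl h.symm
          · exact Or.inr (h ▸ hv)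
        have hle1' : (((G.incidenceFinset x).filter (fun e => pred a e)).card : ℝ) ≤ 1 := by
          exact_mod_cast hle1
        rcases hax with h | h
        · rw [if_pos h]
          have : (0:ℝ) ≤ (if m a = Sum.inl x then 1 else 0) := by positivity
          linarith
        · rw [if_pos h]
          have : (0:ℝ) ≤ (if a = x then 1 else 0) := by positivity
          linarith
    have hsum2 : ∑ a : V, ((if a = x then (1:ℝ) else 0) + (if m a = Sum.inl x then 1 else 0))
        ≤ 2 := by
      rw [Finset.sum_add_distrib]
      have e1 : ∑ a : V, (if a = x then (1:ℝ) else 0) = 1 := by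
        rw [Finset.sum_ite_eq' univ x (fun _ => (1:ℝ))]
        simp
      have e2 : ∑ a : V, (if m a = Sum.inl x then (1:ℝ) else 0) ≤ 1 := by
        rw [← Finset.sum_filter]
        rw [Finset.sum_const]
        have hc1 : ((univ : Finset V).filter (fun a => m a = Sum.inl x)).card ≤ 1 := by
          rw [Finset.card_le_one]
          intro a ha b hb
          rw [Finset.mem_filter] at ha hb
          exact minj (ha.2.trans hb.2.symm)
        have : (((univ : Finset V).filter (fun a => m a = Sum.inl x)).card : ℝ) ≤ 1 := by
          exact_mod_cast hc1
        rw [nsmul_eq_mul]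
        linarith
      linarith
    have := (Finset.sum_le_sum fun a (_ : a ∈ (univ : Finset V)) => hbound a).trans hsum2
    linarith
  · -- total weight
    rw [← Finset.mul_sum]
    have hswap : ∑ e ∈ G.edgeFinset,
        (((univ : Finset V).filter (fun a => pred a e)).card : ℝ)
        = ∑ a : V, ((G.edgeFinset.filter (fun e => pred a e)).card : ℝ) := by
      push_cast [Finset.card_filter]
      rw [Finset.sum_comm]
    rw [hswap]
    set A : Finset V := (univ : Finset V).filter (fun a => (m a).isLeft) with hA
    have hper : ∀ a : V, ((G.edgeFinset.filter (fun e => pred a e)).card : ℝ)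
        = if (m a).isLeft then 1 else 0 := by
      intro a
      by_cases hL : (m a).isLeft
      · obtain ⟨v, hma⟩ := Sum.isLeft_iff.mp hL
        have hfil : G.edgeFinset.filter (fun e => pred a e) = {s(a, v)} := by
          ext e
          simp only [Finset.mem_filter, Finset.mem_singleton]
          constructor
          · rintro ⟨-, v', hv', rfl⟩
            rw [hma] at hv'
            cases hv'
            rfl
          · rintro rfl
            exact ⟨SimpleGraph.mem_edgeFinset.mpr (hnbr a v hma), v, hma, rfl⟩
        rw [hfil, if_pos hL]
        simp
      · have hfil : G.edgeFinset.filter (fun e => pred a e) = ∅ := by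
          rw [Finset.filter_eq_empty_iff]
          rintro e - ⟨v, hv, rfl⟩
          exact hL (by rw [hv]; rfl)
        rw [hfil, if_neg hL]
        simp
    simp_rw [hper]
    rw [← Finset.sum_filter, Finset.sum_const, nsmul_eq_mul, mul_one]
    have hcompl : (Aᶜ).card ≤ D := by
      have hmap : ∀ a ∈ Aᶜ, m a ∈ (univ : Finset (Fin D)).map ⟨Sum.inr, Sum.inr_injective⟩ := by
        intro a ha
        rw [Finset.mem_compl, hA, Finset.mem_filter] at ha
        rcases hma : m a with v | j
        · exact absurd ⟨Finset.mem_univ a, by rw [hma]; rfl⟩ ha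
        · exact Finset.mem_map.mpr ⟨j, Finset.mem_univ j, rfl⟩
      have := Finset.card_le_card_of_injOn m hmap (minj.injOn)
      simpa using this
    have hAcard : (A.card : ℝ) ≥ (Fintype.card V : ℝ) - D := by
      have hsum := Finset.card_add_card_compl A
      have h1 : (A.card : ℝ) + (Aᶜ.card : ℝ) = Fintype.card V := by exact_mod_cast hsum
      have h2 : ((Aᶜ.card : ℝ)) ≤ D := by exact_mod_cast hcompl
      linarith
    calc (Fintype.card V : ℝ) - D ≤ (A.card : ℝ) := hAcard
      _ = 2 * (1 / 2 * (A.card : ℝ)) := by ring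
      _ = _ := by rw [hA]

end FracMatchAux

/-- twice the fractional matching number of any graph is an integer. -/
theorem two_mul_fracMatchingNumber_int {V : Type*} [Fintype V] [DecidableEq V]
    (G : SimpleGraph V) [DecidableRel G.Adj] (s : ℝ) (hs : IsFracMatchingNumber G s) :
    ∃ k : ℤ, 2 * s = k := by
  classical
  have hpne : ((univ : Finset V).powerset).Nonempty := ⟨∅, by simp⟩
  set d : ℤ := ((univ : Finset V).powerset).sup' hpne
    (fun W => (W.card : ℤ) - ((W.biUnion (fun v => G.neighborFinset v)).card : ℤ)) with hd
  have hd0 : 0 ≤ d := by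
    have := Finset.le_sup' (f := fun W : Finset V =>
      (W.card : ℤ) - ((W.biUnion (fun v => G.neighborFinset v)).card : ℤ)) (b := (∅ : Finset V)) (Finset.empty_mem_powerset (univ : Finset V))
    rw [hd]
    exact le_trans (by norm_num) this
  set D : ℕ := d.toNat with hD
  have hDd : (D : ℤ) = d := Int.toNat_of_nonneg hd0
  -- Hall condition with D dummies
  have hall : ∀ W : Finset V, W.card ≤ (W.biUnion (fun v => G.neighborFinset v)).card + D := by
    intro W
    have h1 : (W.card : ℤ) - ((W.biUnion (fun v => G.neighborFinset v)).card : ℤ) ≤ d := by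
      rw [hd]
      exact Finset.le_sup' (fun W : Finset V =>
        (W.card : ℤ) - ((W.biUnion (fun v => G.neighborFinset v)).card : ℤ))
        (Finset.mem_powerset.mpr (Finset.subset_univ W))
    have : (W.card : ℤ) ≤ ((W.biUnion (fun v => G.neighborFinset v)).card : ℤ) + D := by
      rw [hDd]; omega
    exact_mod_cast this
  obtain ⟨f₁, hf₁, hge⟩ := FracMatchAux.lower G D hall
  obtain ⟨W₀, hW₀mem, hW₀⟩ := Finset.exists_mem_eq_sup' hpne
    (fun W : Finset V => (W.card : ℤ) - ((W.biUnion (fun v => G.neighborFinset v)).card : ℤ))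
  obtain ⟨⟨f₀, hf₀, hsum⟩, hmax⟩ := hs
  refine ⟨(Fintype.card V : ℤ) - d, ?_⟩
  have hub : 2 * s ≤ (Fintype.card V : ℝ) - (d : ℝ) := by
    have h := FracMatchAux.upper G f₀ hf₀ W₀
    rw [hsum] at h
    have hdint : d = (W₀.card : ℤ) - ((W₀.biUnion (fun v => G.neighborFinset v)).card : ℤ) :=
      hd.trans hW₀
    have hcast : (d : ℝ)
        = (W₀.card : ℝ) - ((W₀.biUnion (fun v => G.neighborFinset v)).card : ℝ) := by
      rw [hdint]
      push_cast
      ring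
    linarith
  have hlb : (Fintype.card V : ℝ) - (d : ℝ) ≤ 2 * s := by
    have h := hmax f₁ hf₁
    have hDr : (D : ℝ) = (d : ℝ) := by exact_mod_cast hDd
    rw [hDr] at hge
    linarith
  push_cast
  linarith
end

section
/- Fractional Tutte–Berge formula: for any graph G of order n, ν*(G) = (1/2)·(n − max_{T ⊆ V(G)} (i(G−T) − |T|)), where i(G−T) denotes the number of isolated vertices of G − T. -/
/-- `i(G − T)`: the number of vertices outside `T` having no neighbor outside `T`,
i.e. the number of isolated vertices of `G − T`. -/
def isoCount {V : Type*} [Fintype V] [DecidableEq V] (G : SimpleGraph V)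
    [DecidableRel G.Adj] (T : Finset V) : ℕ :=
  (Finset.univ.filter (fun v => v ∉ T ∧ ∀ w, G.Adj v w → w ∈ T)).card

section Aux

variable {V : Type*} [Fintype V] [DecidableEq V] (G : SimpleGraph V) [DecidableRel G.Adj]

/-- Upper bound: every fractional matching has total weight at most
`(n + |T| - i(G-T))/2`, for every `T`. -/
lemma FracTB.upper_bound (f : Sym2 V → ℝ) (hf : IsFracMatching G f) (T : Finset V) :
    ∑ e ∈ G.edgeFinset, f e ≤
      ((Fintype.card V : ℝ) + T.card - isoCount G T) / 2 := by
  obtain ⟨hf01, hf0, hload⟩ := hf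
  set I : Finset V := Finset.univ.filter (fun v => v ∉ T ∧ ∀ w, G.Adj v w → w ∈ T) with hI
  set y : V → ℝ := fun v => if v ∈ T then 1 else if v ∈ I then 0 else 1/2 with hy
  have hy0 : ∀ v, 0 ≤ y v := by
    intro v; simp only [hy]; split_ifs <;> norm_num
  have hy1 : ∀ v, y v ≤ 1 := by
    intro v; simp only [hy]; split_ifs <;> norm_num
  -- each edge: sum of y over endpoints ≥ 1
  have hedge : ∀ e ∈ G.edgeFinset, f e ≤ ∑ v, (if v ∈ e then f e * y v else 0) := by
    intro e he
    rw [SimpleGraph.mem_edgeFinset] at he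
    induction e with
    | _ a b =>
      have hab : G.Adj a b := he
      have hne : a ≠ b := hab.ne
      have : ∑ v, (if v ∈ s(a,b) then f s(a,b) * y v else 0)
          = ∑ v ∈ ({a, b} : Finset V), f s(a,b) * y v := by
        rw [← Finset.sum_filter]
        congr 1
        ext v
        simp [Sym2.mem_iff]
      rw [this, Finset.sum_pair hne]
      have hy_ab : 1 ≤ y a + y b := by
        by_cases haT : a ∈ T
        · have h1 : y a = 1 := by simp [hy, haT]
          linarith [hy0 b]
        · by_cases hbT : b ∈ T
          · have h1 : y b = 1 := by simp [hy, hbT]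
            linarith [hy0 a]
          · have haI : a ∉ I := fun h => by
              rw [hI, Finset.mem_filter] at h
              exact hbT (h.2.2 b hab)
            have hbI : b ∉ I := fun h => by
              rw [hI, Finset.mem_filter] at h
              exact haT (h.2.2 a hab.symm)
            have h1 : y a = 1/2 := by simp [hy, haT, haI]
            have h2 : y b = 1/2 := by simp [hy, hbT, hbI]
            rw [h1, h2]; norm_num
      have hfe := (hf01 s(a,b)).1
      nlinarith
  calc ∑ e ∈ G.edgeFinset, f e
      ≤ ∑ e ∈ G.edgeFinset, ∑ v, (if v ∈ e then f e * y v else 0) :=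
        Finset.sum_le_sum hedge
    _ = ∑ v, ∑ e ∈ G.edgeFinset, (if v ∈ e then f e * y v else 0) := Finset.sum_comm
    _ = ∑ v, y v * ∑ e ∈ G.incidenceFinset v, f e := by
        refine Finset.sum_congr rfl fun v _ => ?_
        rw [Finset.mul_sum]
        rw [← Finset.sum_filter]
        have : G.incidenceFinset v = G.edgeFinset.filter (fun e => v ∈ e) := by
          ext e
          simp [SimpleGraph.mem_incidenceFinset, SimpleGraph.incidenceSet,
            SimpleGraph.mem_edgeFinset, and_comm]
        rw [this]
        exact Finset.sum_congr rfl fun e _ => mul_comm _ _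
    _ ≤ ∑ v, y v := by
        refine Finset.sum_le_sum fun v _ => ?_
        calc y v * ∑ e ∈ G.incidenceFinset v, f e ≤ y v * 1 :=
              mul_le_mul_of_nonneg_left (hload v) (hy0 v)
          _ = y v := mul_one _
    _ ≤ ((Fintype.card V : ℝ) + T.card - isoCount G T) / 2 := by
        have hIT : Disjoint I T := by
          rw [Finset.disjoint_left]; intro v hv; simp [hI] at hv; exact fun h => absurd h hv.1
        have hcard : I.card + T.card ≤ Fintype.card V := by
          rw [← Finset.card_union_of_disjoint hIT]
          exact Finset.card_le_univ _
        have e1 : Finset.univ.filter (· ∈ T) = T := by ext v; simp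
        have e2 : (Finset.univ.filter (· ∉ T)).filter (· ∈ I) = I := by
          ext v
          simp only [Finset.mem_filter, Finset.mem_univ, true_and]
          constructor
          · exact fun h => h.2
          · intro h
            rw [hI, Finset.mem_filter] at h
            exact ⟨h.2.1, by rw [hI, Finset.mem_filter]; exact h⟩
        have e3 : (Finset.univ.filter (· ∉ T)).filter (· ∉ I) = Finset.univ \ (I ∪ T) := by
          ext v
          simp only [Finset.mem_filter, Finset.mem_univ, true_and, Finset.mem_sdiff,
            Finset.mem_union]
          tauto
        have hsum : ∑ v, y v = (T.card : ℝ) * 1 + (I.card : ℝ) * 0 +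
            ((Fintype.card V : ℝ) - T.card - I.card) * (1/2) := by
          rw [← Finset.sum_filter_add_sum_filter_not Finset.univ (· ∈ T),
            ← Finset.sum_filter_add_sum_filter_not (Finset.univ.filter (· ∉ T)) (· ∈ I)]
          have h1 : ∑ v ∈ Finset.univ.filter (· ∈ T), y v = (T.card : ℝ) * 1 := by
            rw [e1, Finset.sum_congr rfl (g := fun _ => (1:ℝ))
              (fun v hv => by simp [hy, hv]), Finset.sum_const, nsmul_eq_mul]
          have h2 : ∑ v ∈ (Finset.univ.filter (· ∉ T)).filter (· ∈ I), y v
              = (I.card : ℝ) * 0 := by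
            rw [e2, Finset.sum_congr rfl (g := fun _ => (0:ℝ)) (fun v hv => by
              rw [hI, Finset.mem_filter] at hv
              simp [hy, hv.2.1, (by rw [hI, Finset.mem_filter]; exact hv : v ∈ I)]),
              Finset.sum_const, nsmul_eq_mul]
          have h3 : ∑ v ∈ (Finset.univ.filter (· ∉ T)).filter (· ∉ I), y v
              = ((Fintype.card V : ℝ) - T.card - I.card) * (1/2) := by
            rw [Finset.sum_congr rfl (g := fun _ => (1/2:ℝ)) (fun v hv => by
              rw [Finset.mem_filter, Finset.mem_filter] at hv
              simp [hy, hv.1.2, hv.2]), Finset.sum_const, nsmul_eq_mul, e3,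
              Finset.card_sdiff_of_subset (Finset.subset_univ _),
              Finset.card_union_of_disjoint hIT, Finset.card_univ]
            push_cast [Nat.cast_sub hcard]
            ring
          rw [h1, h2, h3]
          ring
        rw [hsum]
        have hIcard : (isoCount G T : ℝ) = I.card := by rw [isoCount, hI]
        rw [hIcard]
        have hI0 : (0:ℝ) ≤ I.card := by positivity
        have hc : (I.card : ℝ) + T.card ≤ Fintype.card V := by exact_mod_cast hcard
        nlinarith

/-- Defect Hall condition derived from the deficiency bound. -/
lemma FracTB.hall_cond (d : ℤ)
    (hd : ∀ T : Finset V, (isoCount G T : ℤ) - T.card ≤ d) (s : Finset V) :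
    (s.card : ℤ) ≤ (s.biUnion (fun v => G.neighborFinset v)).card + d := by
  set N := s.biUnion (fun v => G.neighborFinset v) with hN
  set T := N \ s with hT
  have hsub : s \ N ⊆ Finset.univ.filter (fun v => v ∉ T ∧ ∀ w, G.Adj v w → w ∈ T) := by
    intro v hv
    rw [Finset.mem_sdiff] at hv
    rw [Finset.mem_filter]
    refine ⟨Finset.mem_univ _, fun h => hv.2 (Finset.mem_sdiff.1 h).1, fun w hw => ?_⟩
    have hwN : w ∈ N := Finset.mem_biUnion.2 ⟨v, hv.1, (SimpleGraph.mem_neighborFinset _ _ _).2 hw⟩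
    have hws : w ∉ s := fun hws => hv.2 (Finset.mem_biUnion.2
      ⟨w, hws, (SimpleGraph.mem_neighborFinset _ _ _).2 hw.symm⟩)
    exact Finset.mem_sdiff.2 ⟨hwN, hws⟩
  have h1 : (s \ N).card ≤ isoCount G T := Finset.card_le_card hsub
  have h2 : (s \ N).card + (s ∩ N).card = s.card := Finset.card_sdiff_add_card_inter s N
  have h3 : (N \ s).card + (N ∩ s).card = N.card := Finset.card_sdiff_add_card_inter N s
  have h4 : (s ∩ N).card = (N ∩ s).card := by rw [Finset.inter_comm]
  have h5 := hd T
  have h6 : T.card = (N \ s).card := rfl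
  omega

/-- From the deficiency bound, obtain a large partial "matching function". -/
lemma FracTB.exists_partial (d : ℤ) (hd0 : 0 ≤ d)
    (hd : ∀ T : Finset V, (isoCount G T : ℤ) - T.card ≤ d) :
    ∃ (D : Finset V) (σ : V → V), (∀ v ∈ D, G.Adj v (σ v)) ∧ Set.InjOn σ D ∧
      (Fintype.card V : ℤ) ≤ D.card + d := by
  set k := d.toNat with hk
  have hkd : (k : ℤ) = d := Int.toNat_of_nonneg hd0
  set t : V → Finset (V ⊕ Fin k) := fun v =>
    (G.neighborFinset v).map ⟨Sum.inl, Sum.inl_injective⟩ ∪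
      (Finset.univ : Finset (Fin k)).map ⟨Sum.inr, Sum.inr_injective⟩ with ht
  have hall : ∀ s : Finset V, s.card ≤ (s.biUnion t).card := by
    intro s
    rcases s.eq_empty_or_nonempty with rfl | ⟨v0, hv0⟩
    · simp
    · have hsub : (s.biUnion (fun v => G.neighborFinset v)).map ⟨Sum.inl, Sum.inl_injective⟩ ∪
          (Finset.univ : Finset (Fin k)).map ⟨Sum.inr, Sum.inr_injective⟩ ⊆
          s.biUnion t := by
        intro x hx
        rw [Finset.mem_union] at hx
        rcases hx with hx | hx
        · rw [Finset.mem_map] at hx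
          obtain ⟨w, hw, rfl⟩ := hx
          rw [Finset.mem_biUnion] at hw
          obtain ⟨u, hu, hw⟩ := hw
          exact Finset.mem_biUnion.2 ⟨u, hu, Finset.mem_union_left _
            (Finset.mem_map.2 ⟨w, hw, rfl⟩)⟩
        · exact Finset.mem_biUnion.2 ⟨v0, hv0, Finset.mem_union_right _ hx⟩
      have hdisj : Disjoint
          ((s.biUnion (fun v => G.neighborFinset v)).map ⟨Sum.inl, Sum.inl_injective⟩)
          ((Finset.univ : Finset (Fin k)).map ⟨Sum.inr, Sum.inr_injective⟩) := by
        rw [Finset.disjoint_left]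
        rintro x hx hy
        rw [Finset.mem_map] at hx hy
        obtain ⟨a, _, rfl⟩ := hx
        obtain ⟨b, _, hb⟩ := hy
        exact Sum.inr_ne_inl hb
      have hcard := Finset.card_le_card hsub
      rw [Finset.card_union_of_disjoint hdisj, Finset.card_map, Finset.card_map,
        Finset.card_univ, Fintype.card_fin] at hcard
      have := FracTB.hall_cond G d hd s
      omega
  obtain ⟨g, hginj, hgmem⟩ := (Finset.all_card_le_biUnion_card_iff_exists_injective t).1 hall
  set D : Finset V := Finset.univ.filter (fun v => (g v).isLeft) with hD
  set σ : V → V := fun v => Sum.elim id (fun _ => v) (g v) with hσ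
  have hgD : ∀ v ∈ D, g v = Sum.inl (σ v) := by
    intro v hv
    rw [hD, Finset.mem_filter] at hv
    cases hgv : g v with
    | inl w => simp [hσ, hgv]
    | inr j => rw [hgv] at hv; simp at hv
  refine ⟨D, σ, ?_, ?_, ?_⟩
  · intro v hv
    have := hgmem v
    rw [hgD v hv, ht] at this
    rw [Finset.mem_union] at this
    rcases this with h | h
    · rw [Finset.mem_map] at h
      obtain ⟨w, hw, hweq⟩ := h
      obtain rfl : w = σ v := Sum.inl_injective hweq
      exact (SimpleGraph.mem_neighborFinset _ _ _).1 hw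
    · rw [Finset.mem_map] at h
      obtain ⟨b, _, hb⟩ := h
      exact absurd hb (by simp)
  · intro v₁ h₁ v₂ h₂ heq
    apply hginj
    rw [hgD v₁ h₁, hgD v₂ h₂, heq]
  · have hsplit : D.card + (Finset.univ.filter (fun v => ¬ (g v).isLeft)).card
        = Fintype.card V := by
      rw [hD, ← Finset.card_univ]
      exact Finset.card_filter_add_card_filter_not _
    have hbound : (Finset.univ.filter (fun v => ¬ (g v).isLeft)).card ≤ k := by
      have : (Finset.univ.filter (fun v => ¬ (g v).isLeft)).card ≤
          ((Finset.univ : Finset (Fin k)).map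
            ⟨(Sum.inr : Fin k → V ⊕ Fin k), Sum.inr_injective⟩).card := by
        apply Finset.card_le_card_of_injOn g
        · intro v hv
          rw [Finset.mem_coe, Finset.mem_filter] at hv
          cases hgv : g v with
          | inl w => rw [hgv] at hv; simp at hv
          | inr j => simp
        · exact fun a _ b _ h => hginj h
      rwa [Finset.card_map, Finset.card_univ, Fintype.card_fin] at this
    omega

/-- From a partial matching function, build a fractional matching of size `|D|/2`. -/
lemma FracTB.build_fm (D : Finset V) (σ : V → V) (hadj : ∀ v ∈ D, G.Adj v (σ v))
    (hinj : Set.InjOn σ D) :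
    ∃ f, IsFracMatching G f ∧ ∑ e ∈ G.edgeFinset, f e = (D.card : ℝ) / 2 := by
  set q : V → Sym2 V := fun v => s(v, σ v) with hq
  set f : Sym2 V → ℝ := fun e => ((D.filter (fun v => q v = e)).card : ℝ) / 2 with hf
  have hfilter_sub : ∀ a b : V, D.filter (fun v => q v = s(a,b)) ⊆ {a, b} := by
    intro a b v hv
    rw [Finset.mem_filter] at hv
    have := hv.2
    rw [hq] at this
    beta_reduce at this
    replace this := (Sym2.mk_eq_mk_iff (p := (v, σ v)) (q := (a, b))).1 this
    rcases this with h | h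
    · exact Finset.mem_insert.2 (Or.inl (congrArg Prod.fst h))
    · exact Finset.mem_insert.2 (Or.inr (by
        simpa using (congrArg Prod.fst h : v = b)))
  refine ⟨f, ⟨⟨fun e => ⟨by positivity, ?_⟩, fun e he => ?_, fun v => ?_⟩, ?_⟩⟩
  · -- f e ≤ 1
    induction e with
    | _ a b =>
      have hle : (D.filter (fun v => q v = s(a,b))).card ≤ 2 := by
        calc _ ≤ ({a,b} : Finset V).card := Finset.card_le_card (hfilter_sub a b)
          _ ≤ 2 := Finset.card_insert_le _ _ |>.trans (by simp)
      rw [hf]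
      have : ((D.filter (fun v => q v = s(a,b))).card : ℝ) ≤ 2 := by exact_mod_cast hle
      linarith
  · -- support
    rw [hf]
    have : D.filter (fun v => q v = e) = ∅ := by
      rw [Finset.filter_eq_empty_iff]
      intro v hv hqv
      exact he (hqv ▸ ((SimpleGraph.mem_edgeSet G).2 (hadj v hv)))
    simp [this]
  · -- loads
    set S := D.filter (fun w => q w ∈ G.incidenceFinset v) with hS
    have hcard : S.card = ∑ e ∈ G.incidenceFinset v, (D.filter (fun w => q w = e)).card := by
      rw [Finset.card_eq_sum_card_fiberwise (s := S) (f := q) (t := G.incidenceFinset v)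
        (fun w hw => (Finset.mem_filter.1 hw).2)]
      refine Finset.sum_congr rfl fun e he => ?_
      congr 1
      rw [Finset.filter_filter]
      apply Finset.filter_congr
      intro w _
      constructor
      · exact fun h => h.2
      · exact fun h => ⟨h ▸ he, h⟩
    have hsum : ∑ e ∈ G.incidenceFinset v, f e = (S.card : ℝ) / 2 := by
      rw [hf, ← Finset.sum_div, hcard]
      push_cast
      rfl
    rw [hsum]
    have hS2 : S.card ≤ 2 := by
      have hsub : S ⊆ D.filter (fun w => w = v) ∪ D.filter (fun w => σ w = v) := by
        intro w hw
        rw [hS, Finset.mem_filter] at hw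
        obtain ⟨hwD, hwi⟩ := hw
        rw [SimpleGraph.mem_incidenceFinset] at hwi
        have hv : v ∈ q w := hwi.2
        rw [hq, Sym2.mem_iff] at hv
        rw [Finset.mem_union, Finset.mem_filter, Finset.mem_filter]
        rcases hv with h | h
        · exact Or.inl ⟨hwD, h.symm⟩
        · exact Or.inr ⟨hwD, h.symm⟩
      calc S.card ≤ _ := Finset.card_le_card hsub
        _ ≤ (D.filter (fun w => w = v)).card + (D.filter (fun w => σ w = v)).card :=
          Finset.card_union_le _ _
        _ ≤ 1 + 1 := by
          gcongr
          · exact Finset.card_le_one.2 fun a ha b hb =>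
              (Finset.mem_filter.1 ha).2.trans (Finset.mem_filter.1 hb).2.symm
          · exact Finset.card_le_one.2 fun a ha b hb =>
              hinj (Finset.mem_filter.1 ha).1 (Finset.mem_filter.1 hb).1
                ((Finset.mem_filter.1 ha).2.trans (Finset.mem_filter.1 hb).2.symm)
    have : (S.card : ℝ) ≤ 2 := by exact_mod_cast hS2
    linarith
  · -- total
    have hcard : D.card = ∑ e ∈ G.edgeFinset, (D.filter (fun w => q w = e)).card :=
      Finset.card_eq_sum_card_fiberwise (fun w hw =>
        SimpleGraph.mem_edgeFinset.2 ((SimpleGraph.mem_edgeSet G).2 (hadj w hw)))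
    rw [hf, ← Finset.sum_div, ← Nat.cast_sum, ← hcard]

end Aux

/-- fractional Tutte–Berge formula: for any graph `G` of order `n`,
`ν*(G) = (1/2)·(n − max_{T ⊆ V(G)} (i(G−T) − |T|))`. -/
theorem fractional_tutte_berge {V : Type*} [Fintype V] [DecidableEq V]
    (G : SimpleGraph V) [DecidableRel G.Adj] (s : ℝ) (hs : IsFracMatchingNumber G s) :
    s = (1 / 2) * ((Fintype.card V : ℝ) -
      ((Finset.univ : Finset V).powerset.sup' (Finset.powerset_nonempty _)
        (fun T => (isoCount G T : ℤ) - T.card) : ℤ)) := by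
  set d : ℤ := (Finset.univ : Finset V).powerset.sup' (Finset.powerset_nonempty _)
    (fun T => (isoCount G T : ℤ) - T.card) with hd
  have hle : ∀ T : Finset V, (isoCount G T : ℤ) - T.card ≤ d := by
    intro T
    rw [hd]
    exact Finset.le_sup' (fun T => (isoCount G T : ℤ) - T.card)
      (Finset.mem_powerset.2 (Finset.subset_univ T))
  have hd0 : 0 ≤ d := by
    have := hle ∅
    have h0 : (0:ℤ) ≤ (isoCount G (∅ : Finset V) : ℤ) - (∅ : Finset V).card := by
      simp
    exact le_trans h0 (hle ∅)
  -- upper bound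
  obtain ⟨T, hT, hTd⟩ := Finset.exists_mem_eq_sup' (Finset.powerset_nonempty
    (Finset.univ : Finset V)) (fun T => (isoCount G T : ℤ) - T.card)
  obtain ⟨f0, hf0, hf0s⟩ := hs.1
  have hup : s ≤ ((Fintype.card V : ℝ) + T.card - isoCount G T) / 2 := by
    rw [← hf0s]
    exact FracTB.upper_bound G f0 hf0 T
  have hdT : ((d : ℝ)) = (isoCount G T : ℝ) - T.card := by
    have h := congrArg (fun z : ℤ => (z : ℝ)) (hd.trans hTd)
    push_cast at h
    exact h
  -- lower bound
  obtain ⟨D, σ, hadj, hinj, hDcard⟩ := FracTB.exists_partial G d hd0 hle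
  obtain ⟨f1, hf1, hf1s⟩ := FracTB.build_fm G D σ hadj hinj
  have hlow : (D.card : ℝ) / 2 ≤ s := hf1s ▸ hs.2 f1 hf1
  have hDcard' : (Fintype.card V : ℝ) ≤ (D.card : ℝ) + (d : ℝ) := by exact_mod_cast hDcard
  linarith
end

section
/- Let n, s, t, δ be positive integers with δ ≤ t ≤ s and n ≥ 2s+1, and let G(n,s,t) be the graph obtained from K_t ∨ (K_{2s−2t} + complement of K_{n+t−2s}) by deleting t − δ edges incident to one common vertex u of the independent part. Then the number of copies of K_ℓ in G(n,s,t) equals C(2s−t, ℓ) + C(t, ℓ−1)·(n + t − 2s − 1) + C(δ, ℓ−1), for any ℓ ≥ 2. -/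
/-- The extremal graph `G(n,s,t)` on vertex set `Fin n`: obtained from
`K_t ∨ (K_{2s−2t} + complement of K_{n+t−2s})` by deleting `t − δ` edges incident to the
common vertex `u` (the vertex `n−1` of the independent part), so that `u` is joined
exactly to the first `δ` vertices of the `K_t` part.  The first `t` vertices form the
`K_t` part (joined to everything), the next `2s−2t` vertices form the clique
`K_{2s−2t}`, and the remaining `n+t−2s` vertices are independent. -/
def GExt (n s t δ : ℕ) : SimpleGraph (Fin n) where
  Adj i j := i ≠ j ∧
    (((i : ℕ) < 2 * s - t ∧ (j : ℕ) < 2 * s - t) ∨ ((i : ℕ) < t ∨ (j : ℕ) < t)) ∧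
    ¬((i : ℕ) = n - 1 ∧ δ ≤ (j : ℕ)) ∧ ¬((j : ℕ) = n - 1 ∧ δ ≤ (i : ℕ))
  symm := by
    constructor
    intro a b h
    obtain ⟨h1, h2, h3, h4⟩ := h
    exact ⟨h1.symm, by tauto, h4, h3⟩
  loopless := by
    constructor
    intro a h
    exact h.1 rfl

lemma insert_image_card {α : Type*} [DecidableEq α] (v : α) (W : Finset α) (k : ℕ)
    (hv : v ∉ W) :
    ((W.powersetCard k).image (insert v)).card = W.card.choose k := by
  rw [Finset.card_image_of_injOn, Finset.card_powersetCard]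
  intro P hP Q hQ h
  simp only [Finset.mem_coe, Finset.mem_powersetCard] at hP hQ
  have hvP : v ∉ P := fun hx => hv (hP.1 hx)
  have hvQ : v ∉ Q := fun hx => hv (hQ.1 hx)
  rw [← Finset.erase_insert hvP, h, Finset.erase_insert hvQ]

lemma card_filter_fin (n : ℕ) (p : ℕ → Prop) [DecidablePred p] :
    (Finset.filter (fun i : Fin n => p i.val) Finset.univ).card
      = ((Finset.range n).filter p).card := by
  have h : (Finset.range n).filter p
      = (Finset.filter (fun i : Fin n => p i.val) Finset.univ).image Fin.val := by
    ext m
    simp only [Finset.mem_filter, Finset.mem_range, Finset.mem_image, Finset.mem_univ,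
      true_and]
    constructor
    · rintro ⟨hm, hp⟩
      exact ⟨⟨m, hm⟩, hp, rfl⟩
    · rintro ⟨i, hp, rfl⟩
      exact ⟨i.2, hp⟩
  rw [h, Finset.card_image_of_injective _ Fin.val_injective]

/-- the number of copies of `K_ℓ` in `G(n,s,t)` equals
`C(2s−t, ℓ) + C(t, ℓ−1)·(n + t − 2s − 1) + C(δ, ℓ−1)`. -/
theorem GExt_clique_count (n s t δ ℓ : ℕ) (hn : 0 < n) (hs : 0 < s) (ht : 0 < t)
    (hδ : 0 < δ) (hδt : δ ≤ t) (hts : t ≤ s) (hn2s : 2 * s + 1 ≤ n) (hℓ : 2 ≤ ℓ) :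
    ((GExt n s t δ).cliqueSet ℓ).ncard =
      Nat.choose (2 * s - t) ℓ + Nat.choose t (ℓ - 1) * (n + t - 2 * s - 1) +
        Nat.choose δ (ℓ - 1) := by
  classical
  have h2st : t ≤ 2 * s - t := by omega
  have hn1 : 2 * s ≤ n - 1 := by omega
  rw [← SimpleGraph.coe_cliqueFinset, Set.ncard_coe_finset]
  set u : Fin n := ⟨n - 1, by omega⟩ with hu
  set A : Finset (Fin n) := Finset.univ.filter (fun i => (i : ℕ) < 2 * s - t) with hA
  set T : Finset (Fin n) := Finset.univ.filter (fun i => (i : ℕ) < t) with hT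
  set D : Finset (Fin n) := Finset.univ.filter (fun i => (i : ℕ) < δ) with hD
  set M : Finset (Fin n) :=
    Finset.univ.filter (fun i => 2 * s - t ≤ (i : ℕ) ∧ (i : ℕ) < n - 1) with hM
  have memA : ∀ i : Fin n, i ∈ A ↔ (i : ℕ) < 2 * s - t := by intro i; simp [hA]
  have memT : ∀ i : Fin n, i ∈ T ↔ (i : ℕ) < t := by intro i; simp [hT]
  have memD : ∀ i : Fin n, i ∈ D ↔ (i : ℕ) < δ := by intro i; simp [hD]
  have memM : ∀ i : Fin n, i ∈ M ↔ (2 * s - t ≤ (i : ℕ) ∧ (i : ℕ) < n - 1) := by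
    intro i; simp [hM]
  have cardA : A.card = 2 * s - t := by
    rw [hA, card_filter_fin n (fun x => x < 2 * s - t)]
    have : (Finset.range n).filter (fun x => x < 2 * s - t) = Finset.range (2 * s - t) := by
      ext x; simp only [Finset.mem_filter, Finset.mem_range]; omega
    rw [this, Finset.card_range]
  have cardT : T.card = t := by
    rw [hT, card_filter_fin n (fun x => x < t)]
    have : (Finset.range n).filter (fun x => x < t) = Finset.range t := by
      ext x; simp only [Finset.mem_filter, Finset.mem_range]; omega
    rw [this, Finset.card_range]
  have cardD : D.card = δ := by
    rw [hD, card_filter_fin n (fun x => x < δ)]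
    have : (Finset.range n).filter (fun x => x < δ) = Finset.range δ := by
      ext x; simp only [Finset.mem_filter, Finset.mem_range]; omega
    rw [this, Finset.card_range]
  have cardM : M.card = n + t - 2 * s - 1 := by
    rw [hM, card_filter_fin n (fun x => 2 * s - t ≤ x ∧ x < n - 1)]
    have : (Finset.range n).filter (fun x => 2 * s - t ≤ x ∧ x < n - 1)
        = Finset.Ico (2 * s - t) (n - 1) := by
      ext x; simp only [Finset.mem_filter, Finset.mem_range, Finset.mem_Ico]; omega
    rw [this, Nat.card_Ico]; omega
  -- the key structural description of the clique finset
  have key : (GExt n s t δ).cliqueFinset ℓ =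
      (A.powersetCard ℓ ∪ M.biUnion (fun v => (T.powersetCard (ℓ - 1)).image (insert v)))
        ∪ (D.powersetCard (ℓ - 1)).image (insert u) := by
    ext S
    simp only [SimpleGraph.mem_cliqueFinset_iff, Finset.mem_union, Finset.mem_biUnion,
      Finset.mem_image, Finset.mem_powersetCard, SimpleGraph.isNClique_iff]
    constructor
    · rintro ⟨hclique, hcard⟩
      by_cases hB : ∀ i ∈ S, (i : ℕ) < 2 * s - t
      · exact Or.inl (Or.inl ⟨fun i hi => (memA i).2 (hB i hi), hcard⟩)
      · push_neg at hB
        obtain ⟨v, hvS, hv⟩ := hB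
        have hrest : ∀ w ∈ S, w ≠ v → (w : ℕ) < t := by
          intro w hwS hwv
          have hadj : (GExt n s t δ).Adj w v :=
            hclique (Finset.mem_coe.2 hwS) (Finset.mem_coe.2 hvS) hwv
          rcases hadj.2.1 with h | h | h
          · omega
          · exact h
          · omega
        have herase_card : (S.erase v).card = ℓ - 1 := by
          rw [Finset.card_erase_of_mem hvS, hcard]
        have hSv : S = insert v (S.erase v) := (Finset.insert_erase hvS).symm
        by_cases hvu : (v : ℕ) = n - 1
        · right
          have hvu' : v = u := Fin.ext (by simpa [hu] using hvu)
          refine ⟨S.erase v, ⟨?_, herase_card⟩, ?_⟩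
          · intro w hw
            rw [Finset.mem_erase] at hw
            have hadj : (GExt n s t δ).Adj v w :=
              hclique (Finset.mem_coe.2 hvS) (Finset.mem_coe.2 hw.2) (Ne.symm hw.1)
            have h3 := hadj.2.2.1
            rw [memD]
            by_contra hcon
            exact h3 ⟨hvu, by omega⟩
          · rw [← hvu']; exact hSv.symm
        · left; right
          refine ⟨v, ?_, S.erase v, ⟨?_, herase_card⟩, hSv.symm⟩
          · rw [memM]
            have := v.2
            constructor <;> omega
          · intro w hw
            rw [Finset.mem_erase] at hw
            rw [memT]
            exact hrest w hw.2 hw.1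
    · have hins_card : ∀ (v : Fin n) (P : Finset (Fin n)), (v : ℕ) ∉ Set.Iio t →
          P ⊆ T → P.card = ℓ - 1 → (insert v P).card = ℓ := by
        intro v P hv hPT hPcard
        have hvP : v ∉ P := fun h => hv ((memT v).1 (hPT h))
        rw [Finset.card_insert_of_notMem hvP, hPcard]; omega
      rintro ((⟨hSA, hcard⟩ | ⟨v, hvM, P, ⟨hPT, hPcard⟩, rfl⟩) | ⟨P, ⟨hPD, hPcard⟩, rfl⟩)
      · refine ⟨?_, hcard⟩
        intro a ha b hb hab
        have ha' := (memA a).1 (hSA (Finset.mem_coe.1 ha))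
        have hb' := (memA b).1 (hSA (Finset.mem_coe.1 hb))
        exact ⟨hab, Or.inl ⟨ha', hb'⟩, fun h => by omega, fun h => by omega⟩
      · rw [memM] at hvM
        have hPT' : ∀ w ∈ P, (w : ℕ) < t := fun w hw => (memT w).1 (hPT hw)
        refine ⟨?_, hins_card v P (by simp; omega) hPT hPcard⟩
        intro a ha b hb hab
        simp only [Finset.coe_insert, Set.mem_insert_iff, Finset.mem_coe] at ha hb
        have hma : (a : ℕ) = (v : ℕ) ∨ (a : ℕ) < t := by
          rcases ha with h | h
          · exact Or.inl (by rw [h])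
          · exact Or.inr (hPT' a h)
        have hmb : (b : ℕ) = (v : ℕ) ∨ (b : ℕ) < t := by
          rcases hb with h | h
          · exact Or.inl (by rw [h])
          · exact Or.inr (hPT' b h)
        have hab' : (a : ℕ) ≠ (b : ℕ) := fun h => hab (Fin.ext h)
        refine ⟨hab, ?_, fun h => by omega, fun h => by omega⟩
        right; omega
      · have hPD' : ∀ w ∈ P, (w : ℕ) < δ := fun w hw => (memD w).1 (hPD hw)
        have huP : (u : ℕ) ∉ Set.Iio t := by simp [hu]; omega
        refine ⟨?_, hins_card u P huP (fun w hw => (memT w).2 (by have := hPD' w hw; omega))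
          hPcard⟩
        intro a ha b hb hab
        simp only [Finset.coe_insert, Set.mem_insert_iff, Finset.mem_coe] at ha hb
        have hma : (a : ℕ) = n - 1 ∨ (a : ℕ) < δ := by
          rcases ha with h | h
          · exact Or.inl (by rw [h])
          · exact Or.inr (hPD' a h)
        have hmb : (b : ℕ) = n - 1 ∨ (b : ℕ) < δ := by
          rcases hb with h | h
          · exact Or.inl (by rw [h])
          · exact Or.inr (hPD' b h)
        have hab' : (a : ℕ) ≠ (b : ℕ) := fun h => hab (Fin.ext h)
        refine ⟨hab, ?_, fun h => by omega, fun h => by omega⟩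
        right; omega
  -- disjointness
  have hMbig : ∀ v : Fin n, ∀ S ∈ (T.powersetCard (ℓ - 1)).image (insert v), v ∈ S ∧
      ∀ w ∈ S, w ≠ v → (w : ℕ) < t := by
    intro v S hS
    rw [Finset.mem_image] at hS
    obtain ⟨P, hP, rfl⟩ := hS
    rw [Finset.mem_powersetCard] at hP
    refine ⟨Finset.mem_insert_self v P, ?_⟩
    intro w hw hwv
    rcases Finset.mem_insert.1 hw with h | h
    · exact absurd h hwv
    · exact (memT w).1 (hP.1 h)
  have hdisj1 : Disjoint (A.powersetCard ℓ)
      (M.biUnion (fun v => (T.powersetCard (ℓ - 1)).image (insert v))) := by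
    rw [Finset.disjoint_left]
    intro S hS hS'
    rw [Finset.mem_powersetCard] at hS
    rw [Finset.mem_biUnion] at hS'
    obtain ⟨v, hvM, hv⟩ := hS'
    obtain ⟨hvS, -⟩ := hMbig v S hv
    have := (memA v).1 (hS.1 hvS)
    have := ((memM v).1 hvM).1
    omega
  have hdisj2 : Disjoint
      (A.powersetCard ℓ ∪ M.biUnion (fun v => (T.powersetCard (ℓ - 1)).image (insert v)))
      ((D.powersetCard (ℓ - 1)).image (insert u)) := by
    rw [Finset.disjoint_left]
    intro S hS hS'
    rw [Finset.mem_image] at hS'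
    obtain ⟨P, hP, rfl⟩ := hS'
    rw [Finset.mem_powersetCard] at hP
    rcases Finset.mem_union.1 hS with h | h
    · rw [Finset.mem_powersetCard] at h
      have := (memA u).1 (h.1 (Finset.mem_insert_self u P))
      simp only [hu] at this
      omega
    · rw [Finset.mem_biUnion] at h
      obtain ⟨v, hvM, hv⟩ := h
      obtain ⟨-, hrest⟩ := hMbig v (insert u P) hv
      have hvlt := ((memM v).1 hvM).2
      have huv : u ≠ v := by
        intro h; rw [← h] at hvlt; simp [hu] at hvlt
      have := hrest u (Finset.mem_insert_self u P) huv
      simp only [hu] at this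
      omega
  have hbiU : ∀ x ∈ M, ∀ y ∈ M, x ≠ y →
      Disjoint ((T.powersetCard (ℓ - 1)).image (insert x))
        ((T.powersetCard (ℓ - 1)).image (insert y)) := by
    intro x hx y hy hxy
    rw [Finset.disjoint_left]
    intro S hSx hSy
    obtain ⟨hxS, -⟩ := hMbig x S hSx
    obtain ⟨-, hrest⟩ := hMbig y S hSy
    have := hrest x hxS hxy
    have := ((memM x).1 hx).1
    omega
  rw [key, Finset.card_union_of_disjoint hdisj2, Finset.card_union_of_disjoint hdisj1,
    Finset.card_powersetCard, Finset.card_biUnion hbiU, cardA]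
  have himg : ∀ v ∈ M, ((T.powersetCard (ℓ - 1)).image (insert v)).card
      = Nat.choose t (ℓ - 1) := by
    intro v hv
    have hvT : v ∉ T := by
      rw [memT]
      have := ((memM v).1 hv).1
      omega
    rw [insert_image_card v T _ hvT, cardT]
  rw [Finset.sum_congr rfl himg, Finset.sum_const, cardM]
  have huD : u ∉ D := by rw [memD]; simp [hu]; omega
  rw [insert_image_card u D _ huD, cardD]
  ring
end

section
/- Let n, s, t, δ be positive integers with δ ≤ t ≤ s, 2s − 2t ≠ 1, and n ≥ 2s+1. Then the graph G(n,s,t), obtained from K_t ∨ (K_{2s−2t} + complement of K_{n+t−2s}) by deleting t − δ edges incident to one common vertex u of the independent part, has fractional matching number exactly s and minimum degree exactly δ. -/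
instance (n s t δ : ℕ) : DecidableRel (GExt n s t δ).Adj := fun i j =>
  inferInstanceAs (Decidable (i ≠ j ∧
    (((i : ℕ) < 2 * s - t ∧ (j : ℕ) < 2 * s - t) ∨ ((i : ℕ) < t ∨ (j : ℕ) < t)) ∧
    ¬((i : ℕ) = n - 1 ∧ δ ≤ (j : ℕ)) ∧ ¬((j : ℕ) = n - 1 ∧ δ ≤ (i : ℕ))))

open Finset

lemma card_filter_fin_lt (n a : ℕ) (ha : a ≤ n) :
    ({j : Fin n | (j : ℕ) < a} : Finset (Fin n)).card = a := by
  rw [← Finset.card_range a]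
  apply Finset.card_bij (fun (j : Fin n) _ => (j : ℕ))
  · intro j hj
    simp only [Finset.mem_filter, Finset.mem_univ, true_and] at hj
    simpa using hj
  · intro j1 _ j2 _ h
    exact Fin.val_injective h
  · intro m hm
    rw [Finset.mem_range] at hm
    exact ⟨⟨m, by omega⟩, by simpa using hm, rfl⟩

section Main

variable {n s t δ : ℕ}

/-- First endpoint of the `k`-th matching edge. -/
def me1 (s t k : ℕ) : ℕ := if k < t then k else 2 * k - t

/-- Second endpoint of the `k`-th matching edge. -/
def me2 (s t k : ℕ) : ℕ := if k < t then 2 * s - t + k else 2 * k - t + 1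

lemma me_lt (hts : t ≤ s) (hn2s : 2 * s + 1 ≤ n) {k : ℕ} (hk : k < s) :
    me1 s t k < n ∧ me2 s t k < n := by
  unfold me1 me2; split_ifs <;> omega

/-- The `k`-th matching edge. -/
def mEdge (n s t : ℕ) (hn : 0 < n) (k : ℕ) : Sym2 (Fin n) :=
  s(⟨me1 s t k % n, Nat.mod_lt _ hn⟩, ⟨me2 s t k % n, Nat.mod_lt _ hn⟩)

lemma mEdge_eq (hn : 0 < n) (hts : t ≤ s) (hn2s : 2 * s + 1 ≤ n) {k : ℕ} (hk : k < s) :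
    mEdge n s t hn k = s(⟨me1 s t k, (me_lt hts hn2s hk).1⟩,
      ⟨me2 s t k, (me_lt hts hn2s hk).2⟩) := by
  have h1 : (⟨me1 s t k % n, Nat.mod_lt _ hn⟩ : Fin n) = ⟨me1 s t k, (me_lt hts hn2s hk).1⟩ :=
    Fin.ext (Nat.mod_eq_of_lt (me_lt hts hn2s hk).1)
  have h2 : (⟨me2 s t k % n, Nat.mod_lt _ hn⟩ : Fin n) = ⟨me2 s t k, (me_lt hts hn2s hk).2⟩ :=
    Fin.ext (Nat.mod_eq_of_lt (me_lt hts hn2s hk).2)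
  rw [mEdge, h1, h2]

lemma mem_mEdge (hn : 0 < n) (hts : t ≤ s) (hn2s : 2 * s + 1 ≤ n) {k : ℕ} (hk : k < s)
    (v : Fin n) :
    v ∈ mEdge n s t hn k ↔ (v : ℕ) = me1 s t k ∨ (v : ℕ) = me2 s t k := by
  rw [mEdge_eq hn hts hn2s hk]
  simp only [Sym2.mem_iff, Fin.ext_iff]

lemma mEdge_disj (hts : t ≤ s) {k k' : ℕ} (hk : k < s) (hk' : k' < s)
    (h : me1 s t k = me1 s t k' ∨ me1 s t k = me2 s t k' ∨
      me2 s t k = me1 s t k' ∨ me2 s t k = me2 s t k') : k = k' := by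
  unfold me1 me2 at h; split_ifs at h <;> omega

lemma adj_mk {a b : ℕ} (ha : a < n) (hb : b < n) :
    (GExt n s t δ).Adj ⟨a, ha⟩ ⟨b, hb⟩ ↔ (a ≠ b ∧
      ((a < 2 * s - t ∧ b < 2 * s - t) ∨ (a < t ∨ b < t)) ∧
      ¬(a = n - 1 ∧ δ ≤ b) ∧ ¬(b = n - 1 ∧ δ ≤ a)) := by
  constructor
  · rintro ⟨h1, h2⟩; exact ⟨fun h => h1 (Fin.ext h), h2⟩
  · rintro ⟨h1, h2⟩; exact ⟨fun h => h1 (congrArg Fin.val h), h2⟩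

lemma mEdge_mem_edgeSet (hn : 0 < n) (ht : 0 < t) (hδt : δ ≤ t) (hts : t ≤ s)
    (hn2s : 2 * s + 1 ≤ n) {k : ℕ} (hk : k < s) :
    mEdge n s t hn k ∈ (GExt n s t δ).edgeSet := by
  rw [mEdge_eq hn hts hn2s hk, SimpleGraph.mem_edgeSet, adj_mk]
  unfold me1 me2
  split_ifs <;> omega

lemma sum_g (hts : t ≤ s) (hn2s : 2 * s + 1 ≤ n) :
    ∑ v : Fin n, (if (v : ℕ) < t then (1 : ℝ) else if (v : ℕ) < 2 * s - t then 1/2 else 0)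
      = s := by
  have key : ∀ v : Fin n,
      (if (v : ℕ) < t then (1 : ℝ) else if (v : ℕ) < 2 * s - t then 1/2 else 0)
      = (if (v : ℕ) < t then (1 : ℝ)/2 else 0) + (if (v : ℕ) < 2 * s - t then (1:ℝ)/2 else 0) := by
    intro v
    split_ifs with h1 h2 h2
    · norm_num
    · omega
    · norm_num
    · norm_num
  rw [Finset.sum_congr rfl (fun v _ => key v), Finset.sum_add_distrib,
    ← Finset.sum_filter, ← Finset.sum_filter, Finset.sum_const, Finset.sum_const,
    card_filter_fin_lt n t (by omega), card_filter_fin_lt n (2*s-t) (by omega)]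
  have h2 : ((2*s - t : ℕ) : ℝ) = 2*s - t := by
    push_cast [Nat.cast_sub (by omega : t ≤ 2*s)]; ring
  simp only [nsmul_eq_mul, h2]
  ring

/-- for positive integers `δ ≤ t ≤ s` with `2s − 2t ≠ 1` and `n ≥ 2s+1`,
the graph `G(n,s,t)` has fractional matching number exactly `s` and minimum degree
exactly `δ`. -/
theorem GExt_fracMatchingNumber_minDegree (n s t δ : ℕ) (hn : 0 < n) (hs : 0 < s)
    (ht : 0 < t) (hδ : 0 < δ) (hδt : δ ≤ t) (hts : t ≤ s) (hodd : 2 * s - 2 * t ≠ 1)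
    (hn2s : 2 * s + 1 ≤ n) :
    IsFracMatchingNumber (GExt n s t δ) (s : ℝ) ∧
      (∀ v : Fin n, δ ≤ ((GExt n s t δ).neighborSet v).ncard) ∧
      (∃ v : Fin n, ((GExt n s t δ).neighborSet v).ncard = δ) := by
  classical
  set G := GExt n s t δ with hG
  have adj_iff : ∀ a b : Fin n, G.Adj a b ↔ ((a:ℕ) ≠ (b:ℕ) ∧
      (((a : ℕ) < 2 * s - t ∧ (b : ℕ) < 2 * s - t) ∨ ((a : ℕ) < t ∨ (b : ℕ) < t)) ∧
      ¬((a : ℕ) = n - 1 ∧ δ ≤ (b : ℕ)) ∧ ¬((b : ℕ) = n - 1 ∧ δ ≤ (a : ℕ))) := by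
    intro a b
    constructor
    · rintro ⟨h1, h⟩; exact ⟨fun hv => h1 (Fin.ext hv), h⟩
    · rintro ⟨h1, h⟩; exact ⟨fun hv => h1 (congrArg Fin.val hv), h⟩
  have hncard : ∀ v : Fin n, (G.neighborSet v).ncard = (G.neighborFinset v).card := by
    intro v
    rw [← Set.ncard_coe_finset]
    congr 1
    ext w
    simp
  refine ⟨⟨?lower, ?upper⟩, ?mindeg, ⟨⟨n - 1, by omega⟩, ?exactdeg⟩⟩
  case lower =>
    -- explicit integral matching of size s
    set M : Finset (Sym2 (Fin n)) := (Finset.range s).image (mEdge n s t hn) with hM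
    have hMsub : M ⊆ G.edgeFinset := by
      intro e he
      rw [hM, Finset.mem_image] at he
      obtain ⟨k, hk, rfl⟩ := he
      rw [SimpleGraph.mem_edgeFinset]
      exact mEdge_mem_edgeSet hn ht hδt hts hn2s (Finset.mem_range.mp hk)
    refine ⟨fun e => if e ∈ M then 1 else 0, ⟨?_, ?_, ?_⟩, ?_⟩
    · intro e; dsimp only; split_ifs <;> norm_num
    · intro e he
      dsimp only
      rw [if_neg]
      intro heM
      exact he (SimpleGraph.mem_edgeFinset.mp (hMsub heM))
    · intro v
      dsimp only
      rw [Finset.sum_boole]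
      norm_cast
      apply Finset.card_le_one.mpr
      intro e1 h1 e2 h2
      simp only [Finset.mem_filter, SimpleGraph.mem_incidenceFinset] at h1 h2
      obtain ⟨hv1, hm1⟩ := h1
      obtain ⟨hv2, hm2⟩ := h2
      rw [hM, Finset.mem_image] at hm1 hm2
      obtain ⟨k1, hk1, rfl⟩ := hm1
      obtain ⟨k2, hk2, rfl⟩ := hm2
      rw [Finset.mem_range] at hk1 hk2
      have hv1' : v ∈ mEdge n s t hn k1 := hv1.2
      have hv2' : v ∈ mEdge n s t hn k2 := hv2.2
      rw [mem_mEdge hn hts hn2s hk1] at hv1'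
      rw [mem_mEdge hn hts hn2s hk2] at hv2'
      have : k1 = k2 := by
        apply mEdge_disj hts hk1 hk2
        rcases hv1' with h | h <;> rcases hv2' with h' | h' <;> omega
      rw [this]
    · dsimp only
      rw [Finset.sum_boole]
      have hfe : G.edgeFinset.filter (· ∈ M) = M := by
        apply Finset.Subset.antisymm
        · exact fun e he => (Finset.mem_filter.mp he).2
        · intro e he; exact Finset.mem_filter.mpr ⟨hMsub he, he⟩
      rw [hfe, hM, Finset.card_image_of_injOn, Finset.card_range]
      intro k1 hk1 k2 hk2 hEq
      rw [Finset.mem_coe, Finset.mem_range] at hk1 hk2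
      rw [mEdge_eq hn hts hn2s hk1, mEdge_eq hn hts hn2s hk2, Sym2.eq_iff] at hEq
      apply mEdge_disj hts hk1 hk2
      simp only [Fin.mk.injEq] at hEq
      tauto
  case upper =>
    intro f hf
    obtain ⟨hf01, hf0, hfv⟩ := hf
    set g : Fin n → ℝ := fun v => if (v:ℕ) < t then 1 else if (v:ℕ) < 2*s-t then 1/2 else 0
      with hg
    have hg0 : ∀ v, 0 ≤ g v := by
      intro v; rw [hg]; dsimp only; split_ifs <;> norm_num
    have hghalf : ∀ v : Fin n, (v:ℕ) < 2*s - t → 1/2 ≤ g v := by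
      intro v hv; rw [hg]; dsimp only; split_ifs <;> norm_num
    have hgone : ∀ v : Fin n, (v:ℕ) < t → g v = 1 := by
      intro v hv; rw [hg]; dsimp only; rw [if_pos hv]
    calc ∑ e ∈ G.edgeFinset, f e
        ≤ ∑ e ∈ G.edgeFinset, (∑ v ∈ Finset.univ.filter (· ∈ e), g v) * f e := by
          apply Finset.sum_le_sum
          intro e he
          apply le_mul_of_one_le_left (hf01 e).1
          rw [SimpleGraph.mem_edgeFinset] at he
          induction e with
          | h a b =>
            rw [SimpleGraph.mem_edgeSet] at he
            have hab : a ≠ b := he.ne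
            have hfl : Finset.univ.filter (· ∈ s(a, b)) = {a, b} := by
              ext v
              simp [Sym2.mem_iff]
            rw [hfl, Finset.sum_pair hab]
            rw [adj_iff] at he
            obtain ⟨-, hmid, -, -⟩ := he
            rcases hmid with ⟨ha2, hb2⟩ | ha1 | hb1
            · have := hghalf a ha2; have := hghalf b hb2; linarith
            · have := hgone a ha1; have := hg0 b; linarith
            · have := hgone b hb1; have := hg0 a; linarith
      _ = ∑ v : Fin n, g v * ∑ e ∈ G.incidenceFinset v, f e := by
          have step : ∀ v : Fin n, g v * ∑ e ∈ G.incidenceFinset v, f e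
              = ∑ e ∈ G.edgeFinset, (if v ∈ e then g v * f e else 0) := by
            intro v
            rw [SimpleGraph.incidenceFinset_eq_filter, Finset.mul_sum, Finset.sum_filter]
          rw [Finset.sum_congr rfl (fun v _ => step v), Finset.sum_comm]
          refine Finset.sum_congr rfl fun e _ => ?_
          rw [← Finset.sum_filter, ← Finset.sum_mul]
      _ ≤ ∑ v : Fin n, g v := by
          apply Finset.sum_le_sum
          intro v _
          exact mul_le_of_le_one_right (hg0 v) (hfv v)
      _ = s := sum_g hts hn2s
  case mindeg =>
    intro v
    rw [hncard]
    by_cases hv : (v : ℕ) < δ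
    · -- v adjacent to all j ≤ δ with j ≠ v
      have hsub : (({j : Fin n | (j : ℕ) < δ + 1} : Finset (Fin n)).erase v)
          ⊆ G.neighborFinset v := by
        intro j hj
        rw [Finset.mem_erase] at hj
        obtain ⟨hjv, hj'⟩ := hj
        simp only [Finset.mem_filter, Finset.mem_univ, true_and] at hj'
        rw [SimpleGraph.mem_neighborFinset, adj_iff]
        have hvj : (v : ℕ) ≠ (j : ℕ) := fun h => hjv (Fin.ext h.symm)
        refine ⟨hvj, Or.inr (Or.inl (by omega)), by omega, by omega⟩
      have hcard : (({j : Fin n | (j : ℕ) < δ + 1} : Finset (Fin n)).erase v).card = δ := by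
        have hmem : v ∈ ({j : Fin n | (j : ℕ) < δ + 1} : Finset (Fin n)) := by
          simp only [Finset.mem_filter, Finset.mem_univ, true_and]
          omega
        rw [Finset.card_erase_of_mem hmem, card_filter_fin_lt n (δ + 1) (by omega)]
        omega
      calc δ = _ := hcard.symm
        _ ≤ _ := Finset.card_le_card hsub
    · have hsub : ({j : Fin n | (j : ℕ) < δ} : Finset (Fin n)) ⊆ G.neighborFinset v := by
        intro j hj
        simp only [Finset.mem_filter, Finset.mem_univ, true_and] at hj
        rw [SimpleGraph.mem_neighborFinset, adj_iff]
        refine ⟨by omega, Or.inr (Or.inr (by omega)), by omega, by omega⟩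
      calc δ = _ := (card_filter_fin_lt n δ (by omega)).symm
        _ ≤ _ := Finset.card_le_card hsub
  case exactdeg =>
    rw [hncard]
    set u : Fin n := ⟨n - 1, by omega⟩ with hu
    have hu' : (u : ℕ) = n - 1 := rfl
    have : G.neighborFinset u = ({j : Fin n | (j : ℕ) < δ} : Finset (Fin n)) := by
      ext j
      rw [SimpleGraph.mem_neighborFinset, adj_iff]
      simp only [Finset.mem_filter, Finset.mem_univ, true_and, hu']
      omega
    rw [this, card_filter_fin_lt n δ (by omega)]

end Main
end

section
/- Let G be a graph of order n with fractional matching number s. Then there exists a set T ⊆ V(G) with |T| = t ≤ s and 2s − 2t ≠ 1 such that G is a subgraph of K_t ∨ (K_{2s−2t} + complement of K_{n+t−2s}) (after a suitable identification of vertices), where the vertices outside T not in the clique part form an independent set with neighbors only in T. -/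
/-- The graph `K_t ∨ (K_{m−2t} + complement of K_{n+t−m})` on `Fin n` (where `m = 2s`):
the first `t` vertices form `K_t` (the set `T`, joined to everything), the next `m−2t`
vertices form the clique `K_{m−2t}`, and the remaining `n+t−m` vertices form an
independent set whose neighbors all lie in `T`. -/
def FullExt (n m t : ℕ) : SimpleGraph (Fin n) where
  Adj i j := i ≠ j ∧
    (((i : ℕ) < m - t ∧ (j : ℕ) < m - t) ∨ ((i : ℕ) < t ∨ (j : ℕ) < t))
  symm := by
    constructor
    intro a b h
    obtain ⟨h1, h2⟩ := h
    exact ⟨h1.symm, by tauto⟩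
  loopless := by
    constructor
    intro a h
    exact h.1 rfl

section Helpers
open Finset

-- list helpers
lemma length_filter_toList {α : Type*} (s : Finset α) (p : α → Prop) [DecidablePred p] :
    (s.toList.filter (fun a => decide (p a))).length = (s.filter p).card := by
  have h1 : ((s.toList.filter (fun a => decide (p a)) : List α) : Multiset α)
      = Multiset.filter p (s.toList : Multiset α) := by
    rw [Multiset.filter_coe]
  have := congrArg Multiset.card h1
  rw [← Finset.card_val, Finset.filter_val]
  simpa [Finset.coe_toList, Finset.filter_val] using this

lemma indexOf_lt_filter_length {α : Type*} [DecidableEq α] (key : α → ℕ) (L : List α)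
    (hs : L.Pairwise (fun a b => key a ≤ key b)) (v : α) (hv : v ∈ L) (k : ℕ) (hk : key v ≤ k) :
    L.idxOf v < (L.filter (fun u => decide (key u ≤ k))).length := by
  set q := L.idxOf v with hq
  have hql : q < L.length := List.idxOf_lt_length_iff.mpr hv
  have hgv : L[q] = v := List.getElem_idxOf hql
  have htake : ∀ u ∈ L.take (q+1), key u ≤ k := by
    intro u hu
    rw [List.mem_take_iff_getElem] at hu
    obtain ⟨i, hi, hiu⟩ := hu
    have hi' : i < q + 1 := lt_of_lt_of_le hi (min_le_left _ _)
    rcases Nat.lt_succ_iff_lt_or_eq.mp hi' with h | h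
    · have := List.pairwise_iff_getElem.mp hs i q (by omega) hql h
      rw [hiu, hgv] at this
      omega
    · subst h; rw [hgv] at hiu; subst hiu; omega
  have hft : (L.take (q+1)).filter (fun u => decide (key u ≤ k)) = L.take (q+1) := by
    rw [List.filter_eq_self]
    intro u hu; simpa using htake u hu
  have hsub : ((L.take (q+1)).filter (fun u => decide (key u ≤ k))).Sublist
      (L.filter (fun u => decide (key u ≤ k))) := (List.take_sublist _ _).filter _
  have := hsub.length_le
  rw [hft, List.length_take] at this
  omega

lemma frac_weak_duality {V : Type*} [Fintype V] [DecidableEq V] (G : SimpleGraph V)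
    [DecidableRel G.Adj] (f : Sym2 V → ℝ) (hf : IsFracMatching G f)
    (g : V → ℝ) (hg0 : ∀ v, 0 ≤ g v) (hgc : ∀ a b, G.Adj a b → 1 ≤ g a + g b) :
    ∑ e ∈ G.edgeFinset, f e ≤ ∑ v, g v := by
  have step1 : ∑ e ∈ G.edgeFinset, f e ≤
      ∑ e ∈ G.edgeFinset, ∑ v : V, (if v ∈ e then f e * g v else 0) := by
    apply Finset.sum_le_sum
    intro e he
    have hS : (1:ℝ) ≤ ∑ v : V, (if v ∈ e then g v else 0) := by
      induction e with
      | h a b =>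
        have hadj : G.Adj a b := by rwa [SimpleGraph.mem_edgeFinset, SimpleGraph.mem_edgeSet] at he
        have hne : a ≠ b := hadj.ne
        have he2 : ∀ v : V, (if v ∈ s(a,b) then g v else 0)
            = (if v ∈ ({a, b} : Finset V) then g v else 0) := by
          intro v
          congr 1
          simp [Sym2.mem_iff]
        rw [Finset.sum_congr rfl (fun v _ => he2 v), Finset.sum_ite_mem,
          Finset.univ_inter, Finset.sum_pair hne]
        exact hgc a b hadj
    calc f e = f e * 1 := by ring
    _ ≤ f e * ∑ v : V, (if v ∈ e then g v else 0) :=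
        mul_le_mul_of_nonneg_left hS (hf.1 e).1
    _ = ∑ v : V, (if v ∈ e then f e * g v else 0) := by
        rw [Finset.mul_sum]; congr 1; ext v; split <;> ring
  have step2 : ∑ e ∈ G.edgeFinset, ∑ v : V, (if v ∈ e then f e * g v else 0)
      = ∑ v : V, (∑ e ∈ G.incidenceFinset v, f e) * g v := by
    rw [Finset.sum_comm]
    congr 1; ext v
    rw [G.incidenceFinset_eq_filter, Finset.sum_filter, Finset.sum_mul]
    congr 1; ext e; split <;> ring
  refine step1.trans ?_
  rw [step2]
  apply Finset.sum_le_sum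
  intro v _
  exact mul_le_of_le_one_left (hg0 v) (hf.2.2 v)

lemma exists_fracmatching_of_hall {V : Type*} [Fintype V] [DecidableEq V] (G : SimpleGraph V)
    [DecidableRel G.Adj] (d : ℕ)
    (hhall : ∀ A : Finset V, A.card ≤ ((A.biUnion fun v => G.neighborFinset v : Finset V)).card + d) :
    ∃ F : Sym2 V → ℝ, IsFracMatching G F ∧
      ((Fintype.card V : ℝ) - d) / 2 ≤ ∑ e ∈ G.edgeFinset, F e := by
  classical
  set r' : V → Finset (V ⊕ Fin d) :=
    fun v => (G.neighborFinset v).image Sum.inl ∪ (Finset.univ.image Sum.inr) with hr'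
  have hhall' : ∀ A : Finset V, A.card ≤ (A.biUnion r').card := by
    intro A
    rcases A.eq_empty_or_nonempty with h | ⟨a, ha⟩
    · simp [h]
    have hsub : ((A.biUnion fun v => G.neighborFinset v).image Sum.inl ∪ (Finset.univ.image Sum.inr))
        ⊆ A.biUnion r' := by
      intro x hx
      rcases Finset.mem_union.mp hx with hx | hx
      · obtain ⟨w, hw, rfl⟩ := Finset.mem_image.mp hx
        obtain ⟨b, hb, hwb⟩ := Finset.mem_biUnion.mp hw
        exact Finset.mem_biUnion.mpr ⟨b, hb, Finset.mem_union_left _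
          (Finset.mem_image_of_mem _ hwb)⟩
      · exact Finset.mem_biUnion.mpr ⟨a, ha, Finset.mem_union_right _ hx⟩
    have hdisj : Disjoint ((A.biUnion fun v => G.neighborFinset v).image (Sum.inl : V → V ⊕ Fin d))
        (Finset.univ.image Sum.inr) := by
      rw [Finset.disjoint_left]
      rintro x hx hx'
      obtain ⟨w, _, rfl⟩ := Finset.mem_image.mp hx
      obtain ⟨j, _, hj⟩ := Finset.mem_image.mp hx'
      exact Sum.inl_ne_inr hj.symm
    calc A.card ≤ ((A.biUnion fun v => G.neighborFinset v : Finset V)).card + d := hhall A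
    _ = (((A.biUnion fun v => G.neighborFinset v : Finset V)).image (Sum.inl : V → V ⊕ Fin d)).card
        + ((Finset.univ : Finset (Fin d)).image (Sum.inr : Fin d → V ⊕ Fin d)).card := by
        rw [Finset.card_image_of_injective _ Sum.inl_injective,
          Finset.card_image_of_injective _ Sum.inr_injective, Finset.card_univ,
          Fintype.card_fin]
    _ = _ := (Finset.card_union_of_disjoint hdisj).symm
    _ ≤ (A.biUnion r').card := Finset.card_le_card hsub
  obtain ⟨f, hfinj, hfmem⟩ := (Finset.all_card_le_biUnion_card_iff_exists_injective r').mp hhall'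
  have hK : ∀ v w, f v = Sum.inl w → G.Adj v w := by
    intro v w h
    have := hfmem v
    rw [h] at this
    rcases Finset.mem_union.mp this with h' | h'
    · obtain ⟨u, hu, huv⟩ := Finset.mem_image.mp h'
      rw [Sum.inl.injEq] at huv
      subst huv
      exact (SimpleGraph.mem_neighborFinset _ _ _).mp hu
    · obtain ⟨j, _, hj⟩ := Finset.mem_image.mp h'
      exact absurd hj (Sum.inr_ne_inl)
  set g0 : V → Option (Sym2 V) :=
    fun v => Sum.elim (fun w => some s(v, w)) (fun _ => none) (f v) with hg0def
  have hg0 : ∀ v e, g0 v = some e → ∃ w, f v = Sum.inl w ∧ e = s(v, w) := by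
    intro v e h
    rcases hfv : f v with w | j
    · rw [hg0def] at h
      simp only [hfv, Sum.elim_inl, Option.some.injEq] at h
      exact ⟨w, rfl, h.symm⟩
    · rw [hg0def] at h
      simp [hfv] at h
  set A : Sym2 V → Finset V := fun e => Finset.univ.filter (fun v => g0 v = some e) with hA
  have hmemA : ∀ v e, v ∈ A e ↔ g0 v = some e := by
    intro v e; rw [hA]; simp
  have hAdisj : ∀ (S : Finset (Sym2 V)), ∀ e ∈ S, ∀ e' ∈ S, e ≠ e' → Disjoint (A e) (A e') := by
    intro S e _ e' _ hne
    rw [Finset.disjoint_left]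
    intro v hv hv'
    rw [hmemA] at hv hv'
    rw [hv] at hv'
    exact hne (Option.some.injEq _ _ ▸ (by simpa using hv'))
  set F : Sym2 V → ℝ := fun e => ((A e).card : ℝ) / 2 with hF
  have hedge : ∀ v e, g0 v = some e → e ∈ G.edgeFinset ∧ v ∈ e := by
    intro v e h
    obtain ⟨w, hw, rfl⟩ := hg0 v e h
    exact ⟨SimpleGraph.mem_edgeFinset.mpr ((SimpleGraph.mem_edgeSet G).mpr (hK v w hw)),
      Sym2.mem_mk_left _ _⟩
  have hcard2 : ∀ e, (A e).card ≤ 2 := by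
    intro e
    induction e with
    | h a b =>
      have hsub : A s(a, b) ⊆ {a, b} := by
        intro v hv
        rw [hmemA] at hv
        obtain ⟨w, _, he⟩ := hg0 v _ hv
        have : v ∈ s(a, b) := he ▸ Sym2.mem_mk_left v w
        rcases Sym2.mem_iff.mp this with h | h <;> simp [h]
      calc (A s(a,b)).card ≤ ({a, b} : Finset V).card := Finset.card_le_card hsub
      _ ≤ 2 := Finset.card_insert_le _ _ |>.trans (by simp)
  refine ⟨F, ⟨?_, ?_, ?_⟩, ?_⟩
  · intro e
    constructor
    · positivity
    · rw [hF]
      have := hcard2 e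
      have : ((A e).card : ℝ) ≤ 2 := by exact_mod_cast this
      linarith
  · intro e he
    rw [hF]
    have : A e = ∅ := by
      rw [Finset.eq_empty_iff_forall_notMem]
      intro v hv
      rw [hmemA] at hv
      exact he (SimpleGraph.mem_edgeFinset.mp (hedge v e hv).1)
    simp [this]
  · intro v
    have hsum : ∑ e ∈ G.incidenceFinset v, ((A e).card : ℝ)
        = (((G.incidenceFinset v).biUnion A).card : ℝ) := by
      rw [Finset.card_biUnion (hAdisj _)]
      push_cast
      rfl
    have hsub : (G.incidenceFinset v).biUnion A
        ⊆ insert v (Finset.univ.filter (fun u => f u = Sum.inl v)) := by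
      intro u hu
      obtain ⟨e, he, hu⟩ := Finset.mem_biUnion.mp hu
      have hve : v ∈ e := by
        rw [SimpleGraph.mem_incidenceFinset] at he
        exact he.2
      rw [hmemA] at hu
      obtain ⟨w, hw, rfl⟩ := hg0 u _ hu
      rcases Sym2.mem_iff.mp hve with h | h
      · exact h ▸ Finset.mem_insert_self _ _
      · exact Finset.mem_insert_of_mem (Finset.mem_filter.mpr ⟨Finset.mem_univ _, h ▸ hw⟩)
    have hc1 : (Finset.univ.filter (fun u => f u = Sum.inl v)).card ≤ 1 := by
      apply Finset.card_le_one.mpr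
      intro u1 h1 u2 h2
      rw [Finset.mem_filter] at h1 h2
      exact hfinj (h1.2.trans h2.2.symm)
    have hcb : ((G.incidenceFinset v).biUnion A).card ≤ 2 := by
      calc _ ≤ (insert v (Finset.univ.filter (fun u => f u = Sum.inl v))).card :=
            Finset.card_le_card hsub
      _ ≤ _ + 1 := Finset.card_insert_le _ _
      _ ≤ 2 := by omega
    have : ∑ e ∈ G.incidenceFinset v, F e
        = (((G.incidenceFinset v).biUnion A).card : ℝ) / 2 := by
      rw [hF, ← hsum, Finset.sum_div]
    rw [this]
    have : (((G.incidenceFinset v).biUnion A).card : ℝ) ≤ 2 := by exact_mod_cast hcb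
    linarith
  · -- total value
    have hsum : ∑ e ∈ G.edgeFinset, F e = ((G.edgeFinset.biUnion A).card : ℝ) / 2 := by
      rw [hF, ← Finset.sum_div, Finset.card_biUnion (hAdisj _)]
      push_cast
      rfl
    have hsub : Finset.univ.filter (fun v => (f v).isLeft) ⊆ G.edgeFinset.biUnion A := by
      intro v hv
      rw [Finset.mem_filter] at hv
      obtain ⟨w, hw⟩ := Sum.isLeft_iff.mp hv.2
      have hg : g0 v = some s(v, w) := by rw [hg0def]; simp [hw]
      exact Finset.mem_biUnion.mpr ⟨s(v, w), (hedge v _ hg).1, (hmemA v _).mpr hg⟩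
    have hun : (Finset.univ.filter (fun v => ¬ (f v).isLeft)).card ≤ d := by
      have hinj : ((Finset.univ.filter (fun v => ¬ (f v).isLeft)).image f).card
          = (Finset.univ.filter (fun v => ¬ (f v).isLeft)).card :=
        Finset.card_image_of_injective _ hfinj
      have hsub2 : (Finset.univ.filter (fun v => ¬ (f v).isLeft)).image f
          ⊆ (Finset.univ : Finset (Fin d)).image Sum.inr := by
        intro x hx
        obtain ⟨v, hv, rfl⟩ := Finset.mem_image.mp hx
        rw [Finset.mem_filter] at hv
        rcases hfv : f v with w | j
        · exact absurd (by simp [hfv]) hv.2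
        · exact Finset.mem_image_of_mem Sum.inr (Finset.mem_univ j)
      calc _ = _ := hinj.symm
      _ ≤ ((Finset.univ : Finset (Fin d)).image Sum.inr).card := Finset.card_le_card hsub2
      _ ≤ (Finset.univ : Finset (Fin d)).card := Finset.card_image_le
      _ = d := by simp
    have hpart : (Finset.univ.filter (fun v => (f v).isLeft)).card
        + (Finset.univ.filter (fun v => ¬ (f v).isLeft)).card = Fintype.card V := by
      rw [Finset.card_filter_add_card_filter_not]
      rfl
    have hge : Fintype.card V ≤ (G.edgeFinset.biUnion A).card + d := by
      have := Finset.card_le_card hsub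
      omega
    rw [hsum]
    have : (Fintype.card V : ℝ) ≤ ((G.edgeFinset.biUnion A).card : ℝ) + d := by
      exact_mod_cast hge
    linarith

end Helpers

/-- a graph of order `n` with fractional matching number `s` is (up to a
relabelling of vertices) a subgraph of `K_t ∨ (K_{2s−2t} + complement of K_{n+t−2s})`
for some `t ≤ s` with `2s − 2t ≠ 1`. -/
theorem subgraph_of_extremal {V : Type*} [Fintype V] [DecidableEq V] (G : SimpleGraph V)
    [DecidableRel G.Adj] (n : ℕ) (hn : Fintype.card V = n) (s : ℝ)
    (hs : IsFracMatchingNumber G s) :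
    ∃ (m t : ℕ), (m : ℝ) = 2 * s ∧ (t : ℝ) ≤ s ∧ m - 2 * t ≠ 1 ∧
      ∃ φ : V ≃ Fin n, ∀ a b : V, G.Adj a b → (FullExt n m t).Adj (φ a) (φ b) := by
  classical
  obtain ⟨S₀, -, hS₀max⟩ := Finset.exists_max_image (Finset.univ : Finset V).powerset
    (fun S => (S.card : ℤ) - (((S.biUnion fun v => G.neighborFinset v) : Finset V).card : ℤ))
    ⟨∅, Finset.empty_mem_powerset _⟩
  set NS : Finset V := S₀.biUnion (fun v => G.neighborFinset v) with hNS
  have hmax : ∀ S : Finset V,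
      (S.card : ℤ) - (((S.biUnion fun v => G.neighborFinset v) : Finset V).card : ℤ)
      ≤ (S₀.card : ℤ) - (NS.card : ℤ) :=
    fun S => hS₀max S (Finset.mem_powerset.mpr (Finset.subset_univ S))
  have h0 : (0:ℤ) ≤ (S₀.card : ℤ) - NS.card := by simpa using hmax ∅
  have hBA : NS.card ≤ S₀.card := by omega
  set d : ℕ := S₀.card - NS.card with hd
  have hhall : ∀ A : Finset V,
      A.card ≤ ((A.biUnion fun v => G.neighborFinset v : Finset V)).card + d := by
    intro A
    have := hmax A
    omega
  obtain ⟨F, hF, hFval⟩ := exists_fracmatching_of_hall G d hhall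
  rw [hn] at hFval
  have hsge : ((n:ℝ) - d)/2 ≤ s := hFval.trans (hs.2 F hF)
  set g : V → ℝ := fun v => ((if v ∈ S₀ then (0:ℝ) else 1) + (if v ∈ NS then (1:ℝ) else 0))/2
    with hgdef
  have hgv : ∀ v : V, g v = ((if v ∈ S₀ then (0:ℝ) else 1) + (if v ∈ NS then (1:ℝ) else 0))/2 :=
    fun v => rfl
  have hg0 : ∀ v, 0 ≤ g v := by
    intro v
    rw [hgv v]
    split_ifs <;> norm_num
  have hmemNS : ∀ u v, u ∈ S₀ → G.Adj u v → v ∈ NS := by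
    intro u v hu huv
    exact Finset.mem_biUnion.mpr ⟨u, hu, (SimpleGraph.mem_neighborFinset _ _ _).mpr huv⟩
  have hgc : ∀ a b, G.Adj a b → 1 ≤ g a + g b := by
    intro a b hab
    rw [hgv a, hgv b]
    by_cases ha : a ∈ S₀ <;> by_cases hb : b ∈ S₀
    · have h1 : a ∈ NS := hmemNS b a hb hab.symm
      have h2 : b ∈ NS := hmemNS a b ha hab
      rw [if_pos ha, if_pos hb, if_pos h1, if_pos h2]
      norm_num
    · have h2 : b ∈ NS := hmemNS a b ha hab
      rw [if_pos ha, if_neg hb, if_pos h2]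
      split_ifs <;> norm_num
    · have h1 : a ∈ NS := hmemNS b a hb hab.symm
      rw [if_neg ha, if_pos hb, if_pos h1]
      split_ifs <;> norm_num
    · rw [if_neg ha, if_neg hb]
      split_ifs <;> norm_num
  have hgsum : ∑ v, g v = ((n:ℝ) - S₀.card + NS.card)/2 := by
    rw [Finset.sum_congr rfl (fun v _ => hgv v), ← Finset.sum_div, Finset.sum_add_distrib]
    have e0 : ∀ v : V, (if v ∈ S₀ then (0:ℝ) else 1) = 1 - (if v ∈ S₀ then (1:ℝ) else 0) := by
      intro v; split_ifs <;> norm_num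
    rw [Finset.sum_congr rfl (fun v _ => e0 v), Finset.sum_sub_distrib, Finset.sum_const,
      Finset.card_univ, hn, Finset.sum_boole, Finset.sum_boole]
    have eS : Finset.univ.filter (fun v => v ∈ S₀) = S₀ := by ext v; simp
    have eN : Finset.univ.filter (fun v => v ∈ NS) = NS := by ext v; simp
    rw [eS, eN]
    simp only [nsmul_eq_mul, mul_one]
  obtain ⟨fstar, hfstar, hfsum⟩ := hs.1
  have hsle : s ≤ ((n:ℝ) - S₀.card + NS.card)/2 := by
    rw [← hfsum, ← hgsum]
    exact frac_weak_duality G fstar hfstar g hg0 hgc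
  have hAn : S₀.card ≤ n := by
    rw [← hn, ← Finset.card_univ]
    exact Finset.card_le_card (Finset.subset_univ _)
  have hdn : d ≤ n := by omega
  set m : ℕ := n - d with hmdef
  have hdR : (d:ℝ) = (S₀.card:ℝ) - NS.card := by
    rw [hd, Nat.cast_sub hBA]
  have hmR : (m:ℝ) = (n:ℝ) - d := by
    rw [hmdef, Nat.cast_sub hdn]
  have hseq : s = (m:ℝ)/2 := by
    rw [hmR, hdR]
    rw [hdR] at hsge
    linarith
  set T : Finset V := NS \ S₀ with hT
  set I : Finset V := S₀ \ NS with hI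
  set t : ℕ := T.card with ht
  have hX : T.card + (NS ∩ S₀).card = NS.card := Finset.card_sdiff_add_card_inter NS S₀
  have hX' : I.card + (S₀ ∩ NS).card = S₀.card := Finset.card_sdiff_add_card_inter S₀ NS
  have hXX : (NS ∩ S₀).card = (S₀ ∩ NS).card := by rw [Finset.inter_comm]
  have hdisjTI : Disjoint T I := by
    rw [Finset.disjoint_left]
    intro v hv hv'
    exact (Finset.mem_sdiff.mp hv).2 (Finset.mem_sdiff.mp hv').1
  have hTIn : T.card + I.card ≤ n := by
    rw [← Finset.card_union_of_disjoint hdisjTI, ← hn, ← Finset.card_univ]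
    exact Finset.card_le_card (Finset.subset_univ _)
  have hgT : ∀ v ∈ T, g v = 1 := by
    intro v hv
    obtain ⟨h1, h2⟩ := Finset.mem_sdiff.mp hv
    rw [hgv v, if_neg h2, if_pos h1]
    norm_num
  have hgI : ∀ v ∈ I, g v = 0 := by
    intro v hv
    obtain ⟨h1, h2⟩ := Finset.mem_sdiff.mp hv
    rw [hgv v, if_pos h1, if_neg h2]
    norm_num
  have hgle : ∀ v, v ∉ T → g v ≤ 1/2 := by
    intro v hv
    rw [hgv v]
    by_cases h1 : v ∈ S₀
    · rw [if_pos h1]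
      split_ifs <;> norm_num
    · have h2 : v ∉ NS := fun h => hv (Finset.mem_sdiff.mpr ⟨h, h1⟩)
      rw [if_neg h1, if_neg h2]
      norm_num
  have hgmid : ∀ v, v ∉ T → v ∉ I → g v = 1/2 := by
    intro v hv hv'
    rw [hgv v]
    by_cases h1 : v ∈ S₀
    · have h2 : v ∈ NS := by
        by_contra h2
        exact hv' (Finset.mem_sdiff.mpr ⟨h1, h2⟩)
      rw [if_pos h1, if_pos h2]
      norm_num
    · have h2 : v ∉ NS := fun h => hv (Finset.mem_sdiff.mpr ⟨h, h1⟩)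
      rw [if_neg h1, if_neg h2]
      norm_num
  have hadjI : ∀ a b, G.Adj a b → a ∈ I → b ∈ T := by
    intro a b hab ha
    by_contra hb
    have h1 := hgc a b hab
    have h2 := hgI a ha
    have h3 := hgle b hb
    linarith
  have h2t : 2 * t ≤ m := by omega
  have hgs : ∑ v, g v = s := by
    rw [hgsum, hseq, hmR, hdR]
    ring
  refine ⟨m, t, ?_, ?_, ?_, ?_⟩
  · rw [hseq]; ring
  · rw [hseq]
    have : ((2*t:ℕ):ℝ) ≤ (m:ℝ) := Nat.cast_le.mpr h2t
    push_cast at this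
    linarith
  · -- m - 2*t ≠ 1
    intro h1
    have hmidcard : (Finset.univ.filter (fun v => v ∉ T ∧ v ∉ I)).card = n - t - I.card := by
      have e1 : Finset.univ.filter (fun v => v ∉ T ∧ v ∉ I) = Finset.univ \ (T ∪ I) := by
        ext v
        simp [not_or]
      rw [e1, Finset.card_sdiff_of_subset (Finset.subset_univ _), Finset.card_univ, hn,
        Finset.card_union_of_disjoint hdisjTI]
      omega
    have hone : (Finset.univ.filter (fun v => v ∉ T ∧ v ∉ I)).card = 1 := by omega
    obtain ⟨v0, hv0⟩ := Finset.card_eq_one.mp hone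
    have hv0mem : v0 ∉ T ∧ v0 ∉ I := by
      have : v0 ∈ Finset.univ.filter (fun v => v ∉ T ∧ v ∉ I) :=
        hv0 ▸ Finset.mem_singleton_self v0
      exact (Finset.mem_filter.mp this).2
    have huniq : ∀ u, u ∉ T → u ∉ I → u = v0 := by
      intro u hu1 hu2
      have : u ∈ ({v0} : Finset V) :=
        hv0 ▸ Finset.mem_filter.mpr ⟨Finset.mem_univ _, hu1, hu2⟩
      exact Finset.mem_singleton.mp this
    set g' : V → ℝ := Function.update g v0 0 with hg'
    have hg'0 : ∀ v, 0 ≤ g' v := by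
      intro v
      rw [hg']
      by_cases h : v = v0
      · subst h; simp
      · rw [Function.update_of_ne h]
        exact hg0 v
    have hkey : ∀ a b, G.Adj a b → a = v0 → 1 ≤ g' a + g' b := by
      intro a b hab ha
      subst ha
      have hbv : b ≠ a := fun h => G.loopless.irrefl a (h ▸ hab)
      by_cases hbT : b ∈ T
      · rw [hg', Function.update_self, Function.update_of_ne hbv, hgT b hbT]
        norm_num
      · by_cases hbI : b ∈ I
        · have hc1 := hgc _ _ hab
          have hc2 := hgmid _ hv0mem.1 hv0mem.2
          have hc3 := hgI b hbI
          rw [hc2, hc3] at hc1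
          norm_num at hc1
        · exact absurd (huniq b hbT hbI) hbv
    have hg'c : ∀ a b, G.Adj a b → 1 ≤ g' a + g' b := by
      intro a b hab
      by_cases ha : a = v0
      · exact hkey a b hab ha
      · by_cases hb : b = v0
        · rw [add_comm]
          exact hkey b a hab.symm hb
        · rw [hg', Function.update_of_ne ha, Function.update_of_ne hb]
          exact hgc a b hab
    have hg'sum : ∑ v, g' v = s - 1/2 := by
      rw [hg', Finset.sum_update_of_mem (Finset.mem_univ v0)]
      have e3 : (Finset.univ \ {v0} : Finset V) = Finset.univ.erase v0 :=
        Finset.sdiff_singleton_eq_erase v0 Finset.univ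
      rw [e3]
      have e2 : g v0 + ∑ v ∈ Finset.univ.erase v0, g v = ∑ v, g v :=
        Finset.add_sum_erase _ g (Finset.mem_univ v0)
      have e4 := hgmid v0 hv0mem.1 hv0mem.2
      rw [hgs] at e2
      rw [e4] at e2
      linarith
    have := frac_weak_duality G fstar hfstar g' hg'0 hg'c
    rw [hfsum, hg'sum] at this
    linarith
  · -- the embedding
    set key : V → ℕ := fun v => if v ∈ T then 0 else if v ∈ I then 2 else 1 with hkeydef
    have hkeyv : ∀ v, key v = if v ∈ T then 0 else if v ∈ I then 2 else 1 := fun v => rfl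
    letI : IsTotal V (fun a b => key a ≤ key b) := ⟨fun a b => le_total _ _⟩
    letI : IsTrans V (fun a b => key a ≤ key b) := ⟨fun a b c hab hbc => le_trans hab hbc⟩
    set L : List V := List.insertionSort (fun a b => key a ≤ key b) Finset.univ.toList with hL
    have hperm : L.Perm Finset.univ.toList := List.perm_insertionSort _ _
    have hsorted : L.Pairwise (fun a b => key a ≤ key b) := List.pairwise_insertionSort _ _
    have hmemL : ∀ v : V, v ∈ L := fun v => hperm.mem_iff.mpr (by simp)
    have hlenL : L.length = n := by
      rw [hperm.length_eq, Finset.length_toList, Finset.card_univ, hn]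
    have hbound : ∀ (v : V) (k : ℕ), key v ≤ k →
        L.idxOf v < (Finset.univ.filter (fun u => key u ≤ k)).card := by
      intro v k hk
      have h1 := indexOf_lt_filter_length key L hsorted v (hmemL v) k hk
      rwa [(hperm.filter (fun u => decide (key u ≤ k))).length_eq,
        length_filter_toList Finset.univ (fun u => key u ≤ k)] at h1
    have hidx : ∀ v : V, L.idxOf v < n := by
      intro v
      have := List.idxOf_lt_length_iff.mpr (hmemL v)
      omega
    set φ0 : V → Fin n := fun v => ⟨L.idxOf v, hidx v⟩ with hφ0
    have hinj : Function.Injective φ0 := by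
      intro u v h
      have h2 : L.idxOf u = L.idxOf v := congrArg Fin.val h
      exact (List.idxOf_inj (hmemL u)).mp h2
    have hbij : Function.Bijective φ0 :=
      (Fintype.bijective_iff_injective_and_card φ0).mpr ⟨hinj, by simp [hn]⟩
    refine ⟨Equiv.ofBijective φ0 hbij, ?_⟩
    have hφval : ∀ v : V, ((Equiv.ofBijective φ0 hbij) v : ℕ) = L.idxOf v := fun v => rfl
    have hfT : Finset.univ.filter (fun u => key u ≤ 0) = T := by
      ext u
      simp only [Finset.mem_filter, Finset.mem_univ, true_and]
      rw [hkeyv u]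
      constructor
      · intro h
        by_contra hu
        rw [if_neg hu] at h
        split_ifs at h <;> omega
      · intro h
        rw [if_pos h]
    have hfTI : Finset.univ.filter (fun u => key u ≤ 1) = Finset.univ \ I := by
      ext u
      simp only [Finset.mem_filter, Finset.mem_univ, true_and, Finset.mem_sdiff]
      rw [hkeyv u]
      constructor
      · intro h hu
        have hut : u ∉ T := fun h' => (Finset.disjoint_left.mp hdisjTI h') hu
        rw [if_neg hut, if_pos hu] at h
        omega
      · intro hu
        split_ifs <;> omega
    have hcardTI : (Finset.univ \ I).card = m - t := by
      rw [Finset.card_sdiff_of_subset (Finset.subset_univ _), Finset.card_univ, hn]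
      omega
    have hb1 : ∀ v ∈ T, ((Equiv.ofBijective φ0 hbij) v : ℕ) < t := by
      intro v hv
      have hkv : key v ≤ 0 := by rw [hkeyv v, if_pos hv]
      have := hbound v 0 hkv
      rw [hfT] at this
      rw [hφval v]
      exact this
    have hb2 : ∀ v, v ∉ I → ((Equiv.ofBijective φ0 hbij) v : ℕ) < m - t := by
      intro v hv
      have hkv : key v ≤ 1 := by
        rw [hkeyv v]
        split_ifs <;> omega
      have := hbound v 1 hkv
      rw [hfTI, hcardTI] at this
      rw [hφval v]
      exact this
    intro a b hab
    refine ⟨?_, ?_⟩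
    · intro h
      exact hab.ne ((Equiv.ofBijective φ0 hbij).injective h)
    · by_cases haT : a ∈ T
      · exact Or.inr (Or.inl (hb1 a haT))
      · by_cases hbT : b ∈ T
        · exact Or.inr (Or.inr (hb1 b hbT))
        · have haI : a ∉ I := fun h => hbT (hadjI a b hab h)
          have hbI : b ∉ I := fun h => haT (hadjI b a hab.symm h)
          exact Or.inl ⟨hb2 a haI, hb2 b hbI⟩
end

section
/- Let n, 2s, δ, ℓ be positive integers with n ≥ 2s+1 ≥ 5, ℓ ≥ 2, and suppose 2s is even. If G is a graph of order n with fractional matching number s and minimum degree δ, then the number of copies of K_ℓ in G is at most max(g_ℓ(n,s,δ), g_ℓ(n,s,s)), where g_ℓ(n,s,t) = C(2s−t, ℓ) + C(t, ℓ−1)·(n + t − 2s − 1) + C(δ, ℓ−1). -/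
open Finset

lemma L1 (a k t r : ℕ) (h : t ≤ k) :
    a * Nat.choose t (r+1) + Nat.choose k (r+2) ≤ Nat.choose (k+a) (r+2) := by
  induction a with
  | zero => simp
  | succ a ih =>
      have h1 : Nat.choose t (r+1) ≤ Nat.choose (k+a) (r+1) :=
        Nat.choose_le_choose _ (by omega)
      have h2 : Nat.choose (k+(a+1)) (r+2) = Nat.choose (k+a) (r+1) + Nat.choose (k+a) (r+2) :=
        Nat.choose_succ_succ' (k+a) (r+1)
      calc (a+1) * Nat.choose t (r+1) + Nat.choose k (r+2)
          = Nat.choose t (r+1) + (a * Nat.choose t (r+1) + Nat.choose k (r+2)) := by ring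
        _ ≤ Nat.choose (k+a) (r+1) + Nat.choose (k+a) (r+2) := add_le_add h1 ih
        _ = _ := h2.symm

lemma AR1 {c s t k m r : ℕ} (htk : t ≤ k) (h2s : k + t ≤ 2*s) (hm : m + k = 2*s+1+c) :
    Nat.choose k (r+2) + (m-1) * Nat.choose t (r+1) ≤
      Nat.choose (2*s - t) (r+2) + Nat.choose t (r+1) * (c + t) := by
  obtain ⟨a, ha1, ha2⟩ : ∃ a, 2*s - t = k + a ∧ m - 1 = t + a + c := ⟨2*s - t - k, by omega, by omega⟩
  rw [ha1, ha2]
  calc Nat.choose k (r+2) + (t+a+c) * Nat.choose t (r+1)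
      = (a * Nat.choose t (r+1) + Nat.choose k (r+2)) + Nat.choose t (r+1) * (c+t) := by ring
    _ ≤ Nat.choose (k+a) (r+2) + Nat.choose t (r+1) * (c+t) :=
        Nat.add_le_add_right (L1 a k t r htk) _

lemma AR2 {c s t1 k1 m r : ℕ} (htk : t1 ≤ k1) (h2s : (k1+1) + (t1+1) ≤ 2*s)
    (hm : m + (k1+1) = 2*s+1+c) :
    Nat.choose k1 (r+2) + m * Nat.choose t1 (r+1) ≤
      Nat.choose (2*s - (t1+1)) (r+2) + Nat.choose (t1+1) (r+1) * (c + (t1+1)) := by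
  obtain ⟨a, ha1, ha2⟩ : ∃ a, 2*s - (t1+1) = k1+1+a ∧ m = (a+1) + (c+(t1+1)) :=
    ⟨2*s - (t1+1) - (k1+1), by omega, by omega⟩
  rw [ha1, ha2]
  have hL := L1 (a+1) k1 t1 r htk
  have hmono : Nat.choose t1 (r+1) ≤ Nat.choose (t1+1) (r+1) := Nat.choose_le_choose _ (by omega)
  calc Nat.choose k1 (r+2) + ((a+1) + (c+(t1+1))) * Nat.choose t1 (r+1)
      = ((a+1) * Nat.choose t1 (r+1) + Nat.choose k1 (r+2)) + (c+(t1+1)) * Nat.choose t1 (r+1) := by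
        ring
    _ ≤ Nat.choose (k1+(a+1)) (r+2) + (c+(t1+1)) * Nat.choose (t1+1) (r+1) :=
        add_le_add hL (Nat.mul_le_mul_left _ hmono)
    _ = Nat.choose (k1+1+a) (r+2) + Nat.choose (t1+1) (r+1) * (c+(t1+1)) := by ring_nf
    _ = _ := by rfl

lemma AR3 {c s t k1 m r : ℕ} (htk : t ≤ k1) (h2s : (k1+1) + t ≤ 2*s)
    (hm : m + (k1+1) = 2*s+1+c) :
    Nat.choose k1 (r+2) + m * Nat.choose t (r+1) ≤
      Nat.choose (2*s - t) (r+2) + Nat.choose t (r+1) * (c + t) := by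
  obtain ⟨a, ha1, ha2⟩ : ∃ a, 2*s - t = k1+1+a ∧ m = (a+1) + (c+t) :=
    ⟨2*s - t - (k1+1), by omega, by omega⟩
  rw [ha1, ha2]
  have hL := L1 (a+1) k1 t r htk
  calc Nat.choose k1 (r+2) + ((a+1) + (c+t)) * Nat.choose t (r+1)
      = ((a+1) * Nat.choose t (r+1) + Nat.choose k1 (r+2)) + Nat.choose t (r+1) * (c+t) := by ring
    _ ≤ Nat.choose (k1+(a+1)) (r+2) + Nat.choose t (r+1) * (c+t) := Nat.add_le_add_right hL _
    _ = _ := by ring_nf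

lemma conv_max (h : ℕ → ℕ) (a b : ℕ)
    (hc : ∀ x, a ≤ x → x + 2 ≤ b → 2 * h (x+1) ≤ h x + h (x+2)) :
    ∀ t, a ≤ t → t ≤ b → h t ≤ max (h a) (h b) := by
  intro t hat htb
  by_cases H : ∀ x, a ≤ x → x + 1 ≤ t → h (x+1) ≤ h x
  · have key : ∀ u, a ≤ u → (u ≤ t → h u ≤ h a) := by
      intro u hu
      induction u, hu using Nat.le_induction with
      | base => intro _; exact le_refl _
      | succ u hu ih => intro hut; exact le_trans (H u hu hut) (ih (by omega))
    exact le_max_of_le_left (key t hat le_rfl)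
  · push_neg at H
    obtain ⟨x, hax, hxt, hlt⟩ := H
    have step : ∀ y, x ≤ y → (y + 1 ≤ b → h y ≤ h (y+1)) := by
      intro y hy
      induction y, hy using Nat.le_induction with
      | base => intro _; exact le_of_lt hlt
      | succ y hy ih =>
          intro hyb
          have h1 : h y ≤ h (y+1) := ih (by omega)
          have h2 := hc y (le_trans hax hy) (by omega)
          show h (y+1) ≤ h (y+2)
          omega
    have climb : ∀ j u, x ≤ u → u + j = b → h u ≤ h b := by
      intro j
      induction j with
      | zero =>
          intro u _ h0
          have hub : u = b := by omega
          subst hub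
          exact le_rfl
      | succ j ih =>
          intro u hu hj
          exact le_trans (step u hu (by omega)) (ih (u+1) (by omega) (by omega))
    exact le_max_of_le_right (climb (b - t) t (by omega) (by omega))

lemma conv_h (c s r : ℕ) (x : ℕ) (hx2 : x + 2 ≤ s) :
    2 * (Nat.choose (2*s - (x+1)) (r+2) + Nat.choose (x+1) (r+1) * (c+(x+1))) ≤
      (Nat.choose (2*s - x) (r+2) + Nat.choose x (r+1) * (c+x)) +
      (Nat.choose (2*s - (x+2)) (r+2) + Nat.choose (x+2) (r+1) * (c+(x+2))) := by
  obtain ⟨y, hy1, hy2, hy3⟩ : ∃ y, 2*s - x = y + 2 ∧ 2*s - (x+1) = y+1 ∧ 2*s-(x+2) = y :=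
    ⟨2*s - (x+2), by omega, by omega, by omega⟩
  rw [hy1, hy2, hy3]
  have p1 := Nat.choose_succ_succ' y (r+1)
  have p2 := Nat.choose_succ_succ' (y+1) (r+1)
  have p3 := Nat.choose_succ_succ' x r
  have p4 := Nat.choose_succ_succ' (x+1) r
  have q1 : Nat.choose y (r+1) ≤ Nat.choose (y+1) (r+1) := Nat.choose_le_choose _ (by omega)
  have q2 : Nat.choose x r * (c+x+2) ≤ Nat.choose (x+1) r * (c+x+2) :=
    Nat.mul_le_mul_right _ (Nat.choose_le_choose _ (by omega))
  nlinarith [p1, p2, p3, p4, q1, q2]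

lemma exists_indep_set {V : Type*} [Fintype V] [DecidableEq V] (G : SimpleGraph V)
    [DecidableRel G.Adj] (n s : ℕ)
    (hn : Fintype.card V = n) (hn2s : 2 * s + 1 ≤ n)
    (hub : ∀ f, IsFracMatching G f → ∑ e ∈ G.edgeFinset, f e ≤ (s : ℝ)) :
    ∃ I : Finset V, (∀ x ∈ I, ∀ y ∈ I, ¬ G.Adj x y) ∧
      n + (I.biUnion (fun u => G.neighborFinset u)).card ≤ 2 * s + I.card := by
  classical
  by_contra hcon
  push_neg at hcon
  set NB : Finset V → Finset V := fun A => A.biUnion (fun u => G.neighborFinset u) with hNB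
  -- Step 1: the deficiency bound holds for all finsets, not just independent ones
  have hA : ∀ A : Finset V, 2 * s + A.card < n + (NB A).card := by
    intro A
    set I : Finset V := A \ NB A with hIdef
    have hind : ∀ x ∈ I, ∀ y ∈ I, ¬ G.Adj x y := by
      intro x hx y hy hadj
      have hxA : x ∈ A := (mem_sdiff.1 hx).1
      have : y ∈ NB A := mem_biUnion.2 ⟨x, hxA, by simpa using hadj⟩
      exact (mem_sdiff.1 hy).2 this
    have hsub : NB I ⊆ NB A \ A := by
      intro z hz
      obtain ⟨x, hxI, hzx⟩ := mem_biUnion.1 hz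
      have hadj : G.Adj x z := by simpa using hzx
      refine mem_sdiff.2 ⟨mem_biUnion.2 ⟨x, (mem_sdiff.1 hxI).1, by simpa using hadj⟩, ?_⟩
      intro hzA
      exact (mem_sdiff.1 hxI).2 (mem_biUnion.2 ⟨z, hzA, by simpa using hadj.symm⟩)
    have h1 : I.card + (A ∩ NB A).card = A.card := card_sdiff_add_card_inter A (NB A)
    have h2 : (NB I).card ≤ (NB A \ A).card := card_le_card hsub
    have h3 : (NB A \ A).card + (NB A ∩ A).card = (NB A).card :=
      card_sdiff_add_card_inter (NB A) A
    have h4 : (NB A ∩ A).card = (A ∩ NB A).card := by rw [inter_comm]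
    have h5 : 2 * s + I.card < n + (NB I).card := hcon I hind
    omega
  -- Step 2: Hall's theorem on V ⊕ Fin d
  set d : ℕ := n - (2 * s + 1) with hd
  have hnd : n = 2 * s + 1 + d := by omega
  set inlE : V ↪ V ⊕ Fin d := ⟨Sum.inl, Sum.inl_injective⟩ with hinlE
  set inrE : Fin d ↪ V ⊕ Fin d := ⟨Sum.inr, Sum.inr_injective⟩ with hinrE
  set tfun : V → Finset (V ⊕ Fin d) :=
    fun v => ((G.neighborFinset v).map inlE) ∪ ((Finset.univ : Finset (Fin d)).map inrE)
    with htfun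
  have hall : ∀ A : Finset V, A.card ≤ (A.biUnion tfun).card := by
    intro A
    rcases A.eq_empty_or_nonempty with rfl | ⟨a, ha⟩
    · simp
    · have hsub : ((NB A).map inlE ∪ (Finset.univ : Finset (Fin d)).map inrE) ⊆
          A.biUnion tfun := by
        intro z hz
        rcases mem_union.1 hz with hz | hz
        · obtain ⟨x, hx, hxz⟩ := mem_map.1 hz
          obtain ⟨w, hwA, hxw⟩ := mem_biUnion.1 hx
          exact mem_biUnion.2 ⟨w, hwA, mem_union.2 (Or.inl (mem_map.2 ⟨x, hxw, hxz⟩))⟩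
        · exact mem_biUnion.2 ⟨a, ha, mem_union.2 (Or.inr hz)⟩
      have hdisj : Disjoint ((NB A).map inlE) ((Finset.univ : Finset (Fin d)).map inrE) := by
        rw [Finset.disjoint_left]
        intro z hz1 hz2
        obtain ⟨x, _, hx⟩ := mem_map.1 hz1
        obtain ⟨y, _, hy⟩ := mem_map.1 hz2
        rw [← hx] at hy
        exact Sum.inl_ne_inr hy.symm
      have hcard : ((NB A).map inlE ∪ (Finset.univ : Finset (Fin d)).map inrE).card
          = (NB A).card + d := by
        rw [card_union_of_disjoint hdisj, card_map, card_map, card_univ, Fintype.card_fin]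
      have := hA A
      have := card_le_card hsub
      omega
  obtain ⟨f, hfinj, hft⟩ := (Finset.all_card_le_biUnion_card_iff_exists_injective tfun).1 hall
  -- Step 3: the set of vertices matched to the left
  set W : Finset V := Finset.univ.filter (fun v => (f v).isLeft) with hW
  have hWc : (Finset.univ.filter (fun v => ¬ (f v).isLeft)).card ≤ d := by
    have hsub : (Finset.univ.filter (fun v => ¬ (f v).isLeft)).image f ⊆
        (Finset.univ : Finset (Fin d)).map inrE := by
      intro z hz
      obtain ⟨v, hv, rfl⟩ := mem_image.1 hz
      have hv' : ¬ (f v).isLeft := (mem_filter.1 hv).2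
      rcases mem_union.1 (hft v) with h | h
      · obtain ⟨x, _, hx⟩ := mem_map.1 h
        exact absurd (by rw [← hx]; rfl) hv'
      · exact h
    have h1 : ((Finset.univ.filter (fun v => ¬ (f v).isLeft)).image f).card =
        (Finset.univ.filter (fun v => ¬ (f v).isLeft)).card :=
      card_image_of_injOn hfinj.injOn
    have h2 := card_le_card hsub
    rw [h1] at h2
    simpa using h2
  have hWcard : 2 * s + 1 ≤ W.card := by
    have := Finset.card_filter_add_card_filter_not (s := (Finset.univ : Finset V))
      (fun v => (f v).isLeft = true)
    simp only [Finset.card_univ, hn] at this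
    have hWc' : (Finset.univ.filter (fun v => ¬ ((f v).isLeft = true))).card ≤ d := by
      simpa using hWc
    have hWW : W.card = (Finset.univ.filter (fun v => (f v).isLeft = true)).card := by
      rw [hW]
    omega
  -- the partner function
  set gv : V → V := fun v => if h : (f v).isLeft then (f v).getLeft h else v with hgv
  have hpart : ∀ v ∈ W, G.Adj v (gv v) ∧ f v = Sum.inl (gv v) := by
    intro v hv
    have hvL : (f v).isLeft := by simpa [hW] using hv
    rcases mem_union.1 (hft v) with h | h
    · obtain ⟨x, hx, hxe⟩ := mem_map.1 h
      have hfx : f v = Sum.inl x := hxe.symm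
      have hgvx : gv v = x := by
        simp only [hgv, dif_pos hvL]
        simp [hfx]
      constructor
      · rw [hgvx]; exact (SimpleGraph.mem_neighborFinset _ _ _).1 hx
      · rw [hgvx]; exact hfx
    · obtain ⟨j, _, hj⟩ := mem_map.1 h
      rw [← hj] at hvL
      simp [hinrE] at hvL
  have hgvinj : Set.InjOn gv W := by
    intro a ha b hb hab
    have h1 := (hpart a ha).2
    have h2 := (hpart b hb).2
    apply hfinj
    rw [h1, h2, hab]
  -- the fractional matching
  set eF : V → Sym2 V := fun v => s(v, gv v) with heF
  set hF : Sym2 V → ℝ := fun e => ((W.filter (fun v => eF v = e)).card : ℝ) / 2 with hhF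
  have hcard2 : ∀ e : Sym2 V, (W.filter (fun v => eF v = e)).card ≤ 2 := by
    intro e
    induction e using Sym2.inductionOn with
    | hf a b =>
      have hsub : (W.filter (fun v => eF v = s(a, b))) ⊆ {a, b} := by
        intro v hv
        have hve : eF v = s(a, b) := (mem_filter.1 hv).2
        have hvm : v ∈ eF v := by simp [heF]
        rw [hve] at hvm
        rcases Sym2.mem_iff.1 hvm with h | h <;> simp [h]
      calc (W.filter (fun v => eF v = s(a, b))).card ≤ ({a, b} : Finset V).card :=
            card_le_card hsub
        _ ≤ 2 := card_insert_le a {b} |>.trans (by simp)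
  have hfrac : IsFracMatching G hF := by
    refine ⟨?_, ?_, ?_⟩
    · intro e
      constructor
      · exact div_nonneg (Nat.cast_nonneg _) (by norm_num)
      · rw [hhF]
        have := hcard2 e
        rw [div_le_one (by norm_num)]
        have h2 : ((W.filter (fun v => eF v = e)).card : ℝ) ≤ 2 := by exact_mod_cast this
        linarith
    · intro e he
      rw [hhF]
      simp only
      have : (W.filter (fun v => eF v = e)) = ∅ := by
        rw [Finset.eq_empty_iff_forall_notMem]
        intro v hv
        obtain ⟨hvW, hve⟩ := mem_filter.1 hv
        have hadj := (hpart v hvW).1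
        have : eF v ∈ G.edgeSet := by
          rw [heF]; exact (SimpleGraph.mem_edgeSet G).2 hadj
        rw [hve] at this
        exact he this
      rw [this]
      simp
    · intro x
      -- fiberwise sum
      have hmem : ∀ v ∈ W.filter (fun v => x ∈ eF v), eF v ∈ G.incidenceFinset x := by
        intro v hv
        obtain ⟨hvW, hvx⟩ := mem_filter.1 hv
        rw [SimpleGraph.mem_incidenceFinset]
        exact ⟨by rw [heF]; exact (SimpleGraph.mem_edgeSet G).2 (hpart v hvW).1, hvx⟩
      have h1 : (W.filter (fun v => x ∈ eF v)).card =
          ∑ e ∈ G.incidenceFinset x, ((W.filter (fun v => x ∈ eF v)).filter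
            (fun v => eF v = e)).card :=
        card_eq_sum_card_fiberwise hmem
      have h2 : ∀ e ∈ G.incidenceFinset x,
          (W.filter (fun v => eF v = e)) = ((W.filter (fun v => x ∈ eF v)).filter
            (fun v => eF v = e)) := by
        intro e he
        have hxe : x ∈ e := ((SimpleGraph.mem_incidenceFinset _ _ _).1 he).2
        ext v
        simp only [mem_filter]
        constructor
        · rintro ⟨hvW, hve⟩; exact ⟨⟨hvW, by rw [hve]; exact hxe⟩, hve⟩
        · rintro ⟨⟨hvW, _⟩, hve⟩; exact ⟨hvW, hve⟩
      have h3 : ∑ e ∈ G.incidenceFinset x, ((W.filter (fun v => eF v = e)).card : ℝ) =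
          ((W.filter (fun v => x ∈ eF v)).card : ℝ) := by
        rw [h1]
        push_cast
        apply Finset.sum_congr rfl
        intro e he
        rw [h2 e he]
      have h4 : (W.filter (fun v => x ∈ eF v)).card ≤ 2 := by
        have hsub : (W.filter (fun v => x ∈ eF v)) ⊆
            insert x (W.filter (fun v => gv v = x)) := by
          intro v hv
          obtain ⟨hvW, hvx⟩ := mem_filter.1 hv
          have : x = v ∨ x = gv v := by
            rw [heF] at hvx; exact Sym2.mem_iff.1 hvx
          rcases this with h | h
          · simp [h]
          · exact mem_insert_of_mem (mem_filter.2 ⟨hvW, h.symm⟩)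
        have hone : (W.filter (fun v => gv v = x)).card ≤ 1 := by
          apply Finset.card_le_one.2
          intro a ha b hb
          obtain ⟨haW, hax⟩ := mem_filter.1 ha
          obtain ⟨hbW, hbx⟩ := mem_filter.1 hb
          exact hgvinj haW hbW (by rw [hax, hbx])
        calc (W.filter (fun v => x ∈ eF v)).card ≤
            (insert x (W.filter (fun v => gv v = x))).card := card_le_card hsub
          _ ≤ (W.filter (fun v => gv v = x)).card + 1 := card_insert_le _ _
          _ ≤ 2 := by omega
      calc ∑ e ∈ G.incidenceFinset x, hF e
          = (∑ e ∈ G.incidenceFinset x, ((W.filter (fun v => eF v = e)).card : ℝ)) / 2 := by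
            rw [hhF]; rw [← Finset.sum_div]
        _ = ((W.filter (fun v => x ∈ eF v)).card : ℝ) / 2 := by rw [h3]
        _ ≤ 2 / 2 := by
            have h5 : ((W.filter (fun v => x ∈ eF v)).card : ℝ) ≤ 2 := by exact_mod_cast h4
            linarith
        _ = 1 := by norm_num
  -- total weight
  have htot : ∑ e ∈ G.edgeFinset, hF e = (W.card : ℝ) / 2 := by
    have hmem : ∀ v ∈ W, eF v ∈ G.edgeFinset := by
      intro v hv
      rw [SimpleGraph.mem_edgeFinset, heF]
      exact (SimpleGraph.mem_edgeSet G).2 (hpart v hv).1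
    have h1 : W.card = ∑ e ∈ G.edgeFinset, (W.filter (fun v => eF v = e)).card :=
      card_eq_sum_card_fiberwise hmem
    rw [hhF]
    simp only
    rw [← Finset.sum_div]
    congr 1
    rw [h1, Nat.cast_sum]
  have hle := hub hF hfrac
  rw [htot] at hle
  have : (W.card : ℝ) ≤ 2 * s := by linarith
  have : (W.card : ℕ) ≤ 2 * s := by exact_mod_cast this
  omega

/-- main theorem, `2s` even: if `G` has order `n ≥ 2s+1 ≥ 5`,
fractional matching number `s` (a positive integer) and minimum degree `δ`, then the
number of `ℓ`-cliques of `G` is at most `max(g_ℓ(n,s,δ), g_ℓ(n,s,s))`. -/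
theorem max_cliques_even {V : Type*} [Fintype V] [DecidableEq V] (G : SimpleGraph V)
    [DecidableRel G.Adj] (n s δ ℓ : ℕ) (hn : Fintype.card V = n) (hδ : 0 < δ)
    (hℓ : 2 ≤ ℓ) (hn2s : 2 * s + 1 ≤ n) (h5 : 5 ≤ 2 * s + 1)
    (hfm : IsFracMatchingNumber G (s : ℝ))
    (hmin : (∀ v : V, δ ≤ (G.neighborSet v).ncard) ∧
      ∃ v : V, (G.neighborSet v).ncard = δ) :
    (G.cliqueSet ℓ).ncard ≤ max (gcl n s δ ℓ δ) (gcl n s δ ℓ s) := by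
  classical
  obtain ⟨r, hr⟩ : ∃ r, ℓ = r + 2 := ⟨ℓ - 2, by omega⟩
  subst hr
  obtain ⟨v, hvdeg⟩ := hmin.2
  have hdegF : ∀ u : V, δ ≤ (G.neighborFinset u).card := by
    intro u
    have h := hmin.1 u
    rwa [Set.ncard_eq_toFinset_card'] at h
  have hvdegF : (G.neighborFinset v).card = δ := by
    rw [Set.ncard_eq_toFinset_card'] at hvdeg
    exact hvdeg
  obtain ⟨I, hI, hIcard⟩ := exists_indep_set G n s hn hn2s hfm.2
  set T : Finset V := I.biUnion (fun u => G.neighborFinset u) with hT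
  set K : Finset V := Finset.univ \ I with hK
  have hIT : ∀ x ∈ I, x ∉ T := by
    intro x hx hxT
    obtain ⟨u, huI, hxu⟩ := mem_biUnion.1 hxT
    exact hI u huI x hx ((SimpleGraph.mem_neighborFinset _ _ _).1 hxu)
  have hTsub : T ⊆ K := fun x hxT =>
    mem_sdiff.2 ⟨mem_univ x, fun hxI => hIT x hxI hxT⟩
  have hmk : K.card + I.card = n := by
    rw [hK, card_sdiff_add_card_eq_card (subset_univ I), card_univ, hn]
  have htk : T.card ≤ K.card := card_le_card hTsub
  have hkt2s : K.card + T.card ≤ 2 * s := by omega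
  have hm1 : 1 ≤ I.card := by omega
  have hδt : δ ≤ T.card := by
    obtain ⟨u, hu⟩ := card_pos.1 hm1
    have hsub2 : G.neighborFinset u ⊆ T :=
      subset_biUnion_of_mem (fun u => G.neighborFinset u) hu
    exact le_trans (hdegF u) (card_le_card hsub2)
  have hts : T.card ≤ s := by omega
  set c : ℕ := n - (2 * s + 1) with hc
  have hnc : n = 2 * s + 1 + c := by omega
  -- clique counting
  rw [← SimpleGraph.coe_cliqueFinset, Set.ncard_coe_finset]
  set CF : Finset (Finset V) := G.cliqueFinset (r+2) with hCF
  have hclique : ∀ C ∈ CF, C.card = r + 2 ∧ ∀ a ∈ C, ∀ b ∈ C, a ≠ b → G.Adj a b := by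
    intro C hC
    have h := SimpleGraph.mem_cliqueFinset_iff.1 hC
    exact ⟨h.2, fun a ha b hb hab => h.1 (Finset.mem_coe.2 ha) (Finset.mem_coe.2 hb) hab⟩
  set F1 : Finset (Finset V) := CF.filter (fun C => v ∉ C ∧ ∀ u ∈ C, u ∉ I) with hF1
  set F2 : Finset (Finset V) := CF.filter (fun C => v ∈ C) with hF2
  set F3 : Finset (Finset V) := CF.filter (fun C => v ∉ C ∧ ∃ u ∈ C, u ∈ I) with hF3
  have hcover : CF ⊆ F1 ∪ F2 ∪ F3 := by
    intro C hC
    by_cases hv : v ∈ C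
    · exact mem_union_left _ (mem_union_right _ (mem_filter.2 ⟨hC, hv⟩))
    · by_cases hex : ∃ u ∈ C, u ∈ I
      · exact mem_union_right _ (mem_filter.2 ⟨hC, hv, hex⟩)
      · push_neg at hex
        exact mem_union_left _ (mem_union_left _ (mem_filter.2 ⟨hC, hv, hex⟩))
  have b2 : F2.card ≤ Nat.choose δ (r+1) := by
    have h : F2.card ≤ (powersetCard (r+1) (G.neighborFinset v)).card := by
      apply card_le_card_of_injOn (fun C => C.erase v)
      · intro C hC
        obtain ⟨hCc, hvC⟩ := mem_filter.1 hC
        obtain ⟨hcardC, hadj⟩ := hclique C hCc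
        rw [Finset.mem_coe, mem_powersetCard]
        constructor
        · intro u hu
          obtain ⟨hne, huC⟩ := mem_erase.1 hu
          exact (SimpleGraph.mem_neighborFinset _ _ _).2 (hadj v hvC u huC (Ne.symm hne))
        · rw [card_erase_of_mem hvC, hcardC]; omega
      · intro C1 h1 C2 h2 he
        have hv1 : v ∈ C1 := (mem_filter.1 (Finset.mem_coe.1 h1)).2
        have hv2 : v ∈ C2 := (mem_filter.1 (Finset.mem_coe.1 h2)).2
        have he' : C1.erase v = C2.erase v := he
        rw [← insert_erase hv1, ← insert_erase hv2, he']
    rwa [card_powersetCard, hvdegF] at h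
  have b1 : F1.card ≤ Nat.choose ((K.erase v).card) (r+2) := by
    have h : F1.card ≤ (powersetCard (r+2) (K.erase v)).card := by
      apply card_le_card_of_injOn (fun C => C)
      · intro C hC
        obtain ⟨hCc, hvC, hCI⟩ := mem_filter.1 hC
        obtain ⟨hcardC, _⟩ := hclique C hCc
        rw [Finset.mem_coe, mem_powersetCard]
        refine ⟨fun u hu => mem_erase.2 ⟨fun h => hvC (h ▸ hu), ?_⟩, hcardC⟩
        exact mem_sdiff.2 ⟨mem_univ u, hCI u hu⟩
      · intro C1 _ C2 _ he
        exact he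
    rwa [card_powersetCard] at h
  have perU : ∀ u ∈ I.erase v, (CF.filter (fun C => u ∈ C ∧ v ∉ C)).card ≤
      Nat.choose ((T.erase v).card) (r+1) := by
    intro u hu
    obtain ⟨hune, huI⟩ := mem_erase.1 hu
    have h : (CF.filter (fun C => u ∈ C ∧ v ∉ C)).card ≤
        (powersetCard (r+1) (T.erase v)).card := by
      apply card_le_card_of_injOn (fun C => C.erase u)
      · intro C hC
        obtain ⟨hCc, huC, hvC⟩ := mem_filter.1 hC
        obtain ⟨hcardC, hadj⟩ := hclique C hCc
        rw [Finset.mem_coe, mem_powersetCard]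
        constructor
        · intro w hw
          obtain ⟨hwne, hwC⟩ := mem_erase.1 hw
          refine mem_erase.2 ⟨fun h => hvC (h ▸ hwC), ?_⟩
          have hadjuw : G.Adj u w := hadj u huC w hwC (Ne.symm hwne)
          exact mem_biUnion.2 ⟨u, huI, (SimpleGraph.mem_neighborFinset _ _ _).2 hadjuw⟩
        · rw [card_erase_of_mem huC, hcardC]; omega
      · intro C1 h1 C2 h2 he
        have hu1 : u ∈ C1 := (mem_filter.1 (Finset.mem_coe.1 h1)).2.1
        have hu2 : u ∈ C2 := (mem_filter.1 (Finset.mem_coe.1 h2)).2.1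
        have he' : C1.erase u = C2.erase u := he
        rw [← insert_erase hu1, ← insert_erase hu2, he']
    rwa [card_powersetCard] at h
  have b3 : F3.card ≤ (I.erase v).card * Nat.choose ((T.erase v).card) (r+1) := by
    have hsub : F3 ⊆ (I.erase v).biUnion (fun u => CF.filter (fun C => u ∈ C ∧ v ∉ C)) := by
      intro C hC
      obtain ⟨hCc, hvC, u, huC, huI⟩ := mem_filter.1 hC
      exact mem_biUnion.2 ⟨u, mem_erase.2 ⟨fun h => hvC (h ▸ huC), huI⟩,
        mem_filter.2 ⟨hCc, huC, hvC⟩⟩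
    calc F3.card ≤ ((I.erase v).biUnion (fun u => CF.filter (fun C => u ∈ C ∧ v ∉ C))).card :=
          card_le_card hsub
      _ ≤ ∑ u ∈ I.erase v, (CF.filter (fun C => u ∈ C ∧ v ∉ C)).card := card_biUnion_le
      _ ≤ (I.erase v).card * Nat.choose ((T.erase v).card) (r+1) := by
          rw [← smul_eq_mul]
          exact Finset.sum_le_card_nsmul _ _ _ perU
  have htotal : CF.card ≤ Nat.choose ((K.erase v).card) (r+2) + Nat.choose δ (r+1) +
      (I.erase v).card * Nat.choose ((T.erase v).card) (r+1) := by
    calc CF.card ≤ (F1 ∪ F2 ∪ F3).card := card_le_card hcover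
      _ ≤ (F1 ∪ F2).card + F3.card := card_union_le _ _
      _ ≤ F1.card + F2.card + F3.card := Nat.add_le_add_right (card_union_le _ _) _
      _ ≤ _ := add_le_add (add_le_add b1 b2) b3
  -- the convex bound
  set hfun : ℕ → ℕ := fun x => Nat.choose (2*s - x) (r+2) + Nat.choose x (r+1) * (c + x)
    with hhfun
  have hkey : CF.card ≤ hfun (T.card) + Nat.choose δ (r+1) := by
    by_cases hvI : v ∈ I
    · have hKe : K.erase v = K := erase_eq_of_notMem (fun h => (mem_sdiff.1 h).2 hvI)
      have hTe : T.erase v = T := erase_eq_of_notMem (hIT v hvI)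
      have hIe : (I.erase v).card = I.card - 1 := card_erase_of_mem hvI
      have har := AR1 (c := c) (s := s) (r := r) (m := I.card) htk hkt2s (by omega)
      calc CF.card ≤ Nat.choose ((K.erase v).card) (r+2) + Nat.choose δ (r+1) +
            (I.erase v).card * Nat.choose ((T.erase v).card) (r+1) := htotal
        _ = (Nat.choose (K.card) (r+2) + (I.card - 1) * Nat.choose (T.card) (r+1)) +
            Nat.choose δ (r+1) := by rw [hKe, hTe, hIe]; ring
        _ ≤ hfun (T.card) + Nat.choose δ (r+1) := Nat.add_le_add_right har _
    · have hvK : v ∈ K := mem_sdiff.2 ⟨mem_univ v, hvI⟩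
      have hIe : I.erase v = I := erase_eq_of_notMem hvI
      have hk1 : (K.erase v).card + 1 = K.card := by
        rw [card_erase_of_mem hvK]
        have : 1 ≤ K.card := card_pos.2 ⟨v, hvK⟩
        omega
      by_cases hvT : v ∈ T
      · have ht1 : (T.erase v).card + 1 = T.card := by
          rw [card_erase_of_mem hvT]
          have : 1 ≤ T.card := card_pos.2 ⟨v, hvT⟩
          omega
        have htk1 : (T.erase v).card ≤ (K.erase v).card :=
          card_le_card (erase_subset_erase _ hTsub)
        have har := AR2 (c := c) (s := s) (r := r) (m := I.card) htk1 (by omega) (by omega)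
        calc CF.card ≤ Nat.choose ((K.erase v).card) (r+2) + Nat.choose δ (r+1) +
              (I.erase v).card * Nat.choose ((T.erase v).card) (r+1) := htotal
          _ = (Nat.choose ((K.erase v).card) (r+2) +
              I.card * Nat.choose ((T.erase v).card) (r+1)) + Nat.choose δ (r+1) := by
              rw [hIe]; ring
          _ ≤ (Nat.choose (2*s - ((T.erase v).card + 1)) (r+2) +
              Nat.choose ((T.erase v).card + 1) (r+1) * (c + ((T.erase v).card + 1))) +
              Nat.choose δ (r+1) := Nat.add_le_add_right har _
          _ = hfun (T.card) + Nat.choose δ (r+1) := by rw [ht1]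
      · have hTe : T.erase v = T := erase_eq_of_notMem hvT
        have htk1 : T.card ≤ (K.erase v).card := by
          have hins : insert v T ⊆ K := by
            intro x hx
            rcases mem_insert.1 hx with rfl | hx
            · exact hvK
            · exact hTsub hx
          have := card_le_card hins
          rw [card_insert_of_notMem hvT] at this
          omega
        have har := AR3 (c := c) (s := s) (r := r) (m := I.card) htk1 (by omega) (by omega)
        calc CF.card ≤ Nat.choose ((K.erase v).card) (r+2) + Nat.choose δ (r+1) +
              (I.erase v).card * Nat.choose ((T.erase v).card) (r+1) := htotal
          _ = (Nat.choose ((K.erase v).card) (r+2) +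
              I.card * Nat.choose (T.card) (r+1)) + Nat.choose δ (r+1) := by
              rw [hIe, hTe]; ring
          _ ≤ hfun (T.card) + Nat.choose δ (r+1) := Nat.add_le_add_right har _
  -- convexity
  have hcv : hfun (T.card) ≤ max (hfun δ) (hfun s) :=
    conv_max hfun δ s (fun x _ hxs => conv_h c s r x hxs) (T.card) hδt hts
  have hg : ∀ x : ℕ, gcl n s δ (r+2) x = hfun x + Nat.choose δ (r+1) := by
    intro x
    show Nat.choose (2 * s - x) (r+2) + Nat.choose x ((r+2) - 1) * (n + x - 2 * s - 1) +
      Nat.choose δ ((r+2) - 1) = _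
    have h1 : (r+2) - 1 = r + 1 := rfl
    have h2 : n + x - 2 * s - 1 = c + x := by omega
    rw [h1, h2]
  rw [hg δ, hg s]
  rcases le_max_iff.1 hcv with h | h
  · exact le_max_of_le_left (le_trans hkey (Nat.add_le_add_right h _))
  · exact le_max_of_le_right (le_trans hkey (Nat.add_le_add_right h _))
end

section
/- Let n, δ, ℓ be positive integers, s a half-integer with 2s odd, n ≥ 2s+1 ≥ 5 and ℓ ≥ 2. If G is a graph of order n with fractional matching number s and minimum degree δ, then the number of copies of K_ℓ in G is at most max(g_ℓ(n,s,δ), g_ℓ(n,s,s−3/2)), where g_ℓ(n,s,t) = C(2s−t, ℓ) + C(t, ℓ−1)·(n + t − 2s − 1) + C(δ, ℓ−1) for integer t. -/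
/-- With `σ = 2s`, `g_ℓ(n,s,t) = C(σ−t, ℓ) + C(t, ℓ−1)·(n + t − σ − 1) + C(δ, ℓ−1)`,
the number of `ℓ`-cliques of the extremal graph `G(n,s,t)` with minimum degree `δ`. -/
def gclOdd (n σ δ ℓ t : ℕ) : ℕ :=
  Nat.choose (σ - t) ℓ + Nat.choose t (ℓ - 1) * (n + t - σ - 1) +
    Nat.choose δ (ℓ - 1)

open Finset

section Helpers

variable {V : Type*} [Fintype V] [DecidableEq V] (G : SimpleGraph V) [DecidableRel G.Adj]

private lemma incidenceFinset_eq_image' (v : V) :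
    G.incidenceFinset v = (G.neighborFinset v).image (fun w => s(v, w)) := by
  ext e
  simp only [SimpleGraph.mem_incidenceFinset, Finset.mem_image,
    SimpleGraph.mem_neighborFinset, SimpleGraph.mem_incidenceSet]
  constructor
  · rintro ⟨hadj, hv⟩
    induction e using Sym2.ind with
    | _ a b =>
      rw [SimpleGraph.mem_edgeSet] at *
      rcases Sym2.mem_iff.mp hv with rfl | rfl
      · exact ⟨b, hadj, rfl⟩
      · exact ⟨a, hadj.symm, Sym2.eq_swap⟩
  · rintro ⟨w, hw, rfl⟩
    exact ⟨hw, Sym2.mem_mk_left v w⟩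

private lemma sum_incidence_eq (v : V) (f : Sym2 V → ℝ) :
    ∑ e ∈ G.incidenceFinset v, f e = ∑ w ∈ G.neighborFinset v, f s(v, w) := by
  rw [incidenceFinset_eq_image', Finset.sum_image]
  intro a _ b _ hab
  exact (Sym2.congr_right).mp hab

private lemma sum_pairs_eq (F : V → V → ℝ) (g : Sym2 V → ℝ)
    (hg : ∀ u v, G.Adj u v → g s(u, v) = F u v + F v u) :
    ∑ v, ∑ w ∈ G.neighborFinset v, F v w = ∑ e ∈ G.edgeFinset, g e := by
  classical
  have h1 : ∑ v, ∑ w ∈ G.neighborFinset v, F v w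
      = ∑ p ∈ (univ ×ˢ univ).filter (fun p : V × V => G.Adj p.1 p.2), F p.1 p.2 := by
    rw [Finset.sum_filter, Finset.sum_product]
    refine Finset.sum_congr rfl fun v _ => ?_
    rw [SimpleGraph.neighborFinset_eq_filter, Finset.sum_filter]
  rw [h1, ← Finset.sum_fiberwise_of_maps_to
    (g := fun p : V × V => s(p.1, p.2)) (t := G.edgeFinset) ?_]
  · refine Finset.sum_congr rfl fun e he => ?_
    induction e using Sym2.ind with
    | _ u v =>
      have hadj : G.Adj u v := by rwa [SimpleGraph.mem_edgeFinset, SimpleGraph.mem_edgeSet] at he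
      have hfib : ((univ ×ˢ univ).filter (fun p : V × V => G.Adj p.1 p.2)).filter
          (fun p : V × V => s(p.1, p.2) = s(u, v)) = {(u, v), (v, u)} := by
        ext ⟨a, b⟩
        simp only [Finset.mem_filter, Finset.mem_insert, Finset.mem_singleton,
          Finset.mem_product, Finset.mem_univ, true_and, Prod.mk.injEq]
        constructor
        · rintro ⟨-, hab⟩
          rcases Sym2.eq_iff.mp hab with ⟨rfl, rfl⟩ | ⟨rfl, rfl⟩
          · exact Or.inl ⟨rfl, rfl⟩
          · exact Or.inr ⟨rfl, rfl⟩
        · rintro (⟨rfl, rfl⟩ | ⟨rfl, rfl⟩)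
          · exact ⟨hadj, rfl⟩
          · exact ⟨hadj.symm, Sym2.eq_swap⟩
      rw [hfib, Finset.sum_pair (by simp only [ne_eq, Prod.mk.injEq, not_and]; exact fun h _ => hadj.ne h), hg u v hadj]
  · rintro ⟨a, b⟩ hp
    simp only [Finset.mem_filter] at hp
    simpa [SimpleGraph.mem_edgeFinset] using hp.2

private lemma weak_duality (w : V → ℝ) (h0 : ∀ v, 0 ≤ w v)
    (hc : ∀ u v, G.Adj u v → 1 ≤ w u + w v) (f : Sym2 V → ℝ)
    (hf : IsFracMatching G f) : ∑ e ∈ G.edgeFinset, f e ≤ ∑ v, w v := by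
  have key := sum_pairs_eq G (fun u v => w u * f s(u, v))
    (Sym2.lift ⟨fun u v => w u * f s(u, v) + w v * f s(v, u), fun u v => by ring⟩)
    (fun u v _ => Sym2.lift_mk _ _ _)
  have h2 : ∑ e ∈ G.edgeFinset, f e
      ≤ ∑ e ∈ G.edgeFinset, Sym2.lift
        ⟨fun u v => w u * f s(u, v) + w v * f s(v, u), fun u v => by ring⟩ e := by
    refine Finset.sum_le_sum fun e he => ?_
    induction e using Sym2.ind with
    | _ u v =>
      have hadj : G.Adj u v := by rwa [SimpleGraph.mem_edgeFinset, SimpleGraph.mem_edgeSet] at he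
      rw [Sym2.lift_mk]
      dsimp only
      have hsw : s(v, u) = s(u, v) := Sym2.eq_swap
      rw [hsw]
      have := hc u v hadj
      have h0f := (hf.1 s(u, v)).1
      nlinarith
  have h3 : ∑ v, ∑ x ∈ G.neighborFinset v, w v * f s(v, x) ≤ ∑ v, w v := by
    refine Finset.sum_le_sum fun v _ => ?_
    rw [← Finset.mul_sum, ← sum_incidence_eq]
    calc w v * ∑ e ∈ G.incidenceFinset v, f e ≤ w v * 1 :=
          mul_le_mul_of_nonneg_left (hf.2.2 v) (h0 v)
      _ = w v := mul_one _
  calc ∑ e ∈ G.edgeFinset, f e ≤ _ := h2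
    _ = _ := key.symm
    _ ≤ ∑ v, w v := h3

private lemma cover_exists (n σ : ℕ) (hn : Fintype.card V = n) (hn2s : σ + 1 ≤ n)
    (hub : ∀ f, IsFracMatching G f → ∑ e ∈ G.edgeFinset, f e ≤ (σ : ℝ) / 2) :
    ∃ A B : Finset V, (∀ u v, G.Adj u v → u ∈ A ∨ v ∈ B) ∧ A.card + B.card ≤ σ := by
  classical
  obtain ⟨S₀, -, hmax⟩ := Finset.exists_max_image (univ : Finset (Finset V))
    (fun S : Finset V => (S.card : ℤ) - ((S.biUnion (fun y => G.neighborFinset y)).card : ℤ)) ⟨∅, Finset.mem_univ ∅⟩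

  by_cases hcase : (n : ℤ) - σ ≤ (S₀.card : ℤ) - ((S₀.biUnion (fun y => G.neighborFinset y)).card : ℤ)
  · refine ⟨univ \ S₀, S₀.biUnion (fun y => G.neighborFinset y), ?_, ?_⟩
    · intro u v huv
      by_cases hu : u ∈ S₀
      · exact Or.inr (Finset.mem_biUnion.mpr
          ⟨u, hu, (SimpleGraph.mem_neighborFinset _ _ _).mpr huv⟩)
      · exact Or.inl (Finset.mem_sdiff.mpr ⟨Finset.mem_univ u, hu⟩)
    · have h1 : (univ \ S₀).card = n - S₀.card := by
        rw [Finset.card_sdiff_of_subset (Finset.subset_univ _), Finset.card_univ, hn]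
      have h2 : S₀.card ≤ n := hn ▸ Finset.card_le_univ S₀
      omega
  · exfalso
    push_neg at hcase
    set a := n - σ - 1 with ha
    have hdef : ∀ S : Finset V, S.card ≤ (S.biUnion (fun y => G.neighborFinset y)).card + a := by
      intro S
      have h := hmax S (Finset.mem_univ S)
      omega
    set t : V → Finset (V ⊕ Fin a) := fun v =>
      (G.neighborFinset v).map ⟨Sum.inl, Sum.inl_injective⟩ ∪
        (univ : Finset (Fin a)).map ⟨Sum.inr, Sum.inr_injective⟩ with ht
    have hall : ∀ S : Finset V, S.card ≤ (S.biUnion t).card := by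
      intro S
      rcases S.eq_empty_or_nonempty with rfl | hS
      · simp
      · have hbu : S.biUnion t = ((S.biUnion (fun y => G.neighborFinset y)).map ⟨Sum.inl, Sum.inl_injective⟩) ∪
            ((univ : Finset (Fin a)).map ⟨Sum.inr, Sum.inr_injective⟩) := by
          ext x
          simp only [Finset.mem_biUnion, Finset.mem_union, ht]
          constructor
          · rintro ⟨v, hv, h | h⟩
            · simp only [Finset.mem_map, Function.Embedding.coeFn_mk] at h ⊢
              obtain ⟨y, hy, rfl⟩ := h
              exact Or.inl ⟨y, Finset.mem_biUnion.mpr ⟨v, hv, hy⟩, rfl⟩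
            · exact Or.inr h
          · rintro (h | h)
            · simp only [Finset.mem_map, Function.Embedding.coeFn_mk] at h ⊢
              obtain ⟨y, hy, rfl⟩ := h
              obtain ⟨v, hv, hyv⟩ := Finset.mem_biUnion.mp hy
              exact ⟨v, hv, Or.inl ⟨y, hyv, rfl⟩⟩
            · exact ⟨hS.choose, hS.choose_spec, Or.inr h⟩
        rw [hbu, Finset.card_union_of_disjoint, Finset.card_map, Finset.card_map,
          Finset.card_univ, Fintype.card_fin]
        · exact hdef S
        · rw [Finset.disjoint_left]
          rintro x hx hx'
          simp only [Finset.mem_map, Function.Embedding.coeFn_mk] at hx hx'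
          obtain ⟨y, -, rfl⟩ := hx
          obtain ⟨z, -, h⟩ := hx'
          exact absurd h (by simp)
    obtain ⟨f₀, hinj, hmem⟩ := (Finset.all_card_le_biUnion_card_iff_exists_injective t).mp hall
    have hmem' : ∀ v x, f₀ v = Sum.inl x → G.Adj v x := by
      intro v x h
      have h2 := hmem v
      rw [h, ht] at h2
      simp only [Finset.mem_union, Finset.mem_map, Function.Embedding.coeFn_mk] at h2
      rcases h2 with ⟨y, hy, hxy⟩ | ⟨y, -, hxy⟩
      · obtain rfl : y = x := Sum.inl_injective hxy
        exact (SimpleGraph.mem_neighborFinset _ _ _).mp hy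
      · exact absurd hxy (by simp)
    set p : V → V → ℝ := fun u v => if f₀ u = Sum.inl v then 1 else 0 with hp
    have hp01 : ∀ u v, p u v = 0 ∨ p u v = 1 := by
      intro u v; rw [hp]; dsimp only; split_ifs <;> simp
    have hpadj : ∀ u v, p u v ≠ 0 → G.Adj u v := by
      intro u v h
      rw [hp] at h
      dsimp only at h
      split_ifs at h with hc
      · exact hmem' u v hc
      · exact absurd rfl h
    set g : Sym2 V → ℝ :=
      Sym2.lift ⟨fun u v => (p u v + p v u) / 2, fun u v => by dsimp only; ring⟩ with hg
    have hg01 : ∀ e, 0 ≤ g e ∧ g e ≤ 1 := by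
      intro e
      induction e using Sym2.ind with
      | _ u v =>
        rw [hg, Sym2.lift_mk]
        dsimp only
        rcases hp01 u v with h | h <;> rcases hp01 v u with h' | h' <;> rw [h, h'] <;> norm_num
    have hg0 : ∀ e, e ∉ G.edgeSet → g e = 0 := by
      intro e he
      induction e using Sym2.ind with
      | _ u v =>
        rw [SimpleGraph.mem_edgeSet] at he
        have h1 : p u v = 0 := by
          by_contra h; exact he (hpadj u v h)
        have h2 : p v u = 0 := by
          by_contra h; exact he (hpadj v u h).symm
        rw [hg, Sym2.lift_mk]
        dsimp only
        rw [h1, h2]; norm_num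
    have hrow : ∀ v, ∑ w ∈ G.neighborFinset v, p v w = if (f₀ v).isLeft then 1 else 0 := by
      intro v
      cases hv : f₀ v with
      | inl x =>
        have hx : x ∈ G.neighborFinset v :=
          (SimpleGraph.mem_neighborFinset _ _ _).mpr (hmem' v x hv)
        rw [hp]
        simp only [hv, Sum.inl.injEq, Sum.isLeft_inl, if_true]
        rw [Finset.sum_ite_eq, if_pos hx]
      | inr y =>
        rw [hp]
        simp [hv]
    have hcol : ∀ v, ∑ w ∈ G.neighborFinset v, p w v ≤ 1 := by
      intro v
      have hsub : ∑ w ∈ G.neighborFinset v, p w v ≤ ∑ w ∈ univ, p w v := by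
        refine Finset.sum_le_sum_of_subset_of_nonneg (Finset.subset_univ _) ?_
        intro w _ _
        rcases hp01 w v with h | h <;> rw [h] <;> norm_num
      have hcard : ∑ w ∈ univ, p w v = ((univ.filter (fun w => f₀ w = Sum.inl v)).card : ℝ) := by
        simp only [hp]
        exact Finset.sum_boole _ _
      have hle1 : (univ.filter (fun w => f₀ w = Sum.inl v)).card ≤ 1 := by
        refine Finset.card_le_one.mpr fun x hx y hy => ?_
        simp only [Finset.mem_filter] at hx hy
        exact hinj (hx.2.trans hy.2.symm)
      calc ∑ w ∈ G.neighborFinset v, p w v ≤ _ := hsub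
        _ = _ := hcard
        _ ≤ 1 := by exact_mod_cast hle1
    have hgsum : ∀ v, ∑ e ∈ G.incidenceFinset v, g e ≤ 1 := by
      intro v
      rw [sum_incidence_eq]
      have : ∀ w, g s(v, w) = p v w / 2 + p w v / 2 := by
        intro w
        rw [hg, Sym2.lift_mk]
        dsimp only
        ring
      rw [Finset.sum_congr rfl (fun w _ => this w), Finset.sum_add_distrib,
        ← Finset.sum_div, ← Finset.sum_div]
      have h1 : ∑ w ∈ G.neighborFinset v, p v w ≤ 1 := by
        rw [hrow]; split_ifs <;> norm_num
      have h2 := hcol v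
      linarith
    have hfrac : IsFracMatching G g := ⟨hg01, hg0, hgsum⟩
    have hval := sum_pairs_eq G (fun u v => p u v / 2) g
      (fun u v _ => by rw [hg, Sym2.lift_mk]; dsimp only; ring)
    set L := univ.filter (fun v => (f₀ v).isLeft) with hL
    have hLval : ∑ e ∈ G.edgeFinset, g e = (L.card : ℝ) / 2 := by
      rw [← hval]
      have : ∀ v : V, ∑ w ∈ G.neighborFinset v, p v w / 2
          = (if (f₀ v).isLeft then (1 : ℝ) else 0) / 2 := by
        intro v
        rw [← Finset.sum_div, hrow]
      rw [Finset.sum_congr rfl (fun v _ => this v), ← Finset.sum_div]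
      congr 1
      rw [hL]
      exact Finset.sum_boole _ _
    have hRcard : (univ.filter (fun v => ¬ (f₀ v).isLeft)).card ≤ a := by
      refine le_trans (Finset.card_le_card_of_injOn
        (s := univ.filter (fun v => ¬ (f₀ v).isLeft))
        (t := (univ : Finset (Fin a)).map ⟨Sum.inr, Sum.inr_injective⟩) f₀ ?_ hinj.injOn)
        (by simp)
      · intro v hv
        simp only [Finset.coe_filter, Set.mem_setOf_eq, Finset.mem_filter, Finset.mem_coe] at hv
        cases hfv : f₀ v with
        | inl x => rw [hfv] at hv; simp at hv
        | inr y =>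
          simp only [Finset.mem_coe, Finset.mem_map, Function.Embedding.coeFn_mk]
          exact ⟨y, Finset.mem_univ y, rfl⟩
    have hLn : L.card + (univ.filter (fun v => ¬ (f₀ v).isLeft)).card = n := by
      rw [hL, Finset.card_filter_add_card_filter_not, Finset.card_univ, hn]
    have hLlarge : σ + 1 ≤ L.card := by omega
    have := hub g hfrac
    rw [hLval] at this
    have : (σ : ℝ) + 1 ≤ (L.card : ℝ) := by exact_mod_cast hLlarge
    linarith [hub g hfrac, hLval ▸ hub g hfrac]

end Helpers

section Arith

private lemma convex_endpoint (f : ℕ → ℤ) (a b : ℕ)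
    (hm : ∀ s t : ℕ, a ≤ s → s ≤ t → t < b → f (s + 1) - f s ≤ f (t + 1) - f t) :
    ∀ u, a ≤ u → u ≤ b → f u ≤ max (f a) (f b) := by
  have key : ∀ k, ∀ u, a ≤ u → u + k = b → f u ≤ max (f a) (f b) := by
    intro k
    induction k with
    | zero =>
      intro u _ h
      have : u = b := by omega
      subst this
      exact le_max_right _ _
    | succ k ih =>
      intro u hau h
      by_cases hup : f u ≤ f (u + 1)
      · exact le_trans hup (ih (u + 1) (by omega) (by omega))
      · push_neg at hup
        have hdec : ∀ j, a + j ≤ u → f (a + j) ≤ f a := by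
          intro j
          induction j with
          | zero => simp
          | succ j ihj =>
            intro hj
            have h1 : f (a + j + 1) - f (a + j) ≤ f (u + 1) - f u :=
              hm (a + j) u (by omega) (by omega) (by omega)
            have h2 := ihj (by omega)
            have : a + (j + 1) = a + j + 1 := by omega
            rw [this]
            omega
        have h3 := hdec (u - a) (by omega)
        have h4 : a + (u - a) = u := by omega
        rw [h4] at h3
        exact le_trans h3 (le_max_left _ _)
  intro u hau hub
  exact key (b - u) u hau (by omega)

private lemma gfun_convex (σ δ ℓ a : ℕ) (hl : 2 ≤ ℓ) (T₀ : ℕ) (hT₀ : 2 * T₀ + 3 = σ)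
    (t : ℕ) (hδt : δ ≤ t) (htT : t ≤ T₀) :
    (σ - t).choose ℓ + t.choose (ℓ - 1) * (a + t) + δ.choose (ℓ - 1)
      ≤ max ((σ - δ).choose ℓ + δ.choose (ℓ - 1) * (a + δ) + δ.choose (ℓ - 1))
          ((σ - T₀).choose ℓ + T₀.choose (ℓ - 1) * (a + T₀) + δ.choose (ℓ - 1)) := by
  obtain ⟨l, rfl⟩ : ∃ l, ℓ = l + 2 := ⟨ℓ - 2, by omega⟩
  set f : ℕ → ℤ := fun u => ((σ - u).choose (l + 2) : ℤ)
    + (u.choose (l + 1) : ℤ) * (a + u) + (δ.choose (l + 1) : ℤ) with hf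
  have hdiff : ∀ u : ℕ, u < T₀ →
      f (u + 1) - f u = (u.choose (l + 1) : ℤ) + (u.choose l : ℤ) * (a + u + 1)
        - ((σ - u - 1).choose (l + 1) : ℤ) := by
    intro u hu
    have h1 : σ - u = (σ - u - 1) + 1 := by omega
    have h2 : (σ - (u + 1)) = σ - u - 1 := by omega
    rw [hf]
    dsimp only
    rw [h1, h2, Nat.choose_succ_succ (σ - u - 1) (l + 1), Nat.choose_succ_succ u l]
    push_cast
    ring
  have hmono : ∀ s t : ℕ, δ ≤ s → s ≤ t → t < T₀ → f (s + 1) - f s ≤ f (t + 1) - f t := by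
    intro s t _ hst ht
    rw [hdiff s (by omega), hdiff t ht]
    have e1 : (s.choose (l + 1) : ℤ) ≤ t.choose (l + 1) := by
      exact_mod_cast Nat.choose_le_choose (l + 1) hst
    have e2 : (s.choose l : ℤ) * (a + s + 1) ≤ (t.choose l : ℤ) * (a + t + 1) := by
      have := Nat.choose_le_choose l hst
      have h0 : (s.choose l : ℤ) ≤ t.choose l := by exact_mod_cast this
      have : (a + s + 1 : ℤ) ≤ (a + t + 1 : ℤ) := by push_cast; omega
      have hp1 : (0 : ℤ) ≤ s.choose l := by positivity
      have hp2 : (0 : ℤ) ≤ (a + s + 1 : ℤ) := by positivity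
      nlinarith
    have e3 : ((σ - t - 1).choose (l + 1) : ℤ) ≤ ((σ - s - 1).choose (l + 1) : ℤ) := by
      exact_mod_cast Nat.choose_le_choose (l + 1) (by omega : σ - t - 1 ≤ σ - s - 1)
    linarith
  have := convex_endpoint f δ T₀ hmono t hδt htT
  have hc : ∀ x y : ℤ, max x y = max x y := fun _ _ => rfl
  rw [hf] at this
  simp only [show l + 2 - 1 = l + 1 by omega]
  have hmax : (max ((σ - δ).choose (l+2) + δ.choose (l+1) * (a + δ) + δ.choose (l+1))
      ((σ - T₀).choose (l+2) + T₀.choose (l+1) * (a + T₀) + δ.choose (l+1)) : ℤ)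
      = max (((σ - δ).choose (l+2) + δ.choose (l+1) * (a + δ) + δ.choose (l+1) : ℕ) : ℤ)
        (((σ - T₀).choose (l+2) + T₀.choose (l+1) * (a + T₀) + δ.choose (l+1) : ℕ) : ℤ) := by
    push_cast; ring_nf
  have final : ((σ - t).choose (l+2) + t.choose (l+1) * (a + t) + δ.choose (l+1) : ℤ)
      ≤ max (((σ - δ).choose (l+2) + δ.choose (l+1) * (a + δ) + δ.choose (l+1) : ℕ) : ℤ)
        (((σ - T₀).choose (l+2) + T₀.choose (l+1) * (a + T₀) + δ.choose (l+1) : ℕ) : ℤ) := by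
    push_cast
    dsimp only at this
    push_cast at this
    convert this using 2 <;> push_cast <;> ring
  have := final
  rw [← Nat.cast_max] at this
  exact_mod_cast this

end Arith


/-- main theorem, `2s` odd: let `s = σ/2` be a half-integer with
`σ = 2s` odd, `n ≥ 2s+1 ≥ 5`, `ℓ ≥ 2`.  If `G` has order `n`, fractional matching
number `s` and minimum degree `δ`, then the number of `ℓ`-cliques of `G` is at most
`max(g_ℓ(n,s,δ), g_ℓ(n,s,s−3/2))`, where `s − 3/2 = (σ−3)/2`. -/
theorem max_cliques_odd {V : Type*} [Fintype V] [DecidableEq V] (G : SimpleGraph V)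
    [DecidableRel G.Adj] (n σ δ ℓ : ℕ) (hn : Fintype.card V = n) (hδ : 0 < δ)
    (hℓ : 2 ≤ ℓ) (hodd : Odd σ) (hn2s : σ + 1 ≤ n) (h5 : 5 ≤ σ + 1)
    (hfm : IsFracMatchingNumber G ((σ : ℝ) / 2))
    (hmin : (∀ v : V, δ ≤ (G.neighborSet v).ncard) ∧
      ∃ v : V, (G.neighborSet v).ncard = δ) :
    (G.cliqueSet ℓ).ncard ≤ max (gclOdd n σ δ ℓ δ) (gclOdd n σ δ ℓ ((σ - 3) / 2)) := by
  classical
  obtain ⟨hminall, v₀, hv₀⟩ := hmin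
  have hodd2 : σ % 2 = 1 := Nat.odd_iff.mp hodd
  obtain ⟨A, B, hcov, hABσ⟩ := cover_exists G n σ hn hn2s hfm.2
  have hcov' : ∀ u v, G.Adj u v → (u ∈ A ∨ v ∈ B) ∧ (v ∈ A ∨ u ∈ B) :=
    fun u v h => ⟨hcov u v h, hcov v u h.symm⟩
  set wt : V → ℝ := fun v => ((if v ∈ A then (1 : ℝ) else 0) + (if v ∈ B then 1 else 0)) / 2
    with hwt
  have hwt0 : ∀ v, 0 ≤ wt v := by
    intro v; rw [hwt]; dsimp only; split_ifs <;> norm_num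
  have hwtA : ∀ v, v ∈ A → 1 / 2 ≤ wt v := by
    intro v hv; rw [hwt]; dsimp only; rw [if_pos hv]; split_ifs <;> norm_num
  have hwtB : ∀ v, v ∈ B → 1 / 2 ≤ wt v := by
    intro v hv; rw [hwt]; dsimp only; rw [if_pos hv]; split_ifs <;> norm_num
  have hwtT : ∀ v, v ∈ A → v ∈ B → wt v = 1 := by
    intro v h1 h2; rw [hwt]; dsimp only; rw [if_pos h1, if_pos h2]; norm_num
  have hwtcov : ∀ u v, G.Adj u v → 1 ≤ wt u + wt v := by
    intro u v huv
    obtain ⟨h1 | h1, h2 | h2⟩ := hcov' u v huv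
    · linarith [hwtA u h1, hwtA v h2]
    · have := hwtT u h1 h2; linarith [hwt0 v]
    · have := hwtT v h2 h1; linarith [hwt0 u]
    · linarith [hwtB u h2, hwtB v h1]
  have hfiltA : univ.filter (fun v => v ∈ A) = A := by ext v; simp
  have hfiltB : univ.filter (fun v => v ∈ B) = B := by ext v; simp
  have hsumwt : ∑ v, wt v = ((A.card : ℝ) + B.card) / 2 := by
    rw [hwt]
    dsimp only
    rw [← Finset.sum_div, Finset.sum_add_distrib]
    rw [Finset.sum_boole, Finset.sum_boole, hfiltA, hfiltB]
  have hlb : (σ : ℝ) / 2 ≤ ∑ v, wt v := by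
    obtain ⟨f, hf, hval⟩ := hfm.1
    rw [← hval]
    exact weak_duality G wt hwt0 hwtcov f hf
  have hσAB : σ ≤ A.card + B.card := by
    rw [hsumwt] at hlb
    have h2 : (σ : ℝ) ≤ (A.card : ℝ) + B.card := by linarith
    exact_mod_cast h2
  have hABeq : A.card + B.card = σ := le_antisymm hABσ hσAB
  set T := A ∩ B with hT
  set W := A ∪ B with hW
  set Z := univ \ W with hZ
  set t := T.card with ht
  set h := (W \ T).card with hh
  have hTW : T ⊆ W := (Finset.inter_subset_left).trans Finset.subset_union_left
  have hcards : 2 * t + h = σ := by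
    have h1 : W.card + T.card = A.card + B.card := Finset.card_union_add_card_inter A B
    have h2 : (W \ T).card = W.card - T.card := Finset.card_sdiff_of_subset hTW
    have h3 : T.card ≤ W.card := Finset.card_le_card hTW
    omega
  have hWcard : W.card = σ - t := by
    have h1 : W.card + T.card = A.card + B.card := Finset.card_union_add_card_inter A B
    omega
  have hZcard : Z.card = n - (σ - t) := by
    rw [hZ, Finset.card_sdiff_of_subset (Finset.subset_univ _), Finset.card_univ, hn, hWcard]
  have htσ : 2 * t ≤ σ := by omega
  have hZT : ∀ z y, z ∈ Z → G.Adj z y → y ∈ T := by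
    intro z y hz hzy
    rw [hZ, Finset.mem_sdiff] at hz
    have hzA : z ∉ A := fun hc => hz.2 (Finset.mem_union_left _ hc)
    have hzB : z ∉ B := fun hc => hz.2 (Finset.mem_union_right _ hc)
    obtain ⟨h1, h2⟩ := hcov' z y hzy
    rw [hT, Finset.mem_inter]
    exact ⟨h2.resolve_right hzB, h1.resolve_left hzA⟩
  -- h ≠ 1
  have hhne1 : h ≠ 1 := by
    intro hh1
    obtain ⟨x, hx⟩ := Finset.card_eq_one.mp hh1
    have hxWT : x ∈ W \ T := by rw [hx]; exact Finset.mem_singleton_self x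
    have hxW : x ∈ W := (Finset.mem_sdiff.mp hxWT).1
    have hxT : x ∉ T := (Finset.mem_sdiff.mp hxWT).2
    have hwtx : wt x = 1 / 2 := by
      rcases Finset.mem_union.mp hxW with hA | hB
      · have hB' : x ∉ B := fun hc => hxT (Finset.mem_inter.mpr ⟨hA, hc⟩)
        rw [hwt]; dsimp only; rw [if_pos hA, if_neg hB']; norm_num
      · have hA' : x ∉ A := fun hc => hxT (Finset.mem_inter.mpr ⟨hc, hB⟩)
        rw [hwt]; dsimp only; rw [if_neg hA', if_pos hB]; norm_num
    have hNx : ∀ y, G.Adj x y → y ∈ T := by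
      intro y hxy
      by_cases hyW : y ∈ W
      · by_cases hyT : y ∈ T
        · exact hyT
        · have hyWT : y ∈ W \ T := Finset.mem_sdiff.mpr ⟨hyW, hyT⟩
          rw [hx, Finset.mem_singleton] at hyWT
          exact absurd hyWT.symm hxy.ne
      · have hyZ : y ∈ Z := by rw [hZ, Finset.mem_sdiff]; exact ⟨Finset.mem_univ y, hyW⟩
        exact absurd (hZT y x hyZ hxy.symm) hxT
    set wt' := Function.update wt x 0 with hwt'
    have hwt0' : ∀ v, 0 ≤ wt' v := by
      intro v
      by_cases hvx : v = x
      · subst hvx; rw [hwt', Function.update_self]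
      · rw [hwt', Function.update_of_ne hvx]; exact hwt0 v
    have hcov2 : ∀ u v, G.Adj u v → 1 ≤ wt' u + wt' v := by
      intro u v huv
      by_cases hux : u = x
      · subst hux
        have hvT := hNx v huv
        have h1 : wt' v = wt v := Function.update_of_ne huv.ne' 0 wt
        have h2 : wt v = 1 := hwtT v (Finset.mem_inter.mp hvT).1 (Finset.mem_inter.mp hvT).2
        rw [h1, h2, hwt', Function.update_self]; norm_num
      · by_cases hvx : v = x
        · subst hvx
          have huT := hNx u huv.symm
          have h1 : wt' u = wt u := Function.update_of_ne hux 0 wt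
          have h2 : wt u = 1 := hwtT u (Finset.mem_inter.mp huT).1 (Finset.mem_inter.mp huT).2
          rw [h1, h2, hwt', Function.update_self]; norm_num
        · rw [hwt', Function.update_of_ne hux, Function.update_of_ne hvx]
          exact hwtcov u v huv
    have hsum' : ∑ v, wt' v = ∑ v, wt v - wt x := by
      rw [hwt', Finset.sum_update_of_mem (Finset.mem_univ x),
        Finset.sdiff_singleton_eq_erase]
      have := Finset.add_sum_erase univ wt (Finset.mem_univ x)
      linarith
    have hlb' : (σ : ℝ) / 2 ≤ ∑ v, wt' v := by
      obtain ⟨f, hf, hval⟩ := hfm.1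
      rw [← hval]
      exact weak_duality G wt' hwt0' hcov2 f hf
    have hABr : ((A.card : ℝ) + B.card) = σ := by exact_mod_cast hABeq
    rw [hsum', hsumwt, hwtx, hABr] at hlb'
    linarith
  have hh3 : 3 ≤ h := by omega
  have h2t3 : 2 * t + 3 ≤ σ := by omega
  -- δ ≤ t
  have hncard_nb : ∀ v : V, (G.neighborSet v).ncard = (G.neighborFinset v).card := by
    intro v
    rw [SimpleGraph.neighborFinset_def, ← Set.ncard_eq_toFinset_card']
  have hδt : δ ≤ t := by
    have hZpos : 0 < Z.card := by omega
    obtain ⟨z, hz⟩ := Finset.card_pos.mp hZpos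
    have hNz : G.neighborFinset z ⊆ T := by
      intro y hy
      exact hZT z y hz ((SimpleGraph.mem_neighborFinset _ _ _).mp hy)
    calc δ ≤ (G.neighborSet z).ncard := hminall z
      _ = (G.neighborFinset z).card := hncard_nb z
      _ ≤ T.card := Finset.card_le_card hNz
  set T₀ := (σ - 3) / 2 with hT₀
  have hT₀σ : 2 * T₀ + 3 = σ := by omega
  have htT₀ : t ≤ T₀ := by omega
  -- clique counting
  have hncard : (G.cliqueSet ℓ).ncard = (G.cliqueFinset ℓ).card := by
    rw [← SimpleGraph.coe_cliqueFinset, Set.ncard_coe_finset]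
  set K𝒦 := G.cliqueFinset ℓ with h𝒦
  set C1 := K𝒦.filter (fun K => v₀ ∈ K) with hC1def
  set C2 := K𝒦.filter (fun K => v₀ ∉ K ∧ (K ∩ Z).Nonempty) with hC2def
  set C3 := K𝒦.filter (fun K => v₀ ∉ K ∧ K ∩ Z = ∅) with hC3def
  have hcover𝒦 : K𝒦 ⊆ (C1 ∪ C2) ∪ C3 := by
    intro K hK
    simp only [hC1def, hC2def, hC3def, Finset.mem_union, Finset.mem_filter]
    by_cases h1 : v₀ ∈ K
    · exact Or.inl (Or.inl ⟨hK, h1⟩)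
    · rcases (K ∩ Z).eq_empty_or_nonempty with he | he
      · exact Or.inr ⟨hK, h1, he⟩
      · exact Or.inl (Or.inr ⟨hK, h1, he⟩)
  have hcount : K𝒦.card ≤ C1.card + C2.card + C3.card := by
    calc K𝒦.card ≤ ((C1 ∪ C2) ∪ C3).card := Finset.card_le_card hcover𝒦
      _ ≤ (C1 ∪ C2).card + C3.card := Finset.card_union_le _ _
      _ ≤ C1.card + C2.card + C3.card := by
          have := Finset.card_union_le C1 C2; omega
  have hNv₀ : (G.neighborFinset v₀).card = δ := by rw [← hncard_nb]; exact hv₀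
  -- C1 bound
  have hC1 : C1.card ≤ δ.choose (ℓ - 1) := by
    have hmapsto : ∀ K ∈ C1, K.erase v₀ ∈ (G.neighborFinset v₀).powersetCard (ℓ - 1) := by
      intro K hK
      obtain ⟨hKcl, hv0K⟩ := Finset.mem_filter.mp hK
      have hcl := SimpleGraph.mem_cliqueFinset_iff.mp hKcl
      refine Finset.mem_powersetCard.mpr ⟨?_, ?_⟩
      · intro y hy
        obtain ⟨hne, hyK⟩ := Finset.mem_erase.mp hy
        exact (SimpleGraph.mem_neighborFinset _ _ _).mpr
          (hcl.1 (Finset.mem_coe.mpr hv0K) (Finset.mem_coe.mpr hyK) (Ne.symm hne))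
      · rw [Finset.card_erase_of_mem hv0K, hcl.2]
    calc C1.card ≤ ((G.neighborFinset v₀).powersetCard (ℓ - 1)).card := by
          refine Finset.card_le_card_of_injOn (fun K => K.erase v₀) hmapsto ?_
          intro K1 h1 K2 h2 he
          have hm1 : v₀ ∈ K1 := (Finset.mem_filter.mp h1).2
          have hm2 : v₀ ∈ K2 := (Finset.mem_filter.mp h2).2
          rw [← Finset.insert_erase hm1, ← Finset.insert_erase hm2]
          exact congrArg (insert v₀) he
      _ = δ.choose (ℓ - 1) := by rw [Finset.card_powersetCard, hNv₀]
  -- C2 bound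
  have hC2 : C2.card ≤ (Z.erase v₀).card * t.choose (ℓ - 1) := by
    have hmapsto : ∀ K ∈ C2, (K ∩ Z, K \ Z) ∈
        ((Z.erase v₀).image (fun z => ({z} : Finset V))) ×ˢ (T.powersetCard (ℓ - 1)) := by
      intro K hK
      obtain ⟨hKcl, hv0K, hne⟩ := Finset.mem_filter.mp hK
      have hcl := SimpleGraph.mem_cliqueFinset_iff.mp hKcl
      obtain ⟨z, hz⟩ := hne
      have hzK : z ∈ K := (Finset.mem_inter.mp hz).1
      have hzZ : z ∈ Z := (Finset.mem_inter.mp hz).2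
      have huniq : ∀ y ∈ K ∩ Z, y = z := by
        intro y hy
        by_contra hyz
        have hyK : y ∈ K := (Finset.mem_inter.mp hy).1
        have hyZ : y ∈ Z := (Finset.mem_inter.mp hy).2
        have hadj : G.Adj y z := hcl.1 (Finset.mem_coe.mpr hyK) (Finset.mem_coe.mpr hzK) hyz
        have hzT : z ∈ T := hZT y z hyZ hadj
        have : z ∉ W := (Finset.mem_sdiff.mp hzZ).2
        exact this (hTW hzT)
      have hKZ : K ∩ Z = {z} :=
        Finset.eq_singleton_iff_unique_mem.mpr ⟨hz, huniq⟩
      have hKsd : K \ Z = K.erase z := by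
        ext y
        simp only [Finset.mem_sdiff, Finset.mem_erase]
        constructor
        · rintro ⟨hyK, hyZ⟩
          refine ⟨fun hc => hyZ (hc ▸ hzZ), hyK⟩
        · rintro ⟨hyz, hyK⟩
          refine ⟨hyK, fun hc => hyz (huniq y (Finset.mem_inter.mpr ⟨hyK, hc⟩))⟩
      rw [Finset.mem_product]
      constructor
      · rw [hKZ]
        refine Finset.mem_image.mpr ⟨z, ?_, rfl⟩
        exact Finset.mem_erase.mpr ⟨fun hc => hv0K (hc ▸ hzK), hzZ⟩
      · refine Finset.mem_powersetCard.mpr ⟨?_, ?_⟩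
        · intro y hy
          rw [hKsd, Finset.mem_erase] at hy
          have hadj : G.Adj z y := hcl.1 (Finset.mem_coe.mpr hzK) (Finset.mem_coe.mpr hy.2)
            (Ne.symm hy.1)
          exact hZT z y hzZ hadj
        · rw [hKsd, Finset.card_erase_of_mem hzK, hcl.2]
    have hkey : ∀ K : Finset V, (K ∩ Z) ∪ (K \ Z) = K := by
      intro K; ext y
      simp only [Finset.mem_union, Finset.mem_inter, Finset.mem_sdiff]
      tauto
    calc C2.card ≤ (((Z.erase v₀).image (fun z => ({z} : Finset V)))
          ×ˢ (T.powersetCard (ℓ - 1))).card := by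
          refine Finset.card_le_card_of_injOn (fun K => (K ∩ Z, K \ Z)) hmapsto ?_
          intro K1 _ K2 _ he
          have h1 := congrArg Prod.fst he
          have h2 := congrArg Prod.snd he
          dsimp only at h1 h2
          rw [← hkey K1, ← hkey K2, h1, h2]
      _ = (Z.erase v₀).card * t.choose (ℓ - 1) := by
          rw [Finset.card_product, Finset.card_image_of_injective _ ?_,
            Finset.card_powersetCard]
          intro x y hxy
          exact Finset.singleton_injective hxy
  -- C3 bound
  have hC3 : C3.card ≤ ((W \ {v₀}).card).choose ℓ := by
    have hsub : C3 ⊆ (W \ {v₀}).powersetCard ℓ := by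
      intro K hK
      obtain ⟨hKcl, hv0K, hKZ⟩ := Finset.mem_filter.mp hK
      have hcl := SimpleGraph.mem_cliqueFinset_iff.mp hKcl
      refine Finset.mem_powersetCard.mpr ⟨?_, hcl.2⟩
      intro y hy
      have hyW : y ∈ W := by
        by_contra hyW
        have hyZ : y ∈ Z := by rw [hZ, Finset.mem_sdiff]; exact ⟨Finset.mem_univ y, hyW⟩
        have : y ∈ K ∩ Z := Finset.mem_inter.mpr ⟨hy, hyZ⟩
        rw [hKZ] at this
        exact absurd this (Finset.notMem_empty y)
      refine Finset.mem_sdiff.mpr ⟨hyW, ?_⟩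
      rw [Finset.mem_singleton]
      exact fun hc => hv0K (hc ▸ hy)
    calc C3.card ≤ ((W \ {v₀}).powersetCard ℓ).card := Finset.card_le_card hsub
      _ = _ := Finset.card_powersetCard _ _
  -- combine
  set a' := n - σ - 1 with ha'
  have hmain : K𝒦.card ≤ (σ - t).choose ℓ + t.choose (ℓ - 1) * (a' + t) + δ.choose (ℓ - 1) := by
    by_cases hv0W : v₀ ∈ W
    · -- v₀ ∈ W : Z.erase v₀ = Z, W \ {v₀} smaller
      have hv0Z : v₀ ∉ Z := by rw [hZ, Finset.mem_sdiff]; tauto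
      have hzc : (Z.erase v₀).card = a' + 1 + t := by
        rw [Finset.erase_eq_of_notMem hv0Z]
        omega
      have hwc : (W \ {v₀}).card = σ - t - 1 := by
        rw [Finset.sdiff_singleton_eq_erase, Finset.card_erase_of_mem hv0W, hWcard]
      have hpascal : (σ - t).choose ℓ = (σ - t - 1).choose (ℓ - 1) + (σ - t - 1).choose ℓ := by
        obtain ⟨m, hm⟩ : ∃ m, σ - t = m + 1 := ⟨σ - t - 1, by omega⟩
        obtain ⟨l1, hl1⟩ : ∃ l1, ℓ = l1 + 1 := ⟨ℓ - 1, by omega⟩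
        have hm1 : σ - t - 1 = m := by omega
        have hl2 : ℓ - 1 = l1 := by omega
        rw [hm1, hm, hl2, hl1]
        exact Nat.choose_succ_succ m l1
      have hmono : t.choose (ℓ - 1) ≤ (σ - t - 1).choose (ℓ - 1) :=
        Nat.choose_le_choose _ (by omega)
      have hcomm : (Z.erase v₀).card * t.choose (ℓ - 1)
          = t.choose (ℓ - 1) * (a' + t) + t.choose (ℓ - 1) := by
        rw [hzc]; ring
      rw [hwc] at hC3
      omega
    · -- v₀ ∈ Z
      have hv0Z : v₀ ∈ Z := by rw [hZ, Finset.mem_sdiff]; exact ⟨Finset.mem_univ _, hv0W⟩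
      have hzc : (Z.erase v₀).card = a' + t := by
        rw [Finset.card_erase_of_mem hv0Z]
        omega
      have hwc : (W \ {v₀}).card = σ - t := by
        rw [Finset.sdiff_singleton_eq_erase, Finset.erase_eq_of_notMem hv0W, hWcard]
      have hcomm : (Z.erase v₀).card * t.choose (ℓ - 1)
          = t.choose (ℓ - 1) * (a' + t) := by rw [hzc]; ring
      rw [hwc] at hC3
      omega
  have hconv := gfun_convex σ δ ℓ a' hℓ T₀ hT₀σ t hδt htT₀
  have hg1 : gclOdd n σ δ ℓ δ
      = (σ - δ).choose ℓ + δ.choose (ℓ - 1) * (a' + δ) + δ.choose (ℓ - 1) := by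
    have e : n + δ - σ - 1 = a' + δ := by omega
    rw [gclOdd, e]
  have hg2 : gclOdd n σ δ ℓ T₀
      = (σ - T₀).choose ℓ + T₀.choose (ℓ - 1) * (a' + T₀) + δ.choose (ℓ - 1) := by
    have e : n + T₀ - σ - 1 = a' + T₀ := by omega
    rw [gclOdd, e]
  rw [hncard, ← h𝒦, hg1, hg2] at *
  calc K𝒦.card ≤ _ := hmain
    _ ≤ _ := hconv
end
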